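/- arXiv:1811.01537 — 12 statements merged into one kernel-verified Lean document; each statement's English description precedes it below -/
import Mathlib

section
/- For any two permutations σ, τ of [n], the Kendall tau distance K(σ,τ) (number of pairs ordered oppositely) and the Spearman footrule distance F(σ,τ) = Σ_i |σ(i) - τ(i)| satisfy K(σ,τ) ≤ F(σ,τ) ≤ 2·K(σ,τ). -/
open Finset

/-- Kendall tau distance: number of unordered pairs ranked oppositely
(each discordant unordered pair counted once). -/
def kendall {n : ℕ} (σ τ : Equiv.Perm (Fin n)) : ℕ :=
  (Finset.univ.filter (fun q : Fin n × Fin n => σ q.1 < σ q.2 ∧ τ q.2 < τ q.1)).card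

/-- Spearman footrule distance. -/
def footrule {n : ℕ} (σ τ : Equiv.Perm (Fin n)) : ℤ :=
  ∑ i, |((σ i : ℕ) : ℤ) - ((τ i : ℕ) : ℤ)|


section DG


section
variable {n : ℕ} (π : Equiv.Perm (Fin n))

lemma kendall_one : kendall π 1 =
    ((univ : Finset (Fin n × Fin n)).filter
      (fun q => π q.1 < π q.2 ∧ q.2 < q.1)).card := by
  simp [kendall]
  rfl

lemma footrule_one : footrule π 1 = ∑ i, |((π i : ℕ) : ℤ) - ((i : ℕ) : ℤ)| := by
  simp [footrule]

def Aset (i : Fin n) : Finset (Fin n) := univ.filter (fun j => i < j ∧ π j < π i)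
def Bset (i : Fin n) : Finset (Fin n) := univ.filter (fun j => j < i ∧ π i < π j)

lemma sumB : kendall π 1 = ∑ i, (Bset π i).card := by
  rw [kendall_one, ← Finset.univ_product_univ, Finset.card_filter, Finset.sum_product]
  refine Finset.sum_congr rfl (fun i _ => ?_)
  rw [Bset, Finset.card_filter]
  exact Finset.sum_congr rfl (fun j _ => by
    by_cases h1 : π i < π j <;> by_cases h2 : j < i <;> simp [h1, h2])

lemma sumA : ∑ i, (Aset π i).card = kendall π 1 := by
  have h1 : ∑ i, (Aset π i).card =
      ((univ ×ˢ univ : Finset (Fin n × Fin n)).filter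
        (fun q => q.1 < q.2 ∧ π q.2 < π q.1)).card := by
    rw [Finset.card_filter, Finset.sum_product]
    refine Finset.sum_congr rfl (fun i _ => ?_)
    rw [Aset, Finset.card_filter]
  rw [h1, kendall_one, ← Finset.univ_product_univ]
  apply Finset.card_nbij' Prod.swap Prod.swap
  · intro q hq; simp only [Finset.mem_coe, Finset.mem_filter] at *; exact ⟨by simp, hq.2.2, hq.2.1⟩
  · intro q hq; simp only [Finset.mem_coe, Finset.mem_filter] at *; exact ⟨by simp, hq.2.2, hq.2.1⟩
  · intro q _; simp
  · intro q _; simp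

lemma ABid (i : Fin n) :
    (Aset π i).card + (i : ℕ) = (Bset π i).card + ((π i : ℕ)) := by
  have hc1 : (univ.filter (fun j => π j < π i)).card = ((π i : ℕ)) := by
    rw [← Fin.card_Iio (b := π i)]
    apply Finset.card_nbij (fun j => π j)
    · intro j hj; simp only [Finset.mem_coe, Finset.mem_filter, Finset.mem_Iio] at *; exact hj.2
    · intro x _ y _ h; exact π.injective h
    · intro v hv
      refine ⟨π.symm v, ?_, by simp⟩
      simp only [Finset.coe_filter, Set.mem_setOf_eq, Finset.mem_univ, true_and,
        Equiv.apply_symm_apply]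
      simpa [Finset.mem_Iio] using hv
  have hc2 : (univ.filter (fun j => j < i)).card = (i : ℕ) := by
    rw [← Fin.card_Iio (b := i)]
    congr 1
    ext j; simp [Finset.mem_Iio]
  have hs1 : (univ.filter (fun j => π j < π i ∧ j < i)).card
      + (univ.filter (fun j => π j < π i ∧ ¬ j < i)).card
      = (univ.filter (fun j => π j < π i)).card := by
    rw [← Finset.filter_filter, ← Finset.filter_filter]
    exact Finset.card_filter_add_card_filter_not _
  have hs2 : (univ.filter (fun j => j < i ∧ π j < π i)).card
      + (univ.filter (fun j => j < i ∧ ¬ π j < π i)).card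
      = (univ.filter (fun j => j < i)).card := by
    rw [← Finset.filter_filter, ← Finset.filter_filter]
    exact Finset.card_filter_add_card_filter_not _
  have e1 : (univ.filter (fun j => π j < π i ∧ ¬ j < i)) = Aset π i := by
    ext j
    simp only [Finset.mem_filter, Aset, Finset.mem_univ, true_and]
    constructor
    · rintro ⟨h1, h2⟩
      refine ⟨lt_of_le_of_ne (not_lt.mp h2) (fun h => by subst h; exact lt_irrefl _ h1), h1⟩
    · rintro ⟨h1, h2⟩; exact ⟨h2, not_lt.mpr h1.le⟩
  have e2 : (univ.filter (fun j => j < i ∧ ¬ π j < π i)) = Bset π i := by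
    ext j
    simp only [Finset.mem_filter, Bset, Finset.mem_univ, true_and]
    constructor
    · rintro ⟨h1, h2⟩
      refine ⟨h1, lt_of_le_of_ne (not_lt.mp h2) ?_⟩
      intro h; exact absurd (π.injective h) (fun hh => by subst hh; exact lt_irrefl _ h1)
    · rintro ⟨h1, h2⟩; exact ⟨h1, not_lt.mpr h2.le⟩
  have e3 : (univ.filter (fun j => π j < π i ∧ j < i))
      = (univ.filter (fun j => j < i ∧ π j < π i)) := by
    ext j; simp [and_comm]
  rw [e1] at hs1; rw [e2] at hs2; rw [e3] at hs1
  omega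

lemma footrule_le : footrule π 1 ≤ 2 * (kendall π 1 : ℤ) := by
  rw [footrule_one]
  have hle : ∀ i : Fin n, |((π i : ℕ) : ℤ) - ((i : ℕ) : ℤ)|
      ≤ ((Aset π i).card : ℤ) + ((Bset π i).card : ℤ) := by
    intro i
    have h := ABid π i
    have h' : ((Aset π i).card : ℤ) + ((i : ℕ) : ℤ)
        = ((Bset π i).card : ℤ) + ((π i : ℕ) : ℤ) := by exact_mod_cast congrArg (Nat.cast : ℕ → ℤ) h
    have : ((π i : ℕ) : ℤ) - ((i : ℕ) : ℤ) = ((Aset π i).card : ℤ) - ((Bset π i).card : ℤ) := by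
      linarith
    rw [this]
    calc |((Aset π i).card : ℤ) - ((Bset π i).card : ℤ)|
        ≤ |((Aset π i).card : ℤ)| + |((Bset π i).card : ℤ)| := abs_sub _ _
      _ = ((Aset π i).card : ℤ) + ((Bset π i).card : ℤ) := by
          rw [abs_of_nonneg (by positivity), abs_of_nonneg (by positivity)]
  calc (∑ i, |((π i : ℕ) : ℤ) - ((i : ℕ) : ℤ)|)
      ≤ ∑ i, (((Aset π i).card : ℤ) + ((Bset π i).card : ℤ)) :=
        Finset.sum_le_sum (fun i _ => hle i)
    _ = (∑ i, ((Aset π i).card :ℤ)) + ∑ i, ((Bset π i).card : ℤ) := Finset.sum_add_distrib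
    _ = 2 * (kendall π 1 : ℤ) := by
        push_cast [← Nat.cast_sum]
        rw_mod_cast [sumA π, ← sumB π]
        ring

end


lemma kendall_reduce {n : ℕ} (σ τ : Equiv.Perm (Fin n)) :
    kendall σ τ = kendall (σ * τ⁻¹) 1 := by
  unfold kendall
  apply Finset.card_nbij' (fun q => (τ q.1, τ q.2)) (fun q => (τ⁻¹ q.1, τ⁻¹ q.2))
  · intro q hq
    simp only [Finset.mem_coe, Finset.mem_filter, Finset.mem_univ, true_and] at *
    simpa [Equiv.Perm.mul_apply] using hq
  · intro q hq
    simp only [Finset.mem_coe, Finset.mem_filter, Finset.mem_univ, true_and, Equiv.Perm.mul_apply,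
      Equiv.Perm.one_apply, Equiv.Perm.inv_def, Equiv.apply_symm_apply] at hq ⊢
    exact (Finset.mem_filter.mp hq).2
  · intro q _; simp
  · intro q _; simp

lemma footrule_reduce {n : ℕ} (σ τ : Equiv.Perm (Fin n)) :
    footrule σ τ = footrule (σ * τ⁻¹) 1 := by
  unfold footrule
  apply Fintype.sum_equiv (τ : Equiv.Perm (Fin n))
  intro i
  simp [Equiv.Perm.mul_apply]


lemma lower_step {n : ℕ} (π : Equiv.Perm (Fin n)) (hπ : π ≠ 1) :
    ∃ π' : Equiv.Perm (Fin n), kendall π' 1 < kendall π 1 ∧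
      (kendall π 1 : ℤ) - (kendall π' 1 : ℤ) ≤ footrule π 1 - footrule π' 1 := by
  classical
  have hsupp : π.support.Nonempty := by
    rw [Finset.nonempty_iff_ne_empty, Ne, Equiv.Perm.support_eq_empty_iff]
    exact hπ
  set m : Fin n := π.support.min' hsupp with hmdef
  have hm : π m ≠ m := Equiv.Perm.mem_support.mp (Finset.min'_mem _ _)
  have hfix : ∀ i : Fin n, i < m → π i = i := by
    intro i hi
    by_contra h
    exact absurd (Finset.min'_le _ i (Equiv.Perm.mem_support.mpr h)) (not_le.mpr hi)
  have hge : ∀ w : Fin n, m ≤ w → m ≤ π w := by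
    intro w hw
    by_contra h
    push_neg at h
    have h1 : π (π w) = π w := hfix (π w) h
    have h2 : π w = w := π.injective h1
    rw [h2] at h
    exact absurd hw (not_le.mpr h)
  set a : Fin n := π m with hadef
  have hma : m < a := lt_of_le_of_ne (hge m le_rfl) (Ne.symm hm)
  set j : Fin n := π⁻¹ m with hjdef
  have hπj : π j = m := π.apply_symm_apply m
  have hjm : m < j := by
    rcases lt_trichotomy j m with h | h | h
    · exfalso
      have : π j = j := hfix j h
      rw [hπj] at this
      exact absurd this.symm (ne_of_lt h)
    · exfalso
      rw [h] at hπj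
      exact hm hπj
    · exact h
  have hmj : m ≠ j := ne_of_lt hjm
  set s : Equiv.Perm (Fin n) := Equiv.swap m j with hsdef
  set π' : Equiv.Perm (Fin n) := π * s with hπ'def
  have hπ'app : ∀ x, π' x = π (s x) := fun x => Equiv.Perm.mul_apply π s x
  have hsm : s m = j := Equiv.swap_apply_left m j
  have hsj : s j = m := Equiv.swap_apply_right m j
  have hso : ∀ x : Fin n, x ≠ m → x ≠ j → s x = x := fun x h1 h2 =>
    Equiv.swap_apply_of_ne_of_ne h1 h2
  have hgt : ∀ w : Fin n, m < w → w ≠ j → m < π w := by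
    intro w hw hwj
    refine lt_of_le_of_ne (hge w hw.le) ?_
    intro he
    exact hwj (by rw [hjdef, he, Equiv.Perm.inv_def, Equiv.symm_apply_apply])
  set I : Finset (Fin n × Fin n) :=
    univ.filter (fun q => π q.1 < π q.2 ∧ q.2 < q.1) with hIdef
  set C : Finset (Fin n × Fin n) :=
    univ.filter (fun q => π q.1 < π q.2 ∧ s q.2 < s q.1) with hCdef
  have hI : kendall π 1 = I.card := by simp [kendall, hIdef]; rfl
  have hC : kendall π' 1 = C.card := by
    rw [kendall]
    apply Finset.card_nbij' (fun q => (s q.1, s q.2)) (fun q => (s q.1, s q.2))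
    · intro q hq
      simp only [Finset.mem_coe, Finset.mem_filter, Finset.mem_univ, true_and, Equiv.Perm.one_apply,
        hπ'app] at hq
      simp only [hCdef, Finset.mem_coe, Finset.mem_filter, Finset.mem_univ, true_and]
      refine ⟨hq.1, ?_⟩
      simpa [Equiv.swap_apply_self, hsdef] using hq.2
    · intro q hq
      simp only [hCdef, Finset.mem_coe, Finset.mem_filter, Finset.mem_univ, true_and] at hq
      simp only [Finset.mem_coe, Finset.mem_filter, Finset.mem_univ, true_and, Equiv.Perm.one_apply, hπ'app]
      constructor
      · simpa [Equiv.swap_apply_self, hsdef] using hq.1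
      · simpa [Equiv.swap_apply_self, hsdef] using hq.2
    · intro q _
      simp [hsdef, Equiv.swap_apply_self]
    · intro q _
      simp [hsdef, Equiv.swap_apply_self]
  set X : ℕ := ((Finset.Ioo m j).filter (fun u => π u < a)).card with hXdef
  set Z : ℕ := ((Finset.Ioo m j).filter (fun u => ¬ π u < a)).card with hZdef
  have hXZ : X + Z = (Finset.Ioo m j).card :=
    Finset.card_filter_add_card_filter_not _
  have hE1 : I \ C = (((Finset.Ioo m j).filter (fun u => π u < a)).image (fun u => (u, m))
      ∪ (Finset.Ioo m j).image (fun v => ((j : Fin n), v))) ∪ {((j : Fin n), m)} := by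
    ext ⟨u, v⟩
    simp only [Finset.mem_sdiff, hIdef, hCdef, Finset.mem_filter, Finset.mem_univ, true_and,
      Finset.mem_union, Finset.mem_image, Finset.mem_singleton, Prod.mk.injEq, Finset.mem_Ioo,
      not_and]
    constructor
    · rintro ⟨⟨h1, h2⟩, h3⟩
      have h4 : s u < s v := by
        have hne : s u ≠ s v := fun he => (ne_of_lt h2) (s.injective he).symm
        exact lt_of_le_of_ne (not_lt.mp (h3 h1)) hne
      by_cases hum : u = m
      · exfalso
        subst hum
        have hvm : v ≠ m := ne_of_lt h2
        have hvj : v ≠ j := fun he => absurd (he ▸ h2) (not_lt.mpr hjm.le)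
        rw [hsm, hso v hvm hvj] at h4
        exact absurd (h4.trans h2) (not_lt.mpr hjm.le)
      by_cases huj : u = j
      · subst huj
        by_cases hvm : v = m
        · exact Or.inr ⟨rfl, hvm⟩
        · have hvj : v ≠ j := ne_of_lt h2
          rw [hsj, hso v hvm hvj] at h4
          exact Or.inl (Or.inr ⟨v, ⟨h4, h2⟩, rfl, rfl⟩)
      · rw [hso u hum huj] at h4
        by_cases hvm : v = m
        · subst hvm
          rw [hsm] at h4
          refine Or.inl (Or.inl ⟨u, ⟨⟨h2, h4⟩, ?_⟩, rfl, rfl⟩)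
          rwa [← hadef] at h1
        by_cases hvj : v = j
        · exfalso
          subst hvj
          rw [hsj] at h4
          exact absurd (h2.trans h4) (not_lt.mpr hjm.le)
        · exfalso
          rw [hso v hvm hvj] at h4
          exact absurd h4 (not_lt.mpr h2.le)
    · rintro ((⟨w, ⟨⟨hw1, hw2⟩, hw3⟩, rfl, rfl⟩ | ⟨w, ⟨hw1, hw2⟩, rfl, rfl⟩) | ⟨rfl, rfl⟩)
      · refine ⟨⟨by rwa [hadef] at hw3, hw1⟩, ?_⟩
        intro _
        rw [hsm, hso w (ne_of_gt hw1) (ne_of_lt hw2)]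
        exact not_lt.mpr hw2.le
      · refine ⟨⟨by rw [hπj]; exact hgt w hw1 (ne_of_lt hw2), hw2⟩, ?_⟩
        intro _
        rw [hsj, hso w (ne_of_gt hw1) (ne_of_lt hw2)]
        exact not_lt.mpr hw1.le
      · refine ⟨⟨by rw [hπj, ← hadef]; exact hma, hjm⟩, ?_⟩
        intro _
        rw [hsm, hsj]
        exact not_lt.mpr hjm.le
  have hE2 : C \ I = ((Finset.Ioo m j).filter (fun v => ¬ π v < a)).image
      (fun v => ((m : Fin n), v)) := by
    ext ⟨u, v⟩
    simp only [Finset.mem_sdiff, hIdef, hCdef, Finset.mem_filter, Finset.mem_univ, true_and,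
      Finset.mem_image, Prod.mk.injEq, Finset.mem_Ioo, not_and]
    constructor
    · rintro ⟨⟨h1, h3⟩, h2⟩
      have huv : u ≠ v := fun he => (ne_of_lt h1) (he ▸ rfl)
      have h4 : u < v := lt_of_le_of_ne (not_lt.mp (h2 h1)) huv
      by_cases huj : u = j
      · exfalso
        subst huj
        have hvm : v ≠ m := fun he => absurd (he ▸ h4) (not_lt.mpr hjm.le)
        have hvj : v ≠ j := ne_of_gt h4
        rw [hsj, hso v hvm hvj] at h3
        have : π v = v := hfix v h3
        rw [hπj] at h1
        rw [this] at h1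
        exact absurd (h1.trans h3) (lt_irrefl m)
      by_cases hum : u = m
      · subst hum
        have hvm : v ≠ m := ne_of_gt h4
        by_cases hvj : v = j
        · exfalso
          subst hvj
          rw [hπj] at h1
          exact absurd (lt_of_le_of_lt (hge m le_rfl) h1) (lt_irrefl m)
        · rw [hsm, hso v hvm hvj] at h3
          refine ⟨v, ⟨⟨h4, h3⟩, ?_⟩, rfl, rfl⟩
          rw [← hadef] at h1
          exact fun hc => absurd (hc.trans h1) (lt_irrefl (π v))
      · exfalso
        rw [hso u hum huj] at h3
        by_cases hvm : v = m
        · subst hvm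
          rw [hsm] at h3
          exact absurd ((h4.trans hjm).trans h3) (lt_irrefl u)
        by_cases hvj : v = j
        · subst hvj
          rw [hsj] at h3
          rw [hπj] at h1
          have h5 : π (π u) = π u := hfix (π u) h1
          have h6 : π u = u := π.injective h5
          rw [h6] at h1
          exact absurd (h1.trans h3) (lt_irrefl u)
        · rw [hso v hvm hvj] at h3
          exact absurd (h3.trans h4) (lt_irrefl v)
    · rintro ⟨w, ⟨⟨hw1, hw2⟩, hw3⟩, rfl, rfl⟩
      have hwa : a < π w := by
        rcases lt_trichotomy (π w) a with h | h | h
        · exact absurd h hw3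
        · exfalso
          rw [hadef] at h
          exact absurd (π.injective h) (ne_of_gt hw1)
        · exact h
      refine ⟨⟨by rwa [← hadef], ?_⟩, ?_⟩
      · rw [hsm, hso w (ne_of_gt hw1) (ne_of_lt hw2)]
        exact hw2
      · intro _
        exact not_lt.mpr hw1.le
  -- cardinalities
  have hinj1 : Function.Injective (fun u : Fin n => (u, m)) := fun x y h => by
    simpa using congrArg Prod.fst h
  have hinj2 : Function.Injective (fun v : Fin n => ((j : Fin n), v)) := fun x y h => by
    simpa using congrArg Prod.snd h
  have hinj3 : Function.Injective (fun v : Fin n => ((m : Fin n), v)) := fun x y h => by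
    simpa using congrArg Prod.snd h
  have hd1 : Disjoint (((Finset.Ioo m j).filter (fun u => π u < a)).image (fun u => (u, m)))
      ((Finset.Ioo m j).image (fun v => ((j : Fin n), v))) := by
    rw [Finset.disjoint_left]
    rintro p hp1 hp2
    simp only [Finset.mem_image, Finset.mem_filter, Finset.mem_Ioo] at hp1 hp2
    obtain ⟨w, hw, rfl⟩ := hp1
    obtain ⟨w', hw', he⟩ := hp2
    have hwm : w' = m := congrArg Prod.snd he
    rw [hwm] at hw'
    exact absurd hw'.1 (lt_irrefl m)
  have hd2 : Disjoint ((((Finset.Ioo m j).filter (fun u => π u < a)).image (fun u => (u, m)))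
      ∪ ((Finset.Ioo m j).image (fun v => ((j : Fin n), v)))) {((j : Fin n), m)} := by
    rw [Finset.disjoint_singleton_right]
    simp only [Finset.mem_union, Finset.mem_image, Finset.mem_filter, Finset.mem_Ioo,
      Prod.mk.injEq, not_or, not_exists, not_and]
    constructor
    · rintro w ⟨⟨hw1, hw2⟩, hw3⟩ rfl
      exact absurd hw2 (lt_irrefl j)
    · rintro w ⟨hw1, hw2⟩ _ rfl
      exact absurd hw1 (lt_irrefl m)
  have hcard1 : (I \ C).card = X + (Finset.Ioo m j).card + 1 := by
    rw [hE1, Finset.card_union_of_disjoint hd2, Finset.card_union_of_disjoint hd1,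
      Finset.card_image_of_injective _ hinj1, Finset.card_image_of_injective _ hinj2,
      Finset.card_singleton, hXdef]
  have hcard2 : (C \ I).card = Z := by
    rw [hE2, Finset.card_image_of_injective _ hinj3, hZdef]
  have hun : (I \ C).card + C.card = (C \ I).card + I.card := by
    rw [Finset.card_sdiff_add_card, Finset.card_sdiff_add_card, Finset.union_comm]
  have hkey : I.card = C.card + (2 * X + 1) := by omega
  -- bounds on X
  have hmav : (m : ℕ) < (a : ℕ) := hma
  have hmjv : (m : ℕ) < (j : ℕ) := hjm
  have hXj : X ≤ (j : ℕ) - (m : ℕ) - 1 := by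
    calc X ≤ (Finset.Ioo m j).card := Finset.card_filter_le _ _
    _ = (j : ℕ) - (m : ℕ) - 1 := Fin.card_Ioo m j
  have hXa : X ≤ (a : ℕ) - (m : ℕ) - 1 := by
    have hle : X ≤ (Finset.Ioo m a).card := by
      apply Finset.card_le_card_of_injOn (fun u => π u)
      · intro u hu
        simp only [Finset.mem_coe, Finset.mem_filter, Finset.mem_Ioo] at hu
        exact Finset.mem_Ioo.mpr ⟨hgt u hu.1.1 (ne_of_lt hu.1.2), hu.2⟩
      · intro x _ y _ h
        exact π.injective h
    rwa [Fin.card_Ioo] at hle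
  -- footrule difference
  have hπ'm : π' m = m := by rw [hπ'app, hsm, hπj]
  have hπ'j : π' j = a := by rw [hπ'app, hsj, ← hadef]
  have hfd : footrule π 1 - footrule π' 1
      = (|((a : ℕ) : ℤ) - ((m : ℕ) : ℤ)| + |((m : ℕ) : ℤ) - ((j : ℕ) : ℤ)|)
        - (0 + |((a : ℕ) : ℤ) - ((j : ℕ) : ℤ)|) := by
    have h1 : footrule π 1 = ∑ i, |((π i : ℕ) : ℤ) - ((i : ℕ) : ℤ)| := by
      simp [footrule]
    have h2 : footrule π' 1 = ∑ i, |((π' i : ℕ) : ℤ) - ((i : ℕ) : ℤ)| := by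
      simp [footrule]
    set f : Fin n → ℤ := fun i => |((π i : ℕ) : ℤ) - ((i : ℕ) : ℤ)| with hf
    set g : Fin n → ℤ := fun i => |((π' i : ℕ) : ℤ) - ((i : ℕ) : ℤ)| with hg
    have hmem : j ∈ univ.erase m := Finset.mem_erase.mpr ⟨Ne.symm hmj, Finset.mem_univ j⟩
    have hf1 : ∑ i, f i = f m + (f j + ∑ i ∈ (univ.erase m).erase j, f i) := by
      rw [Finset.add_sum_erase _ f hmem, Finset.add_sum_erase _ f (Finset.mem_univ m)]
    have hg1 : ∑ i, g i = g m + (g j + ∑ i ∈ (univ.erase m).erase j, g i) := by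
      rw [Finset.add_sum_erase _ g hmem, Finset.add_sum_erase _ g (Finset.mem_univ m)]
    have heq : ∑ i ∈ (univ.erase m).erase j, f i = ∑ i ∈ (univ.erase m).erase j, g i := by
      refine Finset.sum_congr rfl (fun i hi => ?_)
      obtain ⟨hij, hi2⟩ := Finset.mem_erase.mp hi
      obtain ⟨him, _⟩ := Finset.mem_erase.mp hi2
      simp [hf, hg, hπ'app, hso i him hij]
    have hfm : f m = |((a : ℕ) : ℤ) - ((m : ℕ) : ℤ)| := by
      rw [hf]
    have hfj : f j = |((m : ℕ) : ℤ) - ((j : ℕ) : ℤ)| := by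
      simp only [hf, hπj]
    have hgm : g m = 0 := by
      simp [hg, hπ'm]
    have hgj : g j = |((a : ℕ) : ℤ) - ((j : ℕ) : ℤ)| := by
      simp only [hg, hπ'j]
    rw [h1, h2, hf1, hg1, heq, hfm, hfj, hgm, hgj]
    ring
  refine ⟨π', ?_, ?_⟩
  · rw [hI, hC]
    omega
  · rw [hfd, hI, hC]
    have habs1 : |((a : ℕ) : ℤ) - ((m : ℕ) : ℤ)| = ((a : ℕ) : ℤ) - ((m : ℕ) : ℤ) :=
      abs_of_nonneg (by omega)
    have habs2 : |((m : ℕ) : ℤ) - ((j : ℕ) : ℤ)| = ((j : ℕ) : ℤ) - ((m : ℕ) : ℤ) := by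
      rw [abs_sub_comm]
      exact abs_of_nonneg (by omega)
    rcases abs_cases (((a : ℕ) : ℤ) - ((j : ℕ) : ℤ)) with ⟨he, hsign⟩ | ⟨he, hsign⟩ <;>
      rw [habs1, habs2, he] <;> omega


lemma kendall_le_footrule_aux {n : ℕ} (π : Equiv.Perm (Fin n)) :
    (kendall π 1 : ℤ) ≤ footrule π 1 := by
  suffices H : ∀ N : ℕ, ∀ π : Equiv.Perm (Fin n), kendall π 1 ≤ N →
      (kendall π 1 : ℤ) ≤ footrule π 1 from H _ π le_rfl
  intro N
  induction N with
  | zero =>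
    intro π hπ
    rw [Nat.le_zero.mp hπ]
    rw [footrule]
    push_cast
    exact Finset.sum_nonneg (fun i _ => abs_nonneg _)
  | succ N ih =>
    intro π hπ
    by_cases h1 : π = 1
    · subst h1
      have hk : kendall (1 : Equiv.Perm (Fin n)) 1 = 0 := by
        rw [kendall, Finset.filter_false_of_mem, Finset.card_empty]
        rintro q _ ⟨h, h'⟩
        exact absurd (h.trans h') (lt_irrefl _)
      rw [hk, footrule]
      push_cast
      exact Finset.sum_nonneg (fun i _ => abs_nonneg _)
    · obtain ⟨π', hlt, hle⟩ := lower_step π h1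
      have hih := ih π' (by omega)
      linarith
end DG

/-- Diaconis–Graham: K(σ,τ) ≤ F(σ,τ) ≤ 2·K(σ,τ). -/
theorem kendall_le_footrule_le_two_kendall {n : ℕ} (σ τ : Equiv.Perm (Fin n)) :
    (kendall σ τ : ℤ) ≤ footrule σ τ ∧ footrule σ τ ≤ 2 * (kendall σ τ : ℤ) := by
  constructor
  · rw [kendall_reduce, footrule_reduce]
    exact kendall_le_footrule_aux _
  · rw [kendall_reduce, footrule_reduce]
    exact footrule_le _
end

section
/- Let π be a top-list on [n] (an injective partial ranking assigning ranks 1..k to k distinct candidates and ∞ to the rest), let σ be a permutation of [n], and let τ be the linear extension of π that breaks ties (among candidates with π(i)=∞) according to σ. Then the generalized Kendall tau distance K(σ,π) = |{(i,j) : σ(i) > σ(j) and π(i) < π(j)}| equals the usual Kendall tau distance K(σ,τ). -/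
open Finset

/-- A top-`k`-list on `[n]`: ranks `1..k` are each assigned to exactly one
candidate, and every ranked candidate has a rank in `1..k`
(unranked candidates have rank `⊤ = ∞`). -/
def IsTopList (n k : ℕ) (π : Fin n → ℕ∞) : Prop :=
  (∀ i, π i ≠ ⊤ → 1 ≤ π i ∧ π i ≤ (k : ℕ∞)) ∧
  (∀ r : ℕ, 1 ≤ r → r ≤ k → ∃! i, π i = (r : ℕ∞))

/-- The 1-indexed rank of candidate `i` in the permutation `σ`. -/
def rank1 {n : ℕ} (σ : Equiv.Perm (Fin n)) (i : Fin n) : ℕ := (σ i : ℕ) + 1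

/-- `τ` is the linear extension of the top-list `π` breaking ties (among
unranked candidates) according to `σ`. -/
def IsLinExt {n : ℕ} (π : Fin n → ℕ∞) (σ τ : Equiv.Perm (Fin n)) : Prop :=
  (∀ i, π i ≠ ⊤ → ((rank1 τ i : ℕ) : ℕ∞) = π i) ∧
  (∀ i j, π i ≠ ⊤ → π j = ⊤ → τ i < τ j) ∧
  (∀ i j, π i = ⊤ → π j = ⊤ → (σ i < σ j ↔ τ i < τ j))

/-- Generalized Kendall tau distance between a permutation and a top-list. -/
def kendallGen {n : ℕ} (σ : Equiv.Perm (Fin n)) (π : Fin n → ℕ∞) : ℕ :=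
  (Finset.univ.filter (fun q : Fin n × Fin n => σ q.2 < σ q.1 ∧ π q.1 < π q.2)).card

/-- The generalized Kendall tau distance between `σ` and a top-list `π` equals
the usual Kendall tau distance between `σ` and the linear extension `τ` of `π`
breaking ties according to `σ`. -/
theorem kendallGen_eq_kendall_linExt {n k : ℕ} (π : Fin n → ℕ∞)
    (hπ : IsTopList n k π) (σ τ : Equiv.Perm (Fin n)) (hτ : IsLinExt π σ τ) :
    kendallGen σ π = kendall σ τ := by
  obtain ⟨h1, h2, h3⟩ := hτ
  have key : ∀ i j : Fin n, σ j < σ i → (π i < π j ↔ τ i < τ j) := by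
    intro i j hσ
    by_cases hi : π i = ⊤ <;> by_cases hj : π j = ⊤
    · rw [hi, hj, ← h3 i j hi hj]
      simp [hσ.asymm, lt_irrefl]
    · constructor
      · intro h; exact absurd h (by simp [hi])
      · intro h; exact absurd h (h2 j i hj hi).asymm
    · rw [hj]
      simp only [lt_top_iff_ne_top]
      exact ⟨fun _ => h2 i j hi hj, fun _ => hi⟩
    · rw [← h1 i hi, ← h1 j hj, Nat.cast_lt]
      unfold rank1
      omega
  unfold kendallGen kendall
  apply Finset.card_nbij' (fun q => q.swap) (fun q => q.swap)
  · intro q hq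
    simp only [Finset.mem_coe, Finset.mem_filter, Finset.mem_univ, true_and] at hq ⊢
    exact ⟨hq.1, (key q.1 q.2 hq.1).mp hq.2⟩
  · intro q hq
    simp only [Finset.mem_coe, Finset.mem_filter, Finset.mem_univ, true_and] at hq ⊢
    exact ⟨hq.1, (key q.2 q.1 hq.1).mpr hq.2⟩
  · intro q _; simp
  · intro q _; simp
end

section
/- For a permutation σ and a top-list π on [n], the generalized distances satisfy K(σ,π) ≤ F(σ,π) ≤ 2·K(σ,π). -/
open Finset

namespace DGaux

variable {n : ℕ} (ρ : Equiv.Perm (Fin n))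

def invSet : Finset (Fin n × Fin n) :=
  Finset.univ.filter (fun q : Fin n × Fin n => q.1 < q.2 ∧ ρ q.2 < ρ q.1)

def vcnt (i : Fin n) : ℕ := (Finset.univ.filter fun j => i < j ∧ ρ j < ρ i).card
def ucnt (i : Fin n) : ℕ := (Finset.univ.filter fun j => j < i ∧ ρ i < ρ j).card

lemma card_filter_lt (i : Fin n) : (Finset.univ.filter fun j : Fin n => j < i).card = (i : ℕ) := by
  have : (Finset.univ.filter fun j : Fin n => j < i) = Finset.Iio i := by
    ext j; simp
  rw [this, Fin.card_Iio]

lemma card_filter_rho_lt (i : Fin n) :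
    (Finset.univ.filter fun j : Fin n => ρ j < ρ i).card = ((ρ i : ℕ)) := by
  rw [← card_filter_lt (ρ i)]
  apply Finset.card_nbij' (i := fun j => ρ j) (j := fun j => ρ.symm j)
  · intro a ha; simp_all
  · intro a ha; simp_all
  · intro a _; simp
  · intro a _; simp

lemma key_identity (i : Fin n) : (i : ℕ) + vcnt ρ i = (ρ i : ℕ) + ucnt ρ i := by
  set c := (Finset.univ.filter fun j => j < i ∧ ρ j < ρ i).card with hc
  have h1 : (i : ℕ) = c + ucnt ρ i := by
    have hsplit : (Finset.univ.filter fun j : Fin n => j < i) =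
        (Finset.univ.filter fun j => j < i ∧ ρ j < ρ i) ∪
        (Finset.univ.filter fun j => j < i ∧ ρ i < ρ j) := by
      rw [← Finset.filter_or]
      apply Finset.filter_congr
      intro j _
      constructor
      · intro h
        rcases lt_or_gt_of_ne (fun he : ρ j = ρ i => (ne_of_lt h) (ρ.injective he)) with h' | h'
        · exact Or.inl ⟨h, h'⟩
        · exact Or.inr ⟨h, h'⟩
      · rintro (⟨h, _⟩ | ⟨h, _⟩) <;> exact h
    have hdisj : Disjoint (Finset.univ.filter fun j : Fin n => j < i ∧ ρ j < ρ i)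
        (Finset.univ.filter fun j => j < i ∧ ρ i < ρ j) := by
      rw [Finset.disjoint_filter]
      rintro j _ ⟨_, h2⟩ ⟨_, h4⟩
      exact absurd h4 (not_lt_of_gt h2)
    rw [← card_filter_lt i, hsplit, Finset.card_union_of_disjoint hdisj]; rfl
  have h2 : ((ρ i : ℕ)) = c + vcnt ρ i := by
    have hsplit : (Finset.univ.filter fun j : Fin n => ρ j < ρ i) =
        (Finset.univ.filter fun j => j < i ∧ ρ j < ρ i) ∪
        (Finset.univ.filter fun j => i < j ∧ ρ j < ρ i) := by
      rw [← Finset.filter_or]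
      apply Finset.filter_congr
      intro j _
      constructor
      · intro h
        rcases lt_trichotomy j i with h' | h' | h'
        · exact Or.inl ⟨h', h⟩
        · exact absurd (h' ▸ h) (lt_irrefl _)
        · exact Or.inr ⟨h', h⟩
      · rintro (⟨_, h⟩ | ⟨_, h⟩) <;> exact h
    have hdisj : Disjoint (Finset.univ.filter fun j : Fin n => j < i ∧ ρ j < ρ i)
        (Finset.univ.filter fun j => i < j ∧ ρ j < ρ i) := by
      rw [Finset.disjoint_filter]
      rintro j _ ⟨h1, _⟩ ⟨h3, _⟩
      exact absurd h3 (not_lt_of_gt h1)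
    rw [← card_filter_rho_lt ρ i, hsplit, Finset.card_union_of_disjoint hdisj]; rfl
  omega

lemma card_invSet_eq_sum_v : (invSet ρ).card = ∑ i, vcnt ρ i := by
  rw [Finset.card_eq_sum_card_fiberwise (f := Prod.fst) (t := Finset.univ)
    (fun x _ => Finset.mem_univ _)]
  refine Finset.sum_congr rfl fun p _ => ?_
  apply Finset.card_nbij' (i := fun q => q.2) (j := fun j => (p, j))
  · rintro ⟨a, b⟩ hab
    simp only [invSet, Finset.mem_coe, Finset.mem_filter, Finset.mem_univ, true_and] at hab ⊢
    obtain ⟨⟨h1, h2⟩, h3⟩ := hab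
    subst h3
    exact ⟨h1, h2⟩
  · intro j hj
    simp only [invSet, Finset.mem_coe, Finset.mem_filter, Finset.mem_univ, true_and] at hj ⊢
    exact ⟨⟨hj.1, hj.2⟩, trivial⟩
  · rintro ⟨a, b⟩ hab
    simp only [invSet, Finset.mem_coe, Finset.mem_filter] at hab
    obtain ⟨_, h3⟩ := hab
    simp [h3]
  · intro j _; rfl

lemma card_invSet_eq_sum_u : (invSet ρ).card = ∑ i, ucnt ρ i := by
  rw [Finset.card_eq_sum_card_fiberwise (f := Prod.snd) (t := Finset.univ)
    (fun x _ => Finset.mem_univ _)]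
  refine Finset.sum_congr rfl fun p _ => ?_
  apply Finset.card_nbij' (i := fun q => q.1) (j := fun j => (j, p))
  · rintro ⟨a, b⟩ hab
    simp only [invSet, Finset.mem_coe, Finset.mem_filter, Finset.mem_univ, true_and] at hab ⊢
    obtain ⟨⟨h1, h2⟩, h3⟩ := hab
    subst h3
    exact ⟨h1, h2⟩
  · intro j hj
    simp only [invSet, Finset.mem_coe, Finset.mem_filter, Finset.mem_univ, true_and] at hj ⊢
    exact ⟨⟨hj.1, hj.2⟩, trivial⟩
  · rintro ⟨a, b⟩ hab
    simp only [invSet, Finset.mem_coe, Finset.mem_filter] at hab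
    obtain ⟨_, h3⟩ := hab
    simp [h3]
  · intro j _; rfl

/-- Upper half: footrule sum ≤ 2 * inversions. -/
lemma sum_le_two_inv :
    ∑ i, (((ρ i : ℕ) - (i : ℕ)) + ((i : ℕ) - (ρ i : ℕ))) ≤ 2 * (invSet ρ).card := by
  have : 2 * (invSet ρ).card = ∑ i, (vcnt ρ i + ucnt ρ i) := by
    rw [Finset.sum_add_distrib, ← card_invSet_eq_sum_v, ← card_invSet_eq_sum_u]; ring
  rw [this]
  apply Finset.sum_le_sum
  intro i _
  have := key_identity ρ i
  omega

/-- Lower half: inversions ≤ footrule sum, via an explicit injection. -/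
lemma inv_le_sum :
    (invSet ρ).card ≤ ∑ i, (((ρ i : ℕ) - (i : ℕ)) + ((i : ℕ) - (ρ i : ℕ))) := by
  classical
  set TL : Finset (Σ _ : Fin n, ℕ) :=
    Finset.univ.sigma (fun p : Fin n => Finset.Ico (p : ℕ) ((ρ p : ℕ))) with hTL
  set TR : Finset (Σ _ : Fin n, ℕ) :=
    Finset.univ.sigma (fun q : Fin n => Finset.Ico ((ρ q : ℕ)) (q : ℕ)) with hTR
  have hcard : (TL.disjSum TR).card = ∑ i, (((ρ i : ℕ) - (i : ℕ)) + ((i : ℕ) - (ρ i : ℕ))) := by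
    rw [Finset.card_disjSum, hTL, hTR, Finset.card_sigma, Finset.card_sigma,
      ← Finset.sum_add_distrib]
    refine Finset.sum_congr rfl fun i _ => ?_
    rw [Nat.card_Ico, Nat.card_Ico]
  rw [← hcard]
  apply Finset.card_le_card_of_injOn
    (f := fun x : Fin n × Fin n =>
      if (x.2 : ℕ) ≤ (ρ x.1 : ℕ) then (Sum.inl ⟨x.1, (x.2 : ℕ) - 1⟩ : (Σ _ : Fin n, ℕ) ⊕ (Σ _ : Fin n, ℕ))
      else Sum.inr ⟨x.2, (ρ x.1 : ℕ) - 1⟩)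
  · rintro ⟨p, q⟩ hx
    simp only [invSet, Finset.mem_coe, Finset.mem_filter, Finset.mem_univ, true_and] at hx ⊢
    obtain ⟨h1, h2⟩ := hx
    have h1' : (p : ℕ) < (q : ℕ) := h1
    have h2' : ((ρ q : ℕ)) < ((ρ p : ℕ)) := h2
    by_cases hc : (q : ℕ) ≤ (ρ p : ℕ)
    · rw [if_pos hc]
      rw [Finset.inl_mem_disjSum, hTL, Finset.mem_sigma]
      refine ⟨Finset.mem_univ _, ?_⟩
      rw [Finset.mem_Ico]
      dsimp only
      omega
    · rw [if_neg hc]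
      rw [Finset.inr_mem_disjSum, hTR, Finset.mem_sigma]
      refine ⟨Finset.mem_univ _, ?_⟩
      rw [Finset.mem_Ico]
      dsimp only
      omega
  · rintro ⟨p, q⟩ hx ⟨p', q'⟩ hy heq
    simp only [invSet, Finset.coe_filter, Set.mem_setOf_eq, Finset.mem_univ, true_and] at hx hy
    obtain ⟨h1, h2⟩ := hx
    obtain ⟨h1', h2'⟩ := hy
    have hq1 : (p : ℕ) < (q : ℕ) := h1
    have hq2 : ((ρ q : ℕ)) < ((ρ p : ℕ)) := h2
    have hq1' : (p' : ℕ) < (q' : ℕ)  := h1'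
    have hq2' : ((ρ q' : ℕ)) < ((ρ p' : ℕ)) := h2'
    by_cases hc : (q : ℕ) ≤ (ρ p : ℕ) <;> by_cases hc' : (q' : ℕ) ≤ (ρ p' : ℕ) <;>
      simp only [hc, hc', if_pos, if_neg, if_true, if_false, reduceIte] at heq
    · obtain ⟨hp, hq⟩ := Sum.inl.inj heq |> Sigma.mk.inj_iff.mp
      have hq' : (q : ℕ) - 1 = (q' : ℕ) - 1 := by
        simpa using hq
      have : (q : ℕ) = (q' : ℕ) := by omega
      exact Prod.ext hp (Fin.ext this)
    · exact absurd heq (by simp)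
    · exact absurd heq (by simp)
    · obtain ⟨hq, hp⟩ := Sum.inr.inj heq |> Sigma.mk.inj_iff.mp
      have hp' : ((ρ p : ℕ)) - 1 = ((ρ p' : ℕ)) - 1 := by simpa using hp
      have hρ : ((ρ p : ℕ)) = ((ρ p' : ℕ)) := by omega
      have : p = p' := ρ.injective (Fin.ext hρ)
      exact Prod.ext this hq

end DGaux

lemma DGaux.abs_sub_cast (a b : ℕ) :
    |(a : ℤ) - (b : ℤ)| = ((a - b : ℕ) : ℤ) + ((b - a : ℕ) : ℤ) := by
  rcases le_total a b with h | h
  · rw [abs_of_nonpos (by simp [h] : (a : ℤ) - (b : ℤ) ≤ 0)]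
    omega
  · rw [abs_of_nonneg (by simp [h] : (0:ℤ) ≤ (a : ℤ) - (b : ℤ))]
    omega

/-- For a permutation `σ` and a top-list `π`, the generalized distances satisfy
`K(σ,π) ≤ F(σ,π) ≤ 2·K(σ,π)`, where `F(σ,π) = F(σ,τ)` with `τ` the linear
extension of `π` breaking ties by `σ`. -/
theorem kendallGen_le_footrule_le_two_kendallGen {n k : ℕ} (π : Fin n → ℕ∞)
    (hπ : IsTopList n k π) (σ τ : Equiv.Perm (Fin n)) (hτ : IsLinExt π σ τ) :
    (kendallGen σ π : ℤ) ≤ footrule σ τ ∧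
      footrule σ τ ≤ 2 * (kendallGen σ π : ℤ) := by
  obtain ⟨h1, h2, h3⟩ := hτ
  set ρ : Equiv.Perm (Fin n) := τ.symm.trans σ with hρ
  have hρapp : ∀ i, ρ (τ i) = σ i := fun i => by simp [hρ]
  -- Kendall distance to the top-list equals the inversion count of ρ
  have hK : kendallGen σ π = (DGaux.invSet ρ).card := by
    unfold kendallGen
    have hfilter : (Finset.univ.filter (fun q : Fin n × Fin n => σ q.2 < σ q.1 ∧ π q.1 < π q.2)) =
        (Finset.univ.filter (fun q : Fin n × Fin n => σ q.2 < σ q.1 ∧ τ q.1 < τ q.2)) := by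
      apply Finset.filter_congr
      rintro ⟨i, j⟩ _
      dsimp only
      apply and_congr_right
      intro hσ
      by_cases hi : π i = ⊤ <;> by_cases hj : π j = ⊤
      · constructor
        · rintro hlt
          rw [hi, hj] at hlt
          exact absurd hlt (lt_irrefl _)
        · intro ht
          exact absurd ((h3 i j hi hj).mpr ht) (not_lt.mpr (le_of_lt hσ))
      · constructor
        · intro hlt
          rw [hi] at hlt
          exact absurd hlt not_top_lt
        · intro ht
          exact absurd ht (not_lt.mpr (le_of_lt (h2 j i hj hi)))
      · constructor
        · intro _
          exact h2 i j hi hj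
        · intro _
          rw [hj]
          exact lt_top_iff_ne_top.mpr hi
      · rw [← h1 i hi, ← h1 j hj, Nat.cast_lt]
        unfold rank1
        rw [Fin.lt_def]
        omega
    rw [hfilter]
    apply Finset.card_nbij' (i := fun q : Fin n × Fin n => (τ q.1, τ q.2))
      (j := fun q : Fin n × Fin n => (τ.symm q.1, τ.symm q.2))
    · rintro ⟨a, b⟩ hab
      simp only [Finset.mem_coe, Finset.mem_filter, Finset.mem_univ, true_and, DGaux.invSet] at hab ⊢
      exact ⟨hab.2, by rw [hρapp, hρapp]; exact hab.1⟩
    · rintro ⟨a, b⟩ hab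
      simp only [Finset.mem_coe, Finset.mem_filter, Finset.mem_univ, true_and, DGaux.invSet] at hab ⊢
      constructor
      · exact hab.2
      · simpa using hab.1
    · rintro ⟨a, b⟩ _; simp
    · rintro ⟨a, b⟩ _; simp
  -- Footrule equals the displacement sum of ρ
  have hF : footrule σ τ =
      ((∑ i, (((ρ i : ℕ) - (i : ℕ)) + ((i : ℕ) - (ρ i : ℕ))) : ℕ) : ℤ) := by
    have e1 : footrule σ τ = ∑ i, |(((ρ (τ i)) : ℕ) : ℤ) - (((τ i) : ℕ) : ℤ)| := by
      unfold footrule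
      exact Finset.sum_congr rfl fun i _ => by rw [hρapp]
    rw [e1, Equiv.sum_comp τ (fun x => |(((ρ x) : ℕ) : ℤ) - ((x : ℕ) : ℤ)|), Nat.cast_sum]
    refine Finset.sum_congr rfl fun i _ => ?_
    rw [Nat.cast_add]
    exact DGaux.abs_sub_cast _ _
  constructor
  · rw [hK, hF]
    exact_mod_cast DGaux.inv_le_sum ρ
  · rw [hK, hF]
    have := DGaux.sum_le_two_inv ρ
    exact_mod_cast this
end

section
/- Let p be a probability distribution over top-lists on [n]. For a permutation σ, define K(σ,p) = Σ_π p(π)·K(σ,π) and F(σ,p) = Σ_π p(π)·F(σ,π). If σ minimizes F(·,p) over all permutations and σ* is any permutation, then K(σ,p) ≤ 2·K(σ*,p). (Correctness of the generalized footrule 2-approximation.) -/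
open Finset

section Aux
variable {n : ℕ}

/-- Kendall tau between two permutations, as pair count. -/
def kendallPerm (s τ : Equiv.Perm (Fin n)) : ℕ :=
  (Finset.univ.filter (fun q : Fin n × Fin n => s q.2 < s q.1 ∧ τ q.1 < τ q.2)).card

lemma count_lt (s : Equiv.Perm (Fin n)) (a : Fin n) :
    (univ.filter (fun j => s j < a)).card = (a : ℕ) := by
  rw [← Fin.card_Iio (b := a)]
  exact Finset.card_bij (fun j _ => s j) (by simp) (by simp)
    (fun b hb => ⟨s.symm b, by simp_all⟩)

lemma count_Ico (s : Equiv.Perm (Fin n)) (a b : Fin n) :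
    (univ.filter (fun j => a ≤ s j ∧ s j < b)).card = (b : ℕ) - (a : ℕ) := by
  have : (univ.filter (fun j => a ≤ s j ∧ s j < b)).card = (Finset.Ico a b).card :=
    Finset.card_bij (fun j _ => s j) (by simp [Finset.mem_Ico]) (by simp)
      (fun c hc => ⟨s.symm c, by simp_all [Finset.mem_Ico]⟩)
  rw [this, Fin.card_Ico]

lemma prod_card {P : Fin n × Fin n → Prop} [DecidablePred P] :
    (univ.filter P).card = ∑ i, (univ.filter (fun j => P (i, j))).card := by
  simp only [Finset.card_filter]
  rw [Fintype.sum_prod_type]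

lemma sub_le_A (s τ : Equiv.Perm (Fin n)) (i : Fin n) :
    (τ i : ℕ) - (s i : ℕ) ≤
      (univ.filter (fun j => τ j < τ i ∧ s i < s j)).card := by
  have htot := Finset.card_filter_add_card_filter_not
    (s := univ.filter (fun j => τ j < τ i)) (p := fun j => s i < s j)
  rw [count_lt τ (τ i), Finset.filter_filter, Finset.filter_filter] at htot
  have hsub : (univ.filter (fun j => τ j < τ i ∧ ¬ s i < s j)) ⊆
      (univ.filter (fun j => s j < s i)) := by
    intro j hj
    simp only [Finset.mem_filter, Finset.mem_univ, true_and] at hj ⊢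
    rcases hj with ⟨h1, h2⟩
    rcases lt_or_eq_of_le (not_lt.mp h2) with h | h
    · exact h
    · exact absurd (s.injective h) (fun e => absurd (e ▸ h1) (lt_irrefl _))
  have := Finset.card_le_card hsub
  rw [count_lt s (s i)] at this
  omega

end Aux

section Aux2
variable {n : ℕ}

lemma sumA_s5 (s τ : Equiv.Perm (Fin n)) :
    ∑ i, (univ.filter (fun j => τ j < τ i ∧ s i < s j)).card = kendallPerm s τ := by
  have h := prod_card (P := fun q : Fin n × Fin n => τ q.2 < τ q.1 ∧ s q.1 < s q.2)
  simp only at h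
  rw [← h, kendallPerm]
  exact Finset.card_bij (fun q _ => q.swap) (by simp [Prod.ext_iff] <;> tauto)
      (by simp [Prod.ext_iff] <;> tauto)
      (fun q hq => ⟨q.swap, by simp_all [Prod.ext_iff] <;> tauto⟩)

lemma sumB_s5 (s τ : Equiv.Perm (Fin n)) :
    ∑ i, (univ.filter (fun j => s j < s i ∧ τ i < τ j)).card = kendallPerm s τ := by
  have h := prod_card (P := fun q : Fin n × Fin n => s q.2 < s q.1 ∧ τ q.1 < τ q.2)
  simp only at h
  rw [← h, kendallPerm]

lemma footrule_le_s5 (s τ : Equiv.Perm (Fin n)) :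
    footrule s τ ≤ 2 * (kendallPerm s τ : ℤ) := by
  have key : ∀ i, |((s i : ℕ) : ℤ) - ((τ i : ℕ) : ℤ)| ≤
      ((univ.filter (fun j => τ j < τ i ∧ s i < s j)).card : ℤ) +
      ((univ.filter (fun j => s j < s i ∧ τ i < τ j)).card : ℤ) := by
    intro i
    have h1 := sub_le_A s τ i
    have h2 := sub_le_A τ s i
    rcases le_total ((s i : ℕ) : ℤ) ((τ i : ℕ) : ℤ) with h | h
    · rw [abs_of_nonpos (by omega)]; omega
    · rw [abs_of_nonneg (by omega)]; omega
  calc footrule s τ ≤ ∑ i, (((univ.filter (fun j => τ j < τ i ∧ s i < s j)).card : ℤ) +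
        ((univ.filter (fun j => s j < s i ∧ τ i < τ j)).card : ℤ)) :=
        Finset.sum_le_sum (fun i _ => key i)
    _ = 2 * (kendallPerm s τ : ℤ) := by
        rw [Finset.sum_add_distrib]
        rw [← Nat.cast_sum, ← Nat.cast_sum, sumA_s5, sumB_s5]
        ring

lemma le_footrule (s τ : Equiv.Perm (Fin n)) :
    (kendallPerm s τ : ℤ) ≤ footrule s τ := by
  classical
  have hsplit := Finset.card_filter_add_card_filter_not
    (s := univ.filter (fun q : Fin n × Fin n => s q.2 < s q.1 ∧ τ q.1 < τ q.2))
    (p := fun q : Fin n × Fin n => τ q.1 ≤ s q.2)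
  rw [Finset.filter_filter, Finset.filter_filter] at hsplit
  -- S1 bound
  have hS1 : (univ.filter (fun q : Fin n × Fin n =>
        (s q.2 < s q.1 ∧ τ q.1 < τ q.2) ∧ τ q.1 ≤ s q.2)).card ≤
      ∑ x, ((s x : ℕ) - (τ x : ℕ)) := by
    have hsub : (univ.filter (fun q : Fin n × Fin n =>
        (s q.2 < s q.1 ∧ τ q.1 < τ q.2) ∧ τ q.1 ≤ s q.2)) ⊆
        (univ.filter (fun q : Fin n × Fin n => τ q.1 ≤ s q.2 ∧ s q.2 < s q.1)) := by
      intro q hq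
      simp only [Finset.mem_filter, Finset.mem_univ, true_and] at hq ⊢
      tauto
    refine (Finset.card_le_card hsub).trans ?_
    have h := prod_card (P := fun q : Fin n × Fin n => τ q.1 ≤ s q.2 ∧ s q.2 < s q.1)
    simp only at h
    rw [h]
    exact le_of_eq (Finset.sum_congr rfl (fun x _ => count_Ico s (τ x) (s x)))
  -- S2 bound
  have hS2 : (univ.filter (fun q : Fin n × Fin n =>
        (s q.2 < s q.1 ∧ τ q.1 < τ q.2) ∧ ¬ τ q.1 ≤ s q.2)).card ≤
      ∑ x, ((τ x : ℕ) - (s x : ℕ)) := by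
    have hinj : (univ.filter (fun q : Fin n × Fin n =>
        (s q.2 < s q.1 ∧ τ q.1 < τ q.2) ∧ ¬ τ q.1 ≤ s q.2)).card ≤
        (univ.filter (fun r : Fin n × Fin n => s r.1 < r.2 ∧ r.2 < τ r.1)).card := by
      apply Finset.card_le_card_of_injOn (fun q => (q.2, τ q.1))
      · intro q hq
        simp only [Finset.mem_coe, Finset.mem_filter, Finset.mem_univ, true_and, not_le] at hq ⊢
        exact ⟨hq.2, hq.1.2⟩
      · intro q hq q' hq' h
        simp only [Prod.ext_iff] at h
        exact Prod.ext (τ.injective h.2) h.1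
    refine hinj.trans ?_
    have h := prod_card (P := fun r : Fin n × Fin n => s r.1 < r.2 ∧ r.2 < τ r.1)
    simp only at h
    rw [h]
    refine Finset.sum_le_sum (fun y _ => ?_)
    have : (univ.filter (fun k : Fin n => s y < k ∧ k < τ y)) = Finset.Ioo (s y) (τ y) := by
      ext k; simp [Finset.mem_Ioo]
    rw [this, Fin.card_Ioo]
    omega
  -- combine
  have hK : kendallPerm s τ ≤ ∑ x, (((s x : ℕ) - (τ x : ℕ)) + ((τ x : ℕ) - (s x : ℕ))) := by
    rw [Finset.sum_add_distrib, kendallPerm, ← hsplit]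
    exact Nat.add_le_add hS1 hS2
  calc (kendallPerm s τ : ℤ)
      ≤ ((∑ x, (((s x : ℕ) - (τ x : ℕ)) + ((τ x : ℕ) - (s x : ℕ))) : ℕ) : ℤ) := by
        exact_mod_cast hK
    _ = footrule s τ := by
        rw [footrule, Nat.cast_sum]
        refine Finset.sum_congr rfl (fun i _ => ?_)
        rcases le_total ((s i : ℕ) : ℤ) ((τ i : ℕ) : ℤ) with h | h
        · rw [abs_of_nonpos (by omega)]; push_cast; omega
        · rw [abs_of_nonneg (by omega)]; push_cast; omega

end Aux2

lemma kendallGen_eq_kendallPerm {n : ℕ} {π : Fin n → ℕ∞} {s τ : Equiv.Perm (Fin n)}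
    (h : IsLinExt π s τ) : kendallGen s π = kendallPerm s τ := by
  obtain ⟨hrank, hmix, htie⟩ := h
  unfold kendallGen kendallPerm
  congr 1
  ext q
  simp only [Finset.mem_filter, Finset.mem_univ, true_and, and_congr_right_iff]
  intro hs
  obtain ⟨i, j⟩ := q
  simp only at hs ⊢
  by_cases hi : π i = ⊤ <;> by_cases hj : π j = ⊤
  · constructor
    · intro hlt; rw [hi, hj] at hlt; exact absurd hlt (lt_irrefl _)
    · intro hlt
      exact absurd ((htie i j hi hj).mpr hlt) (by exact fun h' => absurd hs (asymm h'))
  · constructor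
    · intro hlt; rw [hi] at hlt; exact absurd hlt not_top_lt
    · intro hlt; exact absurd (hmix j i hj hi) (asymm hlt)
  · constructor
    · intro _; exact hmix i j hi hj
    · intro _; rw [hj]; exact Ne.lt_top hi
  · rw [← hrank i hi, ← hrank j hj, Nat.cast_lt, rank1, rank1]
    constructor
    · intro hlt; exact Fin.lt_def.mpr (by omega)
    · intro hlt; have := Fin.lt_def.mp hlt; omega

/-- Correctness of the generalized footrule algorithm: if `σ` minimizes the
average generalized footrule distance `F(·,p)` to a distribution `p` over
top-lists (given by weights `w` on a finite family `π` of top-lists, with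
`T s v` the linear extension of `π v` breaking ties by `s`), then the average
generalized Kendall tau cost of `σ` is at most twice that of any `σ*`. -/
theorem footrule_algorithm_two_approx {n m : ℕ}
    (w : Fin m → ℝ) (hw : ∀ v, 0 ≤ w v) (hw1 : ∑ v, w v = 1)
    (π : Fin m → Fin n → ℕ∞) (hπ : ∀ v, ∃ k ≤ n, IsTopList n k (π v))
    (T : Equiv.Perm (Fin n) → Fin m → Equiv.Perm (Fin n))
    (hT : ∀ s v, IsLinExt (π v) s (T s v))
    (σ : Equiv.Perm (Fin n))
    (hmin : ∀ s : Equiv.Perm (Fin n),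
      ∑ v, w v * ((footrule σ (T σ v) : ℤ) : ℝ) ≤
        ∑ v, w v * ((footrule s (T s v) : ℤ) : ℝ))
    (σstar : Equiv.Perm (Fin n)) :
    ∑ v, w v * (kendallGen σ (π v) : ℝ) ≤
      2 * ∑ v, w v * (kendallGen σstar (π v) : ℝ) := by
  have step1 : ∑ v, w v * (kendallGen σ (π v) : ℝ) ≤
      ∑ v, w v * ((footrule σ (T σ v) : ℤ) : ℝ) := by
    refine Finset.sum_le_sum (fun v _ => ?_)
    refine mul_le_mul_of_nonneg_left ?_ (hw v)
    rw [kendallGen_eq_kendallPerm (hT σ v)]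
    exact_mod_cast le_footrule σ (T σ v)
  have step3 : ∑ v, w v * ((footrule σstar (T σstar v) : ℤ) : ℝ) ≤
      ∑ v, w v * (2 * (kendallGen σstar (π v) : ℝ)) := by
    refine Finset.sum_le_sum (fun v _ => ?_)
    refine mul_le_mul_of_nonneg_left ?_ (hw v)
    rw [kendallGen_eq_kendallPerm (hT σstar v)]
    exact_mod_cast footrule_le_s5 σstar (T σstar v)
  calc ∑ v, w v * (kendallGen σ (π v) : ℝ)
      ≤ ∑ v, w v * ((footrule σ (T σ v) : ℤ) : ℝ) := step1
    _ ≤ ∑ v, w v * ((footrule σstar (T σstar v) : ℤ) : ℝ) := hmin σstar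
    _ ≤ ∑ v, w v * (2 * (kendallGen σstar (π v) : ℝ)) := step3
    _ = 2 * ∑ v, w v * (kendallGen σstar (π v) : ℝ) := by
        rw [Finset.mul_sum]; exact Finset.sum_congr rfl (fun v _ => by ring)
end

section
/- Let p be a distribution over top-lists on [n]. Suppose a random permutation σ is generated so that for each unordered pair {i,j} with p(π(i) ≠ π(j)) > 0, P(σ(i) > σ(j)) = p(π(i) > π(j)) / p(π(i) ≠ π(j)), and pairs never compared (p(π(i)≠π(j))=0) contribute zero cost. Then E[K(σ,p)] ≤ 2·K(σ*,p) for every permutation σ*. -/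
open Finset

/-- `p(π(i) < π(j))`: total weight of input top-lists ranking `i` strictly
before `j`. -/
def probLT {n m : ℕ} (w : Fin m → ℝ) (π : Fin m → Fin n → ℕ∞) (i j : Fin n) : ℝ :=
  ∑ v, if π v i < π v j then w v else 0

lemma probLT_nonneg {n m : ℕ} (w : Fin m → ℝ) (hw : ∀ v, 0 ≤ w v)
    (π : Fin m → Fin n → ℕ∞) (i j : Fin n) : 0 ≤ probLT w π i j := by
  apply Finset.sum_nonneg
  intro v _
  split
  · exact hw v
  · rfl

lemma kendall_expand {n m : ℕ} (w : Fin m → ℝ) (π : Fin m → Fin n → ℕ∞)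
    (s : Equiv.Perm (Fin n)) :
    ∑ v, w v * (kendallGen s (π v) : ℝ) =
      ∑ p : Fin n × Fin n, (if s p.2 < s p.1 then probLT w π p.1 p.2 else 0) := by
  have hk : ∀ v : Fin m, (kendallGen s (π v) : ℝ) =
      ∑ p : Fin n × Fin n,
        (if s p.2 < s p.1 ∧ π v p.1 < π v p.2 then (1:ℝ) else 0) := by
    intro v
    rw [kendallGen, Finset.card_filter]
    push_cast
    rfl
  simp only [hk, Finset.mul_sum]
  rw [Finset.sum_comm]
  refine Finset.sum_congr rfl (fun p _ => ?_)
  by_cases h : s p.2 < s p.1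
  · simp only [h, true_and, if_true, probLT]
    refine Finset.sum_congr rfl (fun v _ => ?_)
    by_cases h2 : π v p.1 < π v p.2 <;> simp [h2]
  · simp [h]

/-- RandomSort / RepeatChoice analysis: if a random permutation `σ` (with
distribution `q` over all permutations) satisfies, for every pair `{i,j}` that
is compared with positive probability,
`P(σ(i) > σ(j)) = p(π(i) > π(j)) / p(π(i) ≠ π(j))`,
then its expected cost is at most twice the cost of any permutation `σ*`. -/
theorem randomSort_two_approx {n m : ℕ}
    (w : Fin m → ℝ) (hw : ∀ v, 0 ≤ w v) (hw1 : ∑ v, w v = 1)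
    (π : Fin m → Fin n → ℕ∞) (hπ : ∀ v, ∃ k ≤ n, IsTopList n k (π v))
    (q : Equiv.Perm (Fin n) → ℝ) (hq : ∀ s, 0 ≤ q s) (hq1 : ∑ s, q s = 1)
    (hprob : ∀ i j : Fin n, i ≠ j →
      0 < probLT w π i j + probLT w π j i →
      (∑ s, if s j < s i then q s else 0) =
        probLT w π j i / (probLT w π i j + probLT w π j i))
    (σstar : Equiv.Perm (Fin n)) :
    ∑ s, q s * (∑ v, w v * (kendallGen s (π v) : ℝ)) ≤
      2 * ∑ v, w v * (kendallGen σstar (π v) : ℝ) := by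
  classical
  set A : Fin n → Fin n → ℝ := probLT w π with hA
  have hA0 : ∀ i j, 0 ≤ A i j := fun i j => probLT_nonneg w hw π i j
  have hAdiag : ∀ i, A i i = 0 := by
    intro i
    simp [hA, probLT]
  set Q : Fin n → Fin n → ℝ := fun i j => ∑ s, if s j < s i then q s else 0 with hQ
  -- LHS as a sum over ordered pairs
  have hLHS : ∑ s, q s * (∑ v, w v * (kendallGen s (π v) : ℝ)) =
      ∑ p : Fin n × Fin n, Q p.1 p.2 * A p.1 p.2 := by
    simp only [kendall_expand w π, Finset.mul_sum]
    rw [Finset.sum_comm]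
    refine Finset.sum_congr rfl (fun p _ => ?_)
    rw [hQ, Finset.sum_mul]
    refine Finset.sum_congr rfl (fun s _ => ?_)
    by_cases h : s p.2 < s p.1 <;> simp [h, mul_comm, hA]
  have hRHS : ∑ v, w v * (kendallGen σstar (π v) : ℝ) =
      ∑ p : Fin n × Fin n, (if σstar p.2 < σstar p.1 then A p.1 p.2 else 0) :=
    kendall_expand w π σstar
  rw [hLHS, hRHS]
  set F : Fin n × Fin n → ℝ := fun p => Q p.1 p.2 * A p.1 p.2 with hF
  set G : Fin n × Fin n → ℝ :=
    fun p => if σstar p.2 < σstar p.1 then A p.1 p.2 else 0 with hG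
  have hswapF : ∑ p : Fin n × Fin n, F p.swap = ∑ p : Fin n × Fin n, F p :=
    Fintype.sum_equiv (Equiv.prodComm (Fin n) (Fin n)) _ _ (fun p => rfl)
  have hswapG : ∑ p : Fin n × Fin n, G p.swap = ∑ p : Fin n × Fin n, G p :=
    Fintype.sum_equiv (Equiv.prodComm (Fin n) (Fin n)) _ _ (fun p => rfl)
  -- key pointwise bound
  have key : ∀ p : Fin n × Fin n, F p + F p.swap ≤ 2 * (G p + G p.swap) := by
    rintro ⟨i, j⟩
    simp only [hF, hG, Prod.swap_prod_mk]
    by_cases hij : i = j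
    · subst hij
      simp [hAdiag i]
    · set a := A i j with ha
      set b := A j i with hb
      have ha0 : 0 ≤ a := hA0 i j
      have hb0 : 0 ≤ b := hA0 j i
      rcases eq_or_lt_of_le (add_nonneg ha0 hb0) with hab | hab
      · have haz : a = 0 := by linarith [ha0, hb0]
        have hbz : b = 0 := by linarith [ha0, hb0]
        simp only [haz, hbz, mul_zero, zero_add, mul_ite, mul_zero]
        split <;> split <;> norm_num
      · have hQij : Q i j = b / (a + b) := hprob i j hij hab
        have hQji : Q j i = a / (a + b) := by
          have h' := hprob j i (Ne.symm hij) (by linarith)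
          show (∑ s, if s i < s j then q s else 0) = a / (a + b)
          rw [h', ← ha, ← hb, add_comm]
        rw [hQij, hQji]
        have hne : σstar i ≠ σstar j := fun h => hij (σstar.injective h)
        rcases lt_or_gt_of_ne hne with h | h
        · -- σ* ranks i before j: G (i,j) = 0, G(j,i) = b
          rw [if_neg (not_lt.mpr h.le), if_pos h]
          have : b / (a + b) * a + a / (a + b) * b ≤ 2 * b := by
            rw [div_mul_eq_mul_div, div_mul_eq_mul_div, ← add_div,
              div_le_iff₀ hab]
            nlinarith
          linarith
        · rw [if_pos h, if_neg (not_lt.mpr h.le)]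
          have : b / (a + b) * a + a / (a + b) * b ≤ 2 * a := by
            rw [div_mul_eq_mul_div, div_mul_eq_mul_div, ← add_div,
              div_le_iff₀ hab]
            nlinarith
          linarith
  have h2 : 2 * ∑ p : Fin n × Fin n, F p ≤ 4 * ∑ p : Fin n × Fin n, G p := by
    calc 2 * ∑ p : Fin n × Fin n, F p
        = (∑ p : Fin n × Fin n, F p) + ∑ p : Fin n × Fin n, F p.swap := by
          rw [hswapF]; ring
      _ = ∑ p : Fin n × Fin n, (F p + F p.swap) := Finset.sum_add_distrib.symm
      _ ≤ ∑ p : Fin n × Fin n, 2 * (G p + G p.swap) :=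
          Finset.sum_le_sum (fun p _ => key p)
      _ = 4 * ∑ p : Fin n × Fin n, G p := by
          rw [← Finset.mul_sum, Finset.sum_add_distrib, hswapG]; ring
  linarith [h2]
end

section
/- Let r : Fin n → ℝ be arbitrary real values (average ranks). Among all permutations σ of [n], a permutation that sorts candidates by nondecreasing r minimizes Σ_i |σ(i) - r(i)|. -/
open Finset

private lemma exch {a b x y : ℝ} (hab : a ≤ b) (hxy : x ≤ y) :
    |a - x| + |b - y| ≤ |b - x| + |a - y| := by
  rcases abs_cases (a - x) with ⟨e1, f1⟩ | ⟨e1, f1⟩ <;>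
    rcases abs_cases (b - y) with ⟨e2, f2⟩ | ⟨e2, f2⟩ <;>
    rcases abs_cases (b - x) with ⟨e3, f3⟩ | ⟨e3, f3⟩ <;>
    rcases abs_cases (a - y) with ⟨e4, f4⟩ | ⟨e4, f4⟩ <;>
    rw [e1, e2, e3, e4] <;> linarith

private lemma key : ∀ (n : ℕ) (s : Fin n → ℝ), Monotone s →
    ∀ π : Equiv.Perm (Fin n),
    ∑ k : Fin n, |((k : ℕ) : ℝ) + 1 - s k| ≤
      ∑ k : Fin n, |((π k : ℕ) : ℝ) + 1 - s k| := by
  intro n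
  induction n with
  | zero => intro s _ π; simp
  | succ n ih =>
    intro s hs π
    set j := π.symm 0 with hjdef
    set π' := π * Equiv.swap 0 j with hπ'def
    have hπ'0 : π' 0 = 0 := by
      simp [hπ'def, Equiv.swap_apply_left, hjdef]
    -- Step A : cost π' ≤ cost π
    have stepA : ∑ k : Fin (n+1), |((π' k : ℕ) : ℝ) + 1 - s k| ≤
        ∑ k : Fin (n+1), |((π k : ℕ) : ℝ) + 1 - s k| := by
      by_cases hj : j = 0
      · simp [hπ'def, hj]
      · have hsub : ({0, j} : Finset (Fin (n+1))) ⊆ univ := subset_univ _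
        rw [← Finset.sum_sdiff hsub, ← Finset.sum_sdiff hsub]
        have heq : ∑ k ∈ univ \ {0, j}, |((π' k : ℕ) : ℝ) + 1 - s k| =
            ∑ k ∈ univ \ {0, j}, |((π k : ℕ) : ℝ) + 1 - s k| := by
          apply Finset.sum_congr rfl
          intro k hk
          simp only [Finset.mem_sdiff, Finset.mem_insert, Finset.mem_singleton] at hk
          have : Equiv.swap 0 j k = k :=
            Equiv.swap_apply_of_ne_of_ne (fun h => hk.2 (Or.inl h))
              (fun h => hk.2 (Or.inr h))
          simp [hπ'def, this]
        rw [heq]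
        apply (add_le_add_iff_left _).mpr
        rw [Finset.sum_pair (Ne.symm hj), Finset.sum_pair (Ne.symm hj)]
        have hπ'j : π' j = π 0 := by simp [hπ'def, Equiv.swap_apply_right]
        have hπj : π j = 0 := by simp [hjdef]
        rw [hπ'0, hπ'j, hπj]
        have h1 : (1 : ℝ) ≤ ((π 0 : ℕ) : ℝ) + 1 :=
          le_add_of_nonneg_left (Nat.cast_nonneg _)
        have h2 : s 0 ≤ s j := hs (Fin.zero_le j)
        simp only [Fin.val_zero, Nat.cast_zero, zero_add]
        linarith [exch h1 h2]
    refine le_trans ?_ stepA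
    -- Step B : identity cost ≤ cost π'
    obtain ⟨pτ, hpτ⟩ : ∃ pτ, Equiv.Perm.decomposeFin.symm pτ = π' :=
      ⟨Equiv.Perm.decomposeFin π', Equiv.symm_apply_apply _ _⟩
    obtain ⟨p, τ⟩ := pτ
    have hp : p = 0 := by
      have := Equiv.Perm.decomposeFin_symm_apply_zero p τ
      rw [hpτ] at this
      rw [← this, hπ'0]
    subst hp
    have hτ : ∀ i : Fin n, π' i.succ = (τ i).succ := by
      intro i
      have := Equiv.Perm.decomposeFin_symm_apply_succ τ (0 : Fin (n+1)) i
      rw [hpτ] at this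
      simpa using this
    rw [Fin.sum_univ_succ, Fin.sum_univ_succ]
    simp only [hπ'0, hτ, Fin.val_zero, Nat.cast_zero, Fin.val_succ, Nat.cast_add,
      Nat.cast_one]
    apply (add_le_add_iff_left _).mpr
    have hmono : Monotone (fun i : Fin n => s i.succ - 1) := by
      intro a b hab
      simp only [sub_le_sub_iff_right]
      exact hs (Fin.succ_le_succ_iff.mpr hab)
    have hih := ih (fun i : Fin n => s i.succ - 1) hmono τ
    calc ∑ i : Fin n, |((i : ℕ) : ℝ) + 1 + 1 - s i.succ|
        = ∑ i : Fin n, |((i : ℕ) : ℝ) + 1 - (s i.succ - 1)| := by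
          apply Finset.sum_congr rfl; intro i _; ring_nf
      _ ≤ ∑ i : Fin n, |((τ i : ℕ) : ℝ) + 1 - (s i.succ - 1)| := hih
      _ = ∑ i : Fin n, |((τ i : ℕ) : ℝ) + 1 + 1 - s i.succ| := by
          apply Finset.sum_congr rfl; intro i _; ring_nf

/-- Sorting by nondecreasing `r` minimizes `Σ_i |σ(i) - r(i)|` over all
permutations `σ` (with ranks `σ(i) ∈ {1,…,n}`). -/
theorem sort_minimizes_abs_deviation {n : ℕ} (r : Fin n → ℝ)
    (σ : Equiv.Perm (Fin n))
    (hσ : ∀ i j : Fin n, r i < r j → σ i < σ j)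
    (σstar : Equiv.Perm (Fin n)) :
    ∑ i, |(((σ i : ℕ) : ℝ) + 1) - r i| ≤
      ∑ i, |(((σstar i : ℕ) : ℝ) + 1) - r i| := by
  have hs : Monotone (fun k => r (σ.symm k)) := by
    intro k l hkl
    by_contra h
    push_neg at h
    have := hσ _ _ h
    simp only [Equiv.apply_symm_apply] at this
    exact absurd (lt_of_le_of_lt hkl this) (lt_irrefl _)
  have hkey := key n (fun k => r (σ.symm k)) hs (σ.symm.trans σstar)
  calc ∑ i, |(((σ i : ℕ) : ℝ) + 1) - r i|
      = ∑ k : Fin n, |((k : ℕ) : ℝ) + 1 - r (σ.symm k)| :=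
        Fintype.sum_equiv σ _ _ (fun i => by simp)
    _ ≤ ∑ k : Fin n, |(((σ.symm.trans σstar) k : ℕ) : ℝ) + 1 - r (σ.symm k)| := hkey
    _ = ∑ i, |(((σstar i : ℕ) : ℝ) + 1) - r i| :=
        (Fintype.sum_equiv σ _ _ (fun i => by simp)).symm
end

section
/- Let r : Fin n → ℝ and let σ sort candidates by nondecreasing r. Then for every permutation σ*, Σ_i max(σ(i) - r(i), 0) ≤ Σ_i max(σ*(i) - r(i), 0). -/
open Finset

/-- layer function -/
noncomputable def gfun (m : ℕ) (r : ℝ) : ℝ := min (max (((m : ℝ) + 1) - r) 0) 1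

lemma gfun_anti (m : ℕ) {x y : ℝ} (h : x ≤ y) : gfun m y ≤ gfun m x := by
  unfold gfun
  gcongr

lemma step_eq (x : ℝ) : max (x + 1) 0 = max x 0 + min (max (x + 1) 0) 1 := by
  rcases le_total x (-1) with h | h
  · rw [max_eq_right (by linarith : x + 1 ≤ 0), max_eq_right (by linarith : x ≤ (0:ℝ)),
      min_eq_left (by norm_num : (0:ℝ) ≤ 1)]
    ring
  · rcases le_total x 0 with h2 | h2
    · rw [max_eq_left (by linarith : (0:ℝ) ≤ x + 1), max_eq_right h2,
        min_eq_left (by linarith : x + 1 ≤ 1)]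
      ring
    · rw [max_eq_left (by linarith : (0:ℝ) ≤ x + 1), max_eq_left h2,
        min_eq_right (by linarith : (1:ℝ) ≤ x + 1)]

lemma step2 (m : ℕ) (r : ℝ) :
    max (((m : ℝ) + 1) - r) 0 = max ((m : ℝ) - r) 0 + gfun m r := by
  have h := step_eq ((m : ℝ) - r)
  rw [sub_add_eq_add_sub] at h
  unfold gfun
  exact h

lemma telescope (k : ℕ) (r : ℝ) :
    max (((k : ℝ) + 1) - r) 0 = max (-r) 0 + ∑ m ∈ range (k + 1), gfun m r := by
  induction k with
  | zero =>
    rw [Finset.sum_range_one, step2 0 r]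
    norm_num
  | succ k ih =>
    rw [Finset.sum_range_succ, ← add_assoc, ← ih, step2 (k + 1) r]
    push_cast
    ring_nf

lemma cross_sum_le {α : Type*} [DecidableEq α] (S T : Finset α) (f : α → ℝ)
    (hcard : S.card = T.card) (h : ∀ s ∈ S, ∀ t ∈ T, f s ≤ f t) :
    ∑ a ∈ S, f a ≤ ∑ b ∈ T, f b := by
  rcases S.eq_empty_or_nonempty with rfl | hS
  · have : T = ∅ := Finset.card_eq_zero.mp (by simpa using hcard.symm)
    simp [this]
  · have hT : T.Nonempty := Finset.card_pos.mp (hcard ▸ Finset.card_pos.mpr hS)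
    obtain ⟨t0, ht0, hmin⟩ := T.exists_min_image f hT
    calc ∑ a ∈ S, f a ≤ S.card • f t0 :=
          Finset.sum_le_card_nsmul S f (f t0) (fun x hx => h x hx t0 ht0)
      _ = T.card • f t0 := by rw [hcard]
      _ ≤ ∑ b ∈ T, f b := Finset.card_nsmul_le_sum T f (f t0) (fun x hx => hmin x hx)

lemma sets_sum_le {α : Type*} [DecidableEq α] (A B : Finset α) (f : α → ℝ)
    (hcard : A.card = B.card)
    (hf : ∀ a ∈ A \ B, ∀ b ∈ B \ A, f a ≤ f b) :
    ∑ a ∈ A, f a ≤ ∑ b ∈ B, f b := by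
  rw [← Finset.sum_inter_add_sum_sdiff A B f, ← Finset.sum_inter_add_sum_sdiff B A f,
    Finset.inter_comm B A]
  have hc : (A \ B).card = (B \ A).card := by
    have h1 := Finset.card_inter_add_card_sdiff A B
    have h2 := Finset.card_inter_add_card_sdiff B A
    rw [Finset.inter_comm B A] at h2
    omega
  have := cross_sum_le (A \ B) (B \ A) f hc hf
  linarith

/-- Sorting by nondecreasing `r` minimizes the sum of positive parts
`Σ_i (σ(i) - r(i))⁺` over all permutations `σ` (ranks `σ(i) ∈ {1,…,n}`). -/
theorem sort_minimizes_positive_deviation {n : ℕ} (r : Fin n → ℝ)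
    (σ : Equiv.Perm (Fin n))
    (hσ : ∀ i j : Fin n, r i < r j → σ i < σ j)
    (σstar : Equiv.Perm (Fin n)) :
    ∑ i, max ((((σ i : ℕ) : ℝ) + 1) - r i) 0 ≤
      ∑ i, max ((((σstar i : ℕ) : ℝ) + 1) - r i) 0 := by
  -- decompose each positive part via telescoping
  have decomp : ∀ (τ : Equiv.Perm (Fin n)),
      ∑ i, max ((((τ i : ℕ) : ℝ) + 1) - r i) 0 =
      ∑ i, max (-(r i)) 0 +
        ∑ m ∈ range n, ∑ i ∈ univ.filter (fun i => m ≤ (τ i : ℕ)), gfun m (r i) := by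
    intro τ
    have key : ∀ i : Fin n,
        max ((((τ i : ℕ) : ℝ) + 1) - r i) 0 =
        max (-(r i)) 0 + ∑ m ∈ range n, if m ≤ (τ i : ℕ) then gfun m (r i) else 0 := by
      intro i
      rw [telescope (τ i : ℕ) (r i)]
      congr 1
      have hset : (range n).filter (fun m => m ≤ (τ i : ℕ)) = range ((τ i : ℕ) + 1) := by
        ext m
        simp only [Finset.mem_range, Finset.mem_filter]
        have := (τ i).isLt
        omega
      rw [← hset, Finset.sum_filter]
    rw [Finset.sum_congr rfl (fun i _ => key i), Finset.sum_add_distrib]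
    congr 1
    rw [Finset.sum_comm]
    refine Finset.sum_congr rfl (fun m _ => ?_)
    rw [Finset.sum_filter]
  rw [decomp σ, decomp σstar]
  refine add_le_add le_rfl ?_
  refine Finset.sum_le_sum (fun m hm => ?_)
  set A := univ.filter (fun i => m ≤ (σ i : ℕ)) with hA
  set B := univ.filter (fun i => m ≤ (σstar i : ℕ)) with hB
  apply sets_sum_le
  · -- equal cardinalities via the bijection σstar.symm ∘ σ
    apply Finset.card_bij' (fun i _ => σstar.symm (σ i)) (fun j _ => σ.symm (σstar j))
    · intro i hi
      simp only [hA, hB, Finset.mem_filter, Finset.mem_univ, true_and] at hi ⊢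
      simpa using hi
    · intro j hj
      simp only [hA, hB, Finset.mem_filter, Finset.mem_univ, true_and] at hj ⊢
      simpa using hj
    · intro i _; simp
    · intro j _; simp
  · intro a ha b hb
    simp only [hA, hB, Finset.mem_sdiff, Finset.mem_filter, Finset.mem_univ, true_and,
      not_le] at ha hb
    have hrb : r b ≤ r a := by
      by_contra hcon
      push_neg at hcon
      have := hσ a b hcon
      have hab : (σ b : ℕ) < (σ a : ℕ) := by omega
      exact absurd (Fin.lt_iff_val_lt_val.mpr hab) (not_lt.mpr (le_of_lt this))
    exact gfun_anti m hrb
end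

section
/- Let p be a distribution over top-lists on [n] where every candidate has positive score, and suppose max_i Score(i) ≤ α · min_i Score(i). Let σ be the permutation sorting candidates by nondecreasing average rank Rank(i), and σ* any permutation. Then F(σ,p) ≤ (1+2α)·F(σ*,p), and consequently K(σ,p) ≤ (2+4α)·K(σ*,p). (Generalized Borda is a (4α+2)-approximation.) -/
open Finset

/-- Score of candidate `i`: the probability that `i` is ranked. -/
def score {n m : ℕ} (w : Fin m → ℝ) (π : Fin m → Fin n → ℕ∞) (i : Fin n) : ℝ :=
  ∑ v, if π v i ≠ ⊤ then w v else 0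

/-- Average rank of candidate `i`: expected rank conditioned on being ranked. -/
noncomputable def avgRank {n m : ℕ} (w : Fin m → ℝ) (π : Fin m → Fin n → ℕ∞)
    (i : Fin n) : ℝ :=
  (∑ v, if π v i ≠ ⊤ then w v * ((WithTop.untopD 0 (π v i) : ℕ) : ℝ) else 0) / score w π i

/-- Average generalized Kendall tau cost of `σ` against the voting profile. -/
def kendallCost {n m : ℕ} (w : Fin m → ℝ) (π : Fin m → Fin n → ℕ∞)
    (σ : Equiv.Perm (Fin n)) : ℝ :=
  ∑ v, w v * (kendallGen σ (π v) : ℝ)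

/-- Average generalized footrule cost:
`F(σ,p) = 2 Σ_i Σ_k p(π(i)=k)·(σ(i)−k)⁺`. -/
def footruleCost {n m : ℕ} (w : Fin m → ℝ) (π : Fin m → Fin n → ℕ∞)
    (σ : Equiv.Perm (Fin n)) : ℝ :=
  2 * ∑ i, ∑ v, (if π v i ≠ ⊤ then
    w v * max ((((σ i : ℕ) : ℝ) + 1) - ((WithTop.untopD 0 (π v i) : ℕ) : ℝ)) 0 else 0)

namespace BordaAux

/-! ### Positive part helpers -/

lemma pos_tri (a b c : ℝ) : max (a - b) 0 ≤ max (a - c) 0 + max (c - b) 0 := by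
  apply max_le
  · calc a - b = (a - c) + (c - b) := by ring
      _ ≤ max (a - c) 0 + max (c - b) 0 := add_le_add (le_max_left _ _) (le_max_left _ _)
  · positivity

lemma pos_sum {ι : Type*} (s : Finset ι) (f : ι → ℝ) :
    max (∑ i ∈ s, f i) 0 ≤ ∑ i ∈ s, max (f i) 0 := by
  apply max_le
  · exact Finset.sum_le_sum fun i _ => le_max_left _ _
  · exact Finset.sum_nonneg fun i _ => le_max_right _ _

/-- `x ↦ x⁺` increments: `(x+1)⁺ - x⁺ = clamp`. -/
lemma pos_succ_sub (x : ℝ) : max (x + 1) 0 - max x 0 = min (max (x + 1) 0) 1 := by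
  rcases le_total (x + 1) 0 with h | h
  · rw [max_eq_right h, max_eq_right (by linarith)]
    simp
  · rcases le_total x 0 with h' | h'
    · rw [max_eq_left h, max_eq_right h']
      rw [min_eq_left (by linarith)]
      ring
    · rw [max_eq_left h, max_eq_left h', min_eq_right (by linarith)]
      ring

lemma clamp_antitone (t : ℝ) : Antitone (fun r : ℝ => min (max (t - r) 0) 1) := by
  intro r r' h
  exact min_le_min (max_le_max (by linarith) le_rfl) le_rfl

lemma pos_reflect (x : ℝ) : max x 0 - max (-x) 0 = x := by
  rcases le_total x 0 with h | h
  · rw [max_eq_right h, max_eq_left (neg_nonneg.2 h)]; ring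
  · rw [max_eq_left h, max_eq_right (neg_nonpos.2 h)]; ring

/-! ### ℕ cast of truncated sub -/

lemma cast_trunc_sub (a b : ℕ) : ((a - b : ℕ) : ℝ) = max ((a : ℝ) - b) 0 := by
  rcases le_total b a with h | h
  · rw [Nat.cast_sub h, max_eq_left (sub_nonneg.2 (Nat.cast_le.2 h))]
  · rw [Nat.sub_eq_zero_of_le h, max_eq_right (sub_nonpos.2 (Nat.cast_le.2 h))]
    simp

/-! ### Top-list combinatorics on positions -/

variable {n : ℕ}

/-- Inversions of a top-list of "ranks at positions". -/
def einv (ρ : Fin n → ℕ∞) : ℕ :=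
  (Finset.univ.filter (fun q : Fin n × Fin n => q.2 < q.1 ∧ ρ q.1 < ρ q.2)).card

/-- One-sided footrule excess of a top-list of ranks at positions. -/
def efoot (ρ : Fin n → ℕ∞) : ℕ :=
  ∑ p : Fin n, if ρ p ≠ ⊤ then (p.val + 1 - (ρ p).untopD 0) else 0

lemma rank_card {k : ℕ} {ρ : Fin n → ℕ∞} (h : IsTopList n k ρ) {r : ℕ} (hr : r ≤ k) :
    (univ.filter (fun v : Fin n => ρ v ≤ (r : ℕ∞))).card = r := by
  have key : (univ.filter (fun v : Fin n => ρ v ≤ (r : ℕ∞))).card = (Finset.Icc 1 r).card := by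
    apply Finset.card_bij (fun v _ => (ρ v).toNat)
    · intro v hv
      simp only [mem_filter, mem_univ, true_and] at hv
      have hne : ρ v ≠ ⊤ := ne_top_of_le_ne_top (by simp) hv
      have h1 := (h.1 v hne).1
      rw [Finset.mem_Icc]
      constructor
      · have : ((1 : ℕ) : ℕ∞) ≤ ((ρ v).toNat : ℕ∞) := by
          rw [ENat.coe_toNat hne]; exact_mod_cast h1
        exact_mod_cast this
      · have : ((ρ v).toNat : ℕ∞) ≤ (r : ℕ∞) := by rwa [ENat.coe_toNat hne]
        exact_mod_cast this
    · intro v hv v' hv' heq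
      simp only [mem_filter, mem_univ, true_and] at hv hv'
      have hne : ρ v ≠ ⊤ := ne_top_of_le_ne_top (by simp) hv
      have hne' : ρ v' ≠ ⊤ := ne_top_of_le_ne_top (by simp) hv'
      have hval : ρ v = ρ v' := by
        rw [← ENat.coe_toNat hne, ← ENat.coe_toNat hne', heq]
      set r' : ℕ := (ρ v).toNat with hr'
      have hrv : ρ v = (r' : ℕ∞) := (ENat.coe_toNat hne).symm
      have h1 : (1 : ℕ∞) ≤ ρ v := by exact_mod_cast (h.1 v hne).1
      have hrk : ρ v ≤ (k : ℕ∞) := (h.1 v hne).2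
      have hr1 : 1 ≤ r' := by
        have : ((1:ℕ) : ℕ∞) ≤ (r' : ℕ∞) := by rw [← hrv]; exact_mod_cast h1
        exact_mod_cast this
      have hrk' : r' ≤ k := by
        have : (r' : ℕ∞) ≤ ((k:ℕ) : ℕ∞) := by rw [← hrv]; exact hrk
        exact_mod_cast this
      obtain ⟨i, hi, hu⟩ := h.2 r' hr1 hrk'
      rw [hu v hrv, hu v' (show ρ v' = (r' : ℕ∞) from hval ▸ hrv)]
    · intro r' hr'
      rw [Finset.mem_Icc] at hr'
      obtain ⟨i, hi, _⟩ := h.2 r' hr'.1 (le_trans hr'.2 hr)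
      refine ⟨i, ?_, ?_⟩
      · simp only [mem_filter, mem_univ, true_and, hi]
        exact_mod_cast hr'.2
      · rw [hi, ENat.toNat_coe]
  rw [key, Nat.card_Icc]
  omega

lemma einv_eq_sum (ρ : Fin n → ℕ∞) :
    einv ρ = ∑ u : Fin n, (univ.filter (fun v : Fin n => v < u ∧ ρ u < ρ v)).card := by
  rw [einv, Finset.card_eq_sum_card_fiberwise
    (f := fun q : Fin n × Fin n => q.1) (t := univ) (fun _ _ => mem_univ _)]
  refine Finset.sum_congr rfl fun u _ => ?_
  apply Finset.card_bij (fun q _ => q.2)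
  · intro q hq
    simp only [mem_filter, mem_univ, true_and] at hq ⊢
    obtain ⟨⟨h1, h2⟩, h3⟩ := hq
    subst h3
    exact ⟨h1, h2⟩
  · intro q hq q' hq' heq
    simp only [mem_filter, mem_univ, true_and] at hq hq'
    exact Prod.ext (hq.2.trans hq'.2.symm) heq
  · intro v hv
    simp only [mem_filter, mem_univ, true_and] at hv ⊢
    exact ⟨(u, v), ⟨⟨hv.1, hv.2⟩, rfl⟩, rfl⟩

lemma card_filter_lt (u : Fin n) : (univ.filter (fun v : Fin n => v < u)).card = u.val := by
  have : univ.filter (fun v : Fin n => v < u) = Finset.Iio u := by ext x; simp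
  rw [this, Fin.card_Iio]

lemma efoot_le_einv {k : ℕ} {ρ : Fin n → ℕ∞} (h : IsTopList n k ρ) : efoot ρ ≤ einv ρ := by
  rw [einv_eq_sum, efoot]
  apply Finset.sum_le_sum
  intro u _
  by_cases hu : ρ u = ⊤
  · simp [hu]
  · simp only [hu, ne_eq, not_false_iff, if_true]
    set r : ℕ := (ρ u).untopD 0 with hrdef
    have hru : ρ u = (r : ℕ∞) := (ENat.coe_toNat hu).symm
    have h1r : 1 ≤ r := by
      have : ((1:ℕ) : ℕ∞) ≤ (r : ℕ∞) := by rw [← hru]; exact_mod_cast (h.1 u hu).1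
      exact_mod_cast this
    have hrk : r ≤ k := by
      have : (r : ℕ∞) ≤ (k : ℕ∞) := by rw [← hru]; exact (h.1 u hu).2
      exact_mod_cast this
    have hsplit : ((univ.filter (fun v : Fin n => v < u)).filter (fun v => ρ u < ρ v)).card +
        ((univ.filter (fun v : Fin n => v < u)).filter (fun v => ¬ (ρ u < ρ v))).card
        = u.val := by
      rw [Finset.card_filter_add_card_filter_not, card_filter_lt]
    have heqf : (univ.filter (fun v : Fin n => v < u)).filter (fun v => ρ u < ρ v)
        = univ.filter (fun v : Fin n => v < u ∧ ρ u < ρ v) := by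
      rw [Finset.filter_filter]
    have hsub : ((univ.filter (fun v : Fin n => v < u)).filter (fun v => ¬ (ρ u < ρ v))).card
        ≤ r - 1 := by
      have hcard := rank_card h hrk
      have : ((univ.filter (fun v : Fin n => v < u)).filter (fun v => ¬ (ρ u < ρ v)))
          ⊆ (univ.filter (fun v : Fin n => ρ v ≤ (r : ℕ∞))).erase u := by
        intro v hv
        simp only [mem_filter, mem_univ, true_and, not_lt, mem_erase] at hv ⊢
        exact ⟨Fin.ne_of_lt hv.1, by rw [← hru]; exact hv.2⟩
      calc _ ≤ ((univ.filter (fun v : Fin n => ρ v ≤ (r : ℕ∞))).erase u).card :=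
            Finset.card_le_card this
        _ ≤ r - 1 := by
            rw [Finset.card_erase_of_mem (by simp [hru])]
            omega
    rw [← heqf]
    omega

lemma toplist_comp {k : ℕ} {ρ : Fin n → ℕ∞} (h : IsTopList n k ρ) (e : Equiv.Perm (Fin n)) :
    IsTopList n k (ρ ∘ e) := by
  constructor
  · intro i hi; exact h.1 (e i) hi
  · intro r h1 h2
    obtain ⟨i, hi, hu⟩ := h.2 r h1 h2
    refine ⟨e.symm i, by simpa using hi, fun y hy => ?_⟩
    have := hu (e y) hy
    rw [← this]; simp

lemma einv_eq_zero {k : ℕ} {ρ : Fin n → ℕ∞} (h : IsTopList n k ρ)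
    (hgood : ∀ t : Fin n, ¬ (ρ t ≤ (t.val : ℕ∞))) : einv ρ = 0 := by
  have Q : ∀ r : ℕ, 1 ≤ r → r ≤ k → ∀ q : Fin n, ρ q = (r : ℕ∞) → q.val = r - 1 := by
    intro r
    induction r using Nat.strong_induction_on with
    | _ r ih =>
      intro hr1 hrk q hq
      have hlt : q.val < r := by
        by_contra hc
        exact hgood q (hq ▸ (by exact_mod_cast Nat.le_of_not_lt hc : (r:ℕ∞) ≤ (q.val:ℕ∞)))
      by_contra hne
      have h2 : q.val + 1 ≤ r - 1 := by omega
      obtain ⟨i, hi, hu⟩ := h.2 (q.val+1) (by omega) (by omega)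
      have hiv : i.val = (q.val + 1) - 1 := ih (q.val+1) (by omega) (by omega) (by omega) i hi
      have hiq : i = q := Fin.ext (by omega)
      rw [hiq, hq] at hi
      have : r = q.val + 1 := by exact_mod_cast hi
      omega
  rw [einv, Finset.card_eq_zero, Finset.filter_eq_empty_iff]
  rintro q -
  rintro ⟨hvu, hlt⟩
  have hu_ne : ρ q.1 ≠ ⊤ := (lt_of_lt_of_le hlt le_top).ne
  set r : ℕ := (ρ q.1).untopD 0 with hrdef
  have hru : ρ q.1 = (r : ℕ∞) := (ENat.coe_toNat hu_ne).symm
  have hr1 : 1 ≤ r := by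
    have : ((1:ℕ) : ℕ∞) ≤ (r : ℕ∞) := by rw [← hru]; exact_mod_cast (h.1 q.1 hu_ne).1
    exact_mod_cast this
  have hrk : r ≤ k := by
    have : (r : ℕ∞) ≤ (k : ℕ∞) := by rw [← hru]; exact (h.1 q.1 hu_ne).2
    exact_mod_cast this
  have hq1 : q.1.val = r - 1 := Q r hr1 hrk q.1 hru
  have hv_lt : q.2.val < r - 1 := by
    have := hvu
    rw [Fin.lt_def] at this
    omega
  obtain ⟨i, hi, hu⟩ := h.2 (q.2.val + 1) (by omega) (by omega)
  have hiv : i.val = (q.2.val + 1) - 1 := Q (q.2.val+1) (by omega) (by omega) i hi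
  have hiq : i = q.2 := Fin.ext (by omega)
  rw [hiq] at hi
  -- now ρ q.2 = q.2.val+1 < r = ρ q.1, contradicting ρ q.1 < ρ q.2
  rw [hi, hru] at hlt
  have : r < q.2.val + 1 := by exact_mod_cast hlt
  omega

lemma swap_step {k : ℕ} {ρ : Fin n → ℕ∞} (h : IsTopList n k ρ)
    (hB : (univ.filter (fun t : Fin n => ρ t ≤ (t.val : ℕ∞))).Nonempty) :
    ∃ (ρ' : Fin n → ℕ∞) (d : ℕ), IsTopList n k ρ' ∧ 1 ≤ d ∧
      efoot ρ = efoot ρ' + d ∧ einv ρ ≤ einv ρ' + 2 * d := by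
  classical
  set B := univ.filter (fun t : Fin n => ρ t ≤ (t.val : ℕ∞)) with hBdef
  set t0 : Fin n := B.min' hB with ht0def
  have ht0B : t0 ∈ B := B.min'_mem hB
  have ht0 : ρ t0 ≤ (t0.val : ℕ∞) := by
    have := ht0B; rw [hBdef, mem_filter] at this; exact this.2
  have hmin : ∀ q : Fin n, q < t0 → (q.val : ℕ∞) < ρ q := by
    intro q hq
    by_contra hc
    push_neg at hc
    have : q ∈ B := by rw [hBdef, mem_filter]; exact ⟨mem_univ _, hc⟩
    exact absurd (B.min'_le q this) (not_le.2 hq)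
  have ht0ne : ρ t0 ≠ ⊤ := ne_top_of_le_ne_top (by simp) ht0
  set b : ℕ := (ρ t0).untopD 0 with hbdef
  have hbt : ρ t0 = (b : ℕ∞) := (ENat.coe_toNat ht0ne).symm
  have hb1 : 1 ≤ b := by
    have : ((1:ℕ) : ℕ∞) ≤ (b : ℕ∞) := by rw [← hbt]; exact_mod_cast (h.1 t0 ht0ne).1
    exact_mod_cast this
  have hbk : b ≤ k := by
    have : (b : ℕ∞) ≤ (k : ℕ∞) := by rw [← hbt]; exact (h.1 t0 ht0ne).2
    exact_mod_cast this
  have hble : b ≤ t0.val := by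
    have : (b : ℕ∞) ≤ (t0.val : ℕ∞) := by rw [← hbt]; exact ht0
    exact_mod_cast this
  set NF := univ.filter (fun p : Fin n => p < t0 ∧ ρ p ≠ ((p.val + 1 : ℕ) : ℕ∞)) with hNFdef
  have hNFne : NF.Nonempty := by
    by_contra hc
    rw [Finset.not_nonempty_iff_eq_empty, Finset.filter_eq_empty_iff] at hc
    have hfix : ∀ p : Fin n, p < t0 → ρ p = ((p.val + 1 : ℕ) : ℕ∞) := by
      intro p hp
      by_contra hne
      exact hc (mem_univ p) ⟨hp, hne⟩
    have hbn : b - 1 < n := by omega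
    set pb : Fin n := ⟨b - 1, hbn⟩ with hpbdef
    have hpblt : pb < t0 := by rw [Fin.lt_def]; simp [hpbdef]; omega
    have hpbval : ρ pb = (b : ℕ∞) := by
      rw [hfix pb hpblt]; congr 1; simp [hpbdef]; omega
    obtain ⟨i, hi, hu⟩ := h.2 b hb1 hbk
    have h1 := hu pb hpbval
    have h2 := hu t0 hbt
    rw [← h2] at h1
    exact absurd h1 (Fin.ne_of_lt hpblt)
  set ps : Fin n := NF.max' hNFne with hpsdef
  have hpsNF : ps ∈ NF := NF.max'_mem hNFne
  have hps_lt : ps < t0 := by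
    have := hpsNF; rw [hNFdef, mem_filter] at this; exact this.2.1
  have hps_ne : ρ ps ≠ ((ps.val + 1 : ℕ) : ℕ∞) := by
    have := hpsNF; rw [hNFdef, mem_filter] at this; exact this.2.2
  have hps_good : (ps.val : ℕ∞) < ρ ps := hmin ps hps_lt
  have hps_ge : ((ps.val + 1 : ℕ) : ℕ∞) ≤ ρ ps := by
    have := (ENat.add_one_le_iff (m := (ps.val : ℕ∞)) (by simp)).2 hps_good
    exact_mod_cast this
  have hps_gt : ((ps.val + 1 : ℕ) : ℕ∞) < ρ ps := lt_of_le_of_ne hps_ge (Ne.symm hps_ne)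
  have hinter : ∀ q : Fin n, ps < q → q < t0 → ρ q = ((q.val + 1 : ℕ) : ℕ∞) := by
    intro q hq1 hq2
    by_contra hne
    have : q ∈ NF := by rw [hNFdef, mem_filter]; exact ⟨mem_univ _, hq2, hne⟩
    exact absurd (NF.le_max' q this) (not_le.2 hq1)
  -- the value at ps is at least t0+1 (or ⊤)
  have ha : ((t0.val + 1 : ℕ) : ℕ∞) ≤ ρ ps := by
    by_contra hc
    push_neg at hc
    have hane : ρ ps ≠ ⊤ := (lt_of_lt_of_le hc le_top).ne
    set a : ℕ := (ρ ps).untopD 0 with hadef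
    have hat : ρ ps = (a : ℕ∞) := (ENat.coe_toNat hane).symm
    have ha1 : ps.val + 1 < a := by
      have := hps_gt; rw [hat] at this; exact_mod_cast this
    have ha2 : a ≤ t0.val := by
      have := hc; rw [hat] at this
      have : a < t0.val + 1 := by exact_mod_cast this
      omega
    have han : a - 1 < n := by omega
    set q : Fin n := ⟨a - 1, han⟩ with hqdef
    have hq1 : ps < q := by rw [Fin.lt_def]; simp [hqdef]; omega
    have hq2 : q < t0 := by rw [Fin.lt_def]; simp [hqdef]; omega
    have hqval : ρ q = (a : ℕ∞) := by
      rw [hinter q hq1 hq2]; congr 1; simp [hqdef]; omega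
    have hak : a ≤ k := by
      have : (a : ℕ∞) ≤ (k : ℕ∞) := by rw [← hat]; exact (h.1 ps hane).2
      exact_mod_cast this
    obtain ⟨i, hi, hu⟩ := h.2 a (by omega) hak
    have h1 := hu q hqval
    have h2 := hu ps hat
    rw [← h2] at h1
    exact absurd h1 (Fin.ne_of_lt hq1).symm
  -- the rank at t0 is at most ps+1
  have hbps : b ≤ ps.val + 1 := by
    by_contra hc
    push_neg at hc
    have hbn : b - 1 < n := by omega
    set q : Fin n := ⟨b - 1, hbn⟩ with hqdef
    have hq1 : ps < q := by rw [Fin.lt_def]; simp [hqdef]; omega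
    have hq2 : q < t0 := by rw [Fin.lt_def]; simp [hqdef]; omega
    have hqval : ρ q = (b : ℕ∞) := by
      rw [hinter q hq1 hq2]; congr 1; simp [hqdef]; omega
    obtain ⟨i, hi, hu⟩ := h.2 b hb1 hbk
    have h1 := hu q hqval
    have h2 := hu t0 hbt
    rw [← h2] at h1
    exact absurd h1 (Fin.ne_of_lt hq2)
  set sw : Equiv.Perm (Fin n) := Equiv.swap ps t0 with hswdef
  set ρ' : Fin n → ℕ∞ := ρ ∘ sw with hρ'def
  have hψ : IsTopList n k ρ' := toplist_comp h sw
  have hne_pt : ps ≠ t0 := Fin.ne_of_lt hps_lt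
  have hρ'ps : ρ' ps = ρ t0 := by simp [hρ'def, hswdef, Equiv.swap_apply_left]
  have hρ't0 : ρ' t0 = ρ ps := by simp [hρ'def, hswdef, Equiv.swap_apply_right]
  have hρ'other : ∀ p : Fin n, p ≠ ps → p ≠ t0 → ρ' p = ρ p := by
    intro p h1 h2
    simp [hρ'def, hswdef, Equiv.swap_apply_of_ne_of_ne h1 h2]
  set d : ℕ := t0.val - ps.val with hddef
  have hd1 : 1 ≤ d := by
    have := hps_lt; rw [Fin.lt_def] at this; omega
  refine ⟨ρ', d, hψ, hd1, ?_, ?_⟩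
  · -- efoot relation
    have hsplit : ∀ (τ : Fin n → ℕ∞),
        (∑ p : Fin n, if τ p ≠ ⊤ then (p.val + 1 - (τ p).untopD 0) else 0) =
        (∑ p ∈ (univ.erase t0).erase ps,
            (if τ p ≠ ⊤ then (p.val + 1 - (τ p).untopD 0) else 0)) +
          ((if τ ps ≠ ⊤ then (ps.val + 1 - (τ ps).untopD 0) else 0) +
           (if τ t0 ≠ ⊤ then (t0.val + 1 - (τ t0).untopD 0) else 0)) := by
      intro τ
      rw [← Finset.add_sum_erase _ _ (mem_univ t0),
        ← Finset.add_sum_erase _ _ (Finset.mem_erase.2 ⟨hne_pt, mem_univ ps⟩)]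
      ring
    rw [efoot, efoot, hsplit ρ, hsplit ρ']
    have hdiffeq : (∑ p ∈ (univ.erase t0).erase ps,
            (if ρ p ≠ ⊤ then (p.val + 1 - (ρ p).untopD 0) else 0)) =
        (∑ p ∈ (univ.erase t0).erase ps,
            (if ρ' p ≠ ⊤ then (p.val + 1 - (ρ' p).untopD 0) else 0)) := by
      apply Finset.sum_congr rfl
      intro p hp
      rw [Finset.mem_erase, Finset.mem_erase] at hp
      rw [hρ'other p hp.1 hp.2.1]
    rw [hdiffeq]
    -- now compute the four corner terms
    have hps0 : (if ρ ps ≠ ⊤ then (ps.val + 1 - (ρ ps).untopD 0) else 0) = 0 := by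
      by_cases hc : ρ ps = ⊤
      · simp [hc]
      · simp only [hc, ne_eq, not_false_iff, if_true]
        have hh : (ps.val + 1 : ℕ) ≤ (ρ ps).toNat := by
          have h2 : ((ps.val + 1 : ℕ) : ℕ∞) ≤ (((ρ ps).toNat : ℕ) : ℕ∞) := by
            rw [ENat.coe_toNat hc]; exact hps_ge
          exact_mod_cast h2
        have hh2 : (ps.val + 1 : ℕ) ≤ (ρ ps).untopD 0 := hh
        omega
    have ht00 : (if ρ' t0 ≠ ⊤ then (t0.val + 1 - (ρ' t0).untopD 0) else 0) = 0 := by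
      rw [hρ't0]
      by_cases hc : ρ ps = ⊤
      · simp [hc]
      · simp only [hc, ne_eq, not_false_iff, if_true]
        have hh : (t0.val + 1 : ℕ) ≤ (ρ ps).toNat := by
          have h2 : ((t0.val + 1 : ℕ) : ℕ∞) ≤ (((ρ ps).toNat : ℕ) : ℕ∞) := by
            rw [ENat.coe_toNat hc]; exact ha
          exact_mod_cast h2
        have hh2 : (t0.val + 1 : ℕ) ≤ (ρ ps).untopD 0 := hh
        omega
    have hbps' : (if ρ' ps ≠ ⊤ then (ps.val + 1 - (ρ' ps).untopD 0) else 0)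
        = ps.val + 1 - b := by
      rw [hρ'ps, hbt]
      have hcb : WithTop.untopD 0 ((b : ℕ) : ℕ∞) = b := ENat.toNat_coe b
      rw [if_pos (by simp : ((b : ℕ) : ℕ∞) ≠ ⊤), hcb]
    have hbt0 : (if ρ t0 ≠ ⊤ then (t0.val + 1 - (ρ t0).untopD 0) else 0)
        = t0.val + 1 - b := by
      rw [hbt]
      have hcb : WithTop.untopD 0 ((b : ℕ) : ℕ∞) = b := ENat.toNat_coe b
      rw [if_pos (by simp : ((b : ℕ) : ℕ∞) ≠ ⊤), hcb]
    rw [hps0, ht00, hbps', hbt0]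
    have hps_lt_val : ps.val < t0.val := by
      have := hps_lt; rw [Fin.lt_def] at this; exact this
    omega
  · -- einv relation
    set S := univ.filter (fun q : Fin n × Fin n => q.2 < q.1 ∧ ρ q.1 < ρ q.2) with hSdef
    set S' := univ.filter (fun q : Fin n × Fin n => q.2 < q.1 ∧ ρ' q.1 < ρ' q.2) with hS'def
    set T := S'.image (Prod.map sw sw) with hTdef
    have hinj : Function.Injective (Prod.map (sw : Fin n → Fin n) sw) :=
      Function.Injective.prodMap sw.injective sw.injective
    have hTcard : T.card = S'.card := Finset.card_image_of_injective _ hinj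
    set Bad := ({t0} ×ˢ Finset.Ico ps t0) ∪ ((Finset.Ioc ps t0) ×ˢ {ps}) with hBaddef
    have hsub : S ⊆ T ∪ Bad := by
      intro q hq
      rw [hSdef, mem_filter] at hq
      obtain ⟨-, hvu, hlt⟩ := hq
      obtain ⟨u, v⟩ := q
      simp only at hvu hlt
      have hρu : ρ u = ρ' (sw u) := by simp [hρ'def, hswdef, Equiv.swap_apply_self]
      have hρv : ρ v = ρ' (sw v) := by simp [hρ'def, hswdef, Equiv.swap_apply_self]
      rcases lt_trichotomy (sw v) (sw u) with hcase | hcase | hcase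
      · apply Finset.mem_union_left
        rw [hTdef, Finset.mem_image]
        refine ⟨(sw u, sw v), ?_, ?_⟩
        · rw [hS'def, mem_filter]
          exact ⟨mem_univ _, hcase, by rw [← hρu, ← hρv]; exact hlt⟩
        · simp [Prod.map, hswdef, Equiv.swap_apply_self]
      · exact absurd (sw.injective hcase.symm ▸ rfl : v = u) (Fin.ne_of_lt hvu)
      · -- flipped pair
        apply Finset.mem_union_right
        rw [hBaddef, Finset.mem_union]
        by_cases hut : u = t0
        · left
          rw [Finset.mem_product, Finset.mem_singleton, Finset.mem_Ico]
          refine ⟨hut, ?_, hut ▸ hvu⟩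
          by_contra hc
          push_neg at hc
          have hv_ne1 : v ≠ ps := Fin.ne_of_lt hc
          have hv_ne2 : v ≠ t0 := Fin.ne_of_lt (hut ▸ hvu)
          have e1 : sw v = v := Equiv.swap_apply_of_ne_of_ne hv_ne1 hv_ne2
          have e2 : sw u = ps := by rw [hut]; exact Equiv.swap_apply_right _ _
          rw [e1, e2] at hcase
          exact absurd (lt_trans hc hcase) (lt_irrefl _)
        · right
          rw [Finset.mem_product, Finset.mem_singleton, Finset.mem_Ioc]
          have hvps : v = ps := by
            by_contra hvps
            by_cases hups : u = ps
            · have hv_ne2 : v ≠ t0 := by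
                intro hh
                rw [hh, hups] at hvu
                exact absurd (lt_trans hvu hps_lt) (lt_irrefl _)
              have e1 : sw v = v := Equiv.swap_apply_of_ne_of_ne hvps hv_ne2
              have e2 : sw u = t0 := by rw [hups]; exact Equiv.swap_apply_left _ _
              rw [e1, e2] at hcase
              have : v < t0 := lt_trans (hups ▸ hvu) hps_lt
              exact absurd (lt_trans this hcase) (lt_irrefl _)
            · have e2 : sw u = u := Equiv.swap_apply_of_ne_of_ne hups hut
              by_cases hvt : v = t0
              · have e1 : sw v = ps := by rw [hvt]; exact Equiv.swap_apply_right _ _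
                rw [e1, e2] at hcase
                have : ps < u := lt_trans hps_lt (hvt ▸ hvu)
                exact absurd (lt_trans this hcase) (lt_irrefl _)
              · have e1 : sw v = v := Equiv.swap_apply_of_ne_of_ne hvps hvt
                rw [e1, e2] at hcase
                exact absurd (lt_trans hvu hcase) (lt_irrefl _)
          refine ⟨⟨hvps ▸ hvu, ?_⟩, hvps⟩
          have e2 : sw u = u := Equiv.swap_apply_of_ne_of_ne (by rw [← hvps]; exact (Fin.ne_of_lt hvu).symm) hut
          have e1 : sw v = t0 := by rw [hvps]; exact Equiv.swap_apply_left _ _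
          rw [e1, e2] at hcase
          exact le_of_lt hcase
    have hBadcard : Bad.card ≤ 2 * d := by
      calc Bad.card ≤ ({t0} ×ˢ Finset.Ico ps t0).card + ((Finset.Ioc ps t0) ×ˢ {ps}).card :=
            Finset.card_union_le _ _
        _ ≤ 2 * d := by
            simp only [Finset.card_product, Finset.card_singleton, Fin.card_Ico, Fin.card_Ioc]
            omega
    calc einv ρ = S.card := rfl
      _ ≤ (T ∪ Bad).card := Finset.card_le_card hsub
      _ ≤ T.card + Bad.card := Finset.card_union_le _ _
      _ ≤ einv ρ' + 2 * d := by rw [hTcard]; exact Nat.add_le_add le_rfl hBadcard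

lemma einv_le_two_efoot {k : ℕ} {ρ : Fin n → ℕ∞} (h : IsTopList n k ρ) :
    einv ρ ≤ 2 * efoot ρ := by
  suffices H : ∀ (N k : ℕ) (ρ : Fin n → ℕ∞), efoot ρ ≤ N → IsTopList n k ρ →
      einv ρ ≤ 2 * efoot ρ from H (efoot ρ) k ρ le_rfl h
  intro N
  induction N with
  | zero =>
    intro k ρ hN h
    by_cases hB : (univ.filter (fun t : Fin n => ρ t ≤ (t.val : ℕ∞))).Nonempty
    · obtain ⟨ρ', d, h', hd, hfe, hie⟩ := swap_step h hB
      omega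
    · rw [Finset.not_nonempty_iff_eq_empty, Finset.filter_eq_empty_iff] at hB
      rw [einv_eq_zero h (fun t => hB (mem_univ t))]
      omega
  | succ N ih =>
    intro k ρ hN h
    by_cases hB : (univ.filter (fun t : Fin n => ρ t ≤ (t.val : ℕ∞))).Nonempty
    · obtain ⟨ρ', d, h', hd, hfe, hie⟩ := swap_step h hB
      have := ih k ρ' (by omega) h'
      omega
    · rw [Finset.not_nonempty_iff_eq_empty, Finset.filter_eq_empty_iff] at hB
      rw [einv_eq_zero h (fun t => hB (mem_univ t))]
      omega

/-- per-candidate footrule excess in the `(σ, π)` coordinates -/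
def esig (σ : Equiv.Perm (Fin n)) (π : Fin n → ℕ∞) : ℕ :=
  ∑ i : Fin n, if π i ≠ ⊤ then ((σ i).val + 1 - (π i).untopD 0) else 0

lemma esig_eq_efoot (σ : Equiv.Perm (Fin n)) (π : Fin n → ℕ∞) :
    esig σ π = efoot (π ∘ σ.symm) := by
  rw [esig, efoot]
  rw [← Equiv.sum_comp σ (fun p : Fin n =>
    if (π ∘ σ.symm) p ≠ ⊤ then (p.val + 1 - ((π ∘ σ.symm) p).untopD 0) else 0)]
  apply Finset.sum_congr rfl
  intro i _
  simp

lemma kendall_eq_einv (σ : Equiv.Perm (Fin n)) (π : Fin n → ℕ∞) :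
    (Finset.univ.filter (fun q : Fin n × Fin n => σ q.2 < σ q.1 ∧ π q.1 < π q.2)).card
      = einv (π ∘ σ.symm) := by
  rw [einv]
  apply Finset.card_bij (fun q _ => (σ q.1, σ q.2))
  · intro q hq
    rw [mem_filter] at hq ⊢
    refine ⟨mem_univ _, hq.2.1, ?_⟩
    simpa using hq.2.2
  · intro q hq q' hq' heq
    have h1 : σ q.1 = σ q'.1 := congrArg Prod.fst heq
    have h2 : σ q.2 = σ q'.2 := congrArg Prod.snd heq
    exact Prod.ext (σ.injective h1) (σ.injective h2)
  · intro q hq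
    rw [mem_filter] at hq
    refine ⟨(σ.symm q.1, σ.symm q.2), ?_, by simp⟩
    rw [mem_filter]
    simp only [mem_univ, true_and, Equiv.apply_symm_apply]
    exact ⟨hq.2.1, hq.2.2⟩

lemma esig_le_kendall {k : ℕ} {σ : Equiv.Perm (Fin n)} {π : Fin n → ℕ∞}
    (h : IsTopList n k π) :
    esig σ π ≤ (Finset.univ.filter
      (fun q : Fin n × Fin n => σ q.2 < σ q.1 ∧ π q.1 < π q.2)).card := by
  rw [esig_eq_efoot, kendall_eq_einv]
  exact efoot_le_einv (toplist_comp h σ.symm)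

lemma kendall_le_two_esig {k : ℕ} {σ : Equiv.Perm (Fin n)} {π : Fin n → ℕ∞}
    (h : IsTopList n k π) :
    (Finset.univ.filter
      (fun q : Fin n × Fin n => σ q.2 < σ q.1 ∧ π q.1 < π q.2)).card ≤ 2 * esig σ π := by
  rw [esig_eq_efoot, kendall_eq_einv]
  exact einv_le_two_efoot (toplist_comp h σ.symm)

/-! ### Sorting minimizes the one-sided footrule against average ranks -/

lemma sum_le_of_top_set {c : Fin n → ℝ} {T T' : Finset (Fin n)} (hcard : T.card = T'.card)
    (h : ∀ i ∈ T, ∀ j ∉ T, c i ≤ c j) : ∑ i ∈ T, c i ≤ ∑ i ∈ T', c i := by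
  have hdiffcard : (T \ T').card = (T' \ T).card := by
    have h1 := Finset.card_inter_add_card_sdiff T T'
    have h2 := Finset.card_inter_add_card_sdiff T' T
    rw [Finset.inter_comm] at h2
    omega
  have key : ∑ i ∈ T \ T', c i ≤ ∑ i ∈ T' \ T, c i := by
    rcases (T \ T').eq_empty_or_nonempty with hempty | hne
    · rw [hempty]
      have : T' \ T = ∅ := Finset.card_eq_zero.1 (by rw [← hdiffcard, hempty]; simp)
      rw [this]
    · have hne' : (T' \ T).Nonempty := Finset.card_pos.1 (by rw [← hdiffcard]; exact Finset.card_pos.2 hne)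
      obtain ⟨y0, hy0, hy0min⟩ := Finset.exists_min_image (T' \ T) c hne'
      rw [Finset.mem_sdiff] at hy0
      calc ∑ i ∈ T \ T', c i ≤ (T \ T').card • c y0 := by
            apply Finset.sum_le_card_nsmul
            intro x hx
            rw [Finset.mem_sdiff] at hx
            exact h x hx.1 y0 hy0.2
        _ = (T' \ T).card • c y0 := by rw [hdiffcard]
        _ ≤ ∑ i ∈ T' \ T, c i := Finset.card_nsmul_le_sum _ _ _ (fun x hx => hy0min x hx)
  calc ∑ i ∈ T, c i = ∑ i ∈ T ∩ T', c i + ∑ i ∈ T \ T', c i :=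
        (Finset.sum_inter_add_sum_sdiff T T' c).symm
    _ ≤ ∑ i ∈ T ∩ T', c i + ∑ i ∈ T' \ T, c i := by linarith
    _ = ∑ i ∈ T' ∩ T, c i + ∑ i ∈ T' \ T, c i := by rw [Finset.inter_comm]
    _ = ∑ i ∈ T', c i := Finset.sum_inter_add_sum_sdiff T' T c

lemma pos_decomp (a : ℕ) (ha : a ≤ n) (r : ℝ) (hr : 0 ≤ r) :
    max ((a : ℝ) - r) 0 =
      ∑ t ∈ Finset.range n, (if t < a then min (max (((t : ℝ) + 1) - r) 0) 1 else 0) := by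
  rw [← Finset.sum_filter]
  have hfil : (Finset.range n).filter (fun t => t < a) = Finset.range a := by
    ext t; simp only [Finset.mem_filter, Finset.mem_range]; omega
  rw [hfil]
  have htel : ∑ t ∈ Finset.range a, (max (((t:ℝ)+1) - r) 0 - max ((t:ℝ) - r) 0)
      = max ((a:ℝ) - r) 0 - max ((0:ℝ) - r) 0 := by
    have := Finset.sum_range_sub (fun t : ℕ => max ((t:ℝ) - r) 0) a
    simpa using this
  have h0 : max ((0:ℝ) - r) 0 = 0 := max_eq_right (by linarith)
  rw [h0, sub_zero] at htel
  rw [← htel]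
  apply Finset.sum_congr rfl
  intro t _
  have := pos_succ_sub ((t:ℝ) - r)
  calc max (((t:ℝ)+1) - r) 0 - max ((t:ℝ) - r) 0
      = max (((t:ℝ) - r) + 1) 0 - max ((t:ℝ) - r) 0 := by ring_nf
    _ = min (max (((t:ℝ) - r) + 1) 0) 1 := this
    _ = min (max (((t:ℝ) + 1) - r) 0) 1 := by ring_nf

lemma sorted_min {R : Fin n → ℝ} (hR : ∀ i, 0 ≤ R i)
    (σ σs : Equiv.Perm (Fin n))
    (hσ : ∀ i j, R i < R j → σ i < σ j) :
    ∑ i, max ((((σ i).val : ℝ) + 1) - R i) 0 ≤ ∑ i, max ((((σs i).val : ℝ) + 1) - R i) 0 := by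
  have hdecomp : ∀ (τ : Equiv.Perm (Fin n)),
      ∑ i, max ((((τ i).val : ℝ) + 1) - R i) 0 =
      ∑ t ∈ Finset.range n, ∑ i ∈ univ.filter (fun i => t ≤ (τ i).val),
        min (max (((t : ℝ) + 1) - R i) 0) 1 := by
    intro τ
    have : ∀ i : Fin n, max ((((τ i).val : ℝ) + 1) - R i) 0 =
        ∑ t ∈ Finset.range n, (if t < (τ i).val + 1 then min (max (((t : ℝ) + 1) - R i) 0) 1 else 0) := by
      intro i
      have := pos_decomp ((τ i).val + 1) (Nat.succ_le_of_lt (τ i).isLt) (R i) (hR i)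
      rw [← this]
      push_cast
      ring_nf
    rw [Finset.sum_congr rfl (fun i _ => this i), Finset.sum_comm]
    apply Finset.sum_congr rfl
    intro t _
    rw [← Finset.sum_filter]
    apply Finset.sum_congr _ (fun i _ => rfl)
    ext i
    simp only [Finset.mem_filter, mem_univ, true_and]
    omega
  rw [hdecomp σ, hdecomp σs]
  apply Finset.sum_le_sum
  intro t _
  apply sum_le_of_top_set
  · have hc : ∀ (τ : Equiv.Perm (Fin n)),
        (univ.filter (fun i => t ≤ (τ i).val)).card
          = (univ.filter (fun p : Fin n => t ≤ p.val)).card := by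
      intro τ
      apply Finset.card_bij (fun i _ => τ i)
      · intro i hi; rw [mem_filter] at hi ⊢; exact ⟨mem_univ _, hi.2⟩
      · intro i _ j _ heq; exact τ.injective heq
      · intro p hp
        rw [mem_filter] at hp
        exact ⟨τ.symm p, by rw [mem_filter]; simpa using hp.2, by simp⟩
    rw [hc σ, hc σs]
  · intro i hi j hj
    rw [mem_filter] at hi hj
    simp only [mem_univ, true_and, not_le] at hi hj
    have hji : σ j < σ i := by
      rw [Fin.lt_def]; omega
    have hRle : R j ≤ R i := by
      by_contra hc
      push_neg at hc
      exact absurd (hσ i j hc) (not_lt.2 (le_of_lt hji))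
    exact min_le_min (max_le_max (by linarith) le_rfl) le_rfl

/-! ### Sum of distinct positive integers dominates the sum of ranks -/

lemma inj_sum_ge {β : Type*} [DecidableEq β] :
    ∀ (S : Finset β) (f : β → ℕ), (∀ x ∈ S, 1 ≤ f x) →
      (∀ x ∈ S, ∀ y ∈ S, f x = f y → x = y) →
      ∑ r ∈ Finset.Icc 1 S.card, r ≤ ∑ x ∈ S, f x := by
  suffices H : ∀ (c : ℕ) (S : Finset β) (f : β → ℕ), S.card = c → (∀ x ∈ S, 1 ≤ f x) →
      (∀ x ∈ S, ∀ y ∈ S, f x = f y → x = y) →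
      ∑ r ∈ Finset.Icc 1 S.card, r ≤ ∑ x ∈ S, f x by
    intro S f h1 hinj
    exact H S.card S f rfl h1 hinj
  intro c
  induction c with
  | zero =>
    intro S f hc h1 hinj
    rw [hc]
    simp
  | succ c ih =>
    intro S f hc h1 hinj
    have hne : S.Nonempty := Finset.card_pos.1 (by omega)
    obtain ⟨m, hm, hmax⟩ := Finset.exists_max_image S f hne
    have hfm : S.card ≤ f m := by
      have hinj' : Set.InjOn f S := fun x hx y hy => hinj x hx y hy
      have h2 : S.card = (S.image f).card := (Finset.card_image_of_injOn hinj').symm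
      have h3 : S.image f ⊆ Finset.Icc 1 (f m) := by
        intro z hz
        rw [Finset.mem_image] at hz
        obtain ⟨x, hx, hxz⟩ := hz
        rw [Finset.mem_Icc]
        exact ⟨hxz ▸ h1 x hx, hxz ▸ hmax x hx⟩
      calc S.card = (S.image f).card := h2
        _ ≤ (Finset.Icc 1 (f m)).card := Finset.card_le_card h3
        _ = f m := by rw [Nat.card_Icc]; omega
    have herase : (S.erase m).card = c := by rw [Finset.card_erase_of_mem hm]; omega
    have hih := ih (S.erase m) f herase (fun x hx => h1 x (Finset.mem_of_mem_erase hx))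
      (fun x hx y hy => hinj x (Finset.mem_of_mem_erase hx) y (Finset.mem_of_mem_erase hy))
    rw [← Finset.add_sum_erase _ _ hm]
    have hIcc : ∑ r ∈ Finset.Icc 1 (c+1), r = (c+1) + ∑ r ∈ Finset.Icc 1 c, r := by
      rw [show Finset.Icc 1 (c+1) = insert (c+1) (Finset.Icc 1 c) by
        ext z; simp only [Finset.mem_insert, Finset.mem_Icc]; omega]
      rw [Finset.sum_insert (by simp)]
    rw [hc, hIcc]
    rw [herase] at hih
    omega

/-- For a top list, the sum of attained ranks equals `1 + ⋯ + k`. -/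
lemma sum_ranks {k : ℕ} {ρ : Fin n → ℕ∞} (h : IsTopList n k ρ) :
    ∑ i ∈ univ.filter (fun i : Fin n => ρ i ≠ ⊤), (ρ i).untopD 0
      = ∑ r ∈ Finset.Icc 1 k, r := by
  apply Finset.sum_bij (fun i _ => (ρ i).untopD 0)
  · intro i hi
    rw [mem_filter] at hi
    have hne := hi.2
    rw [Finset.mem_Icc]
    constructor
    · have : ((1:ℕ) : ℕ∞) ≤ (((ρ i).toNat : ℕ) : ℕ∞) := by
        rw [ENat.coe_toNat hne]; exact_mod_cast (h.1 i hne).1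
      exact_mod_cast this
    · have : (((ρ i).toNat : ℕ) : ℕ∞) ≤ (k : ℕ∞) := by
        rw [ENat.coe_toNat hne]; exact (h.1 i hne).2
      exact_mod_cast this
  · intro i hi j hj heq
    rw [mem_filter] at hi hj
    have h1 : ρ i = (((ρ i).toNat : ℕ) : ℕ∞) := (ENat.coe_toNat hi.2).symm
    have h2 : ρ j = (((ρ j).toNat : ℕ) : ℕ∞) := (ENat.coe_toNat hj.2).symm
    have hval : ρ i = ρ j := by rw [h1, h2]; exact_mod_cast heq
    have hr1 : 1 ≤ (ρ i).toNat := by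
      have : ((1:ℕ) : ℕ∞) ≤ (((ρ i).toNat : ℕ) : ℕ∞) := by
        rw [ENat.coe_toNat hi.2]; exact_mod_cast (h.1 i hi.2).1
      exact_mod_cast this
    have hrk : (ρ i).toNat ≤ k := by
      have : (((ρ i).toNat : ℕ) : ℕ∞) ≤ (k : ℕ∞) := by
        rw [ENat.coe_toNat hi.2]; exact (h.1 i hi.2).2
      exact_mod_cast this
    obtain ⟨x, hx, hu⟩ := h.2 ((ρ i).toNat) hr1 hrk
    rw [hu i h1, hu j (hval ▸ h1)]
  · intro r hr
    rw [Finset.mem_Icc] at hr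
    obtain ⟨i, hi, _⟩ := h.2 r hr.1 hr.2
    refine ⟨i, ?_, ?_⟩
    · rw [mem_filter]
      exact ⟨mem_univ _, by rw [hi]; simp⟩
    · rw [hi]
      exact ENat.toNat_coe r
  · intro i hi
    rfl

/-- Positions of ranked candidates sum to at least `1 + ⋯ + k`. -/
lemma sum_positions_ge {k : ℕ} {ρ : Fin n → ℕ∞} (h : IsTopList n k ρ)
    (τ : Equiv.Perm (Fin n)) :
    ∑ i ∈ univ.filter (fun i : Fin n => ρ i ≠ ⊤), (ρ i).untopD 0
      ≤ ∑ i ∈ univ.filter (fun i : Fin n => ρ i ≠ ⊤), ((τ i).val + 1) := by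
  rw [sum_ranks h]
  have hcard : (univ.filter (fun i : Fin n => ρ i ≠ ⊤)).card = k := by
    have : univ.filter (fun i : Fin n => ρ i ≠ ⊤)
        = univ.filter (fun i : Fin n => ρ i ≤ (k : ℕ∞)) := by
      ext i
      simp only [mem_filter, mem_univ, true_and]
      constructor
      · intro hi; exact (h.1 i hi).2
      · intro hi; exact ne_top_of_le_ne_top (by simp) hi
    rw [this, rank_card h le_rfl]
  rw [← hcard]
  apply inj_sum_ge
  · intro x _; omega
  · intro x _ y _ heq
    exact τ.injective (Fin.ext (by omega))

/-! ### Weighted Jensen step -/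

lemma jensen_aux {m : ℕ} (w : Fin m → ℝ) (hw : ∀ v, 0 ≤ w v) (c : Fin m → Prop)
    [DecidablePred c] (x : Fin m → ℝ) (y : ℝ) :
    max ((∑ v, if c v then w v else 0) * y - (∑ v, if c v then w v * x v else 0)) 0
      ≤ ∑ v, if c v then w v * max (y - x v) 0 else 0 := by
  have hrw : (∑ v, if c v then w v else 0) * y - (∑ v, if c v then w v * x v else 0)
      = ∑ v, if c v then w v * (y - x v) else 0 := by
    rw [Finset.sum_mul, ← Finset.sum_sub_distrib]
    apply Finset.sum_congr rfl
    intro v _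
    split_ifs <;> ring
  rw [hrw]
  refine le_trans (pos_sum _ _) (Finset.sum_le_sum fun v _ => ?_)
  split_ifs with hc
  · rw [mul_max_of_nonneg _ _ (hw v), mul_zero]
  · simp

end BordaAux

open BordaAux in
/-- Generalized Borda (sorting by nondecreasing average rank) is a
`(4α+2)`-approximation when all scores are within a factor `α` of each
other: `F(σ,p) ≤ (1+2α)·F(σ*,p)` and `K(σ,p) ≤ (2+4α)·K(σ*,p)`. -/
theorem borda_approx {n m : ℕ} (α : ℝ)
    (w : Fin m → ℝ) (hw : ∀ v, 0 ≤ w v) (hw1 : ∑ v, w v = 1)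
    (π : Fin m → Fin n → ℕ∞) (hπ : ∀ v, ∃ k ≤ n, IsTopList n k (π v))
    (hscore : ∀ i, 0 < score w π i)
    (hα : ∀ i j : Fin n, score w π i ≤ α * score w π j)
    (σ : Equiv.Perm (Fin n))
    (hσ : ∀ i j : Fin n, avgRank w π i < avgRank w π j → σ i < σ j)
    (σstar : Equiv.Perm (Fin n)) :
    footruleCost w π σ ≤ (1 + 2 * α) * footruleCost w π σstar ∧
      kendallCost w π σ ≤ (2 + 4 * α) * kendallCost w π σstar := by
  classical
  rcases Nat.eq_zero_or_pos n with hn0 | hn0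
  · subst hn0
    constructor
    · simp [footruleCost]
    · simp [kendallCost, kendallGen]
  have hS0 : ∀ i, (0:ℝ) ≤ score w π i := fun i => le_of_lt (hscore i)
  have hα1 : (1:ℝ) ≤ α := by
    have h0 := hα ⟨0, hn0⟩ ⟨0, hn0⟩
    nlinarith [hscore ⟨0, hn0⟩]
  have hα0 : (0:ℝ) ≤ α := le_trans zero_le_one hα1
  have hR0 : ∀ i, 0 ≤ avgRank w π i := by
    intro i
    apply div_nonneg _ (hS0 i)
    apply Finset.sum_nonneg
    intro v _
    split_ifs
    · exact mul_nonneg (hw v) (by positivity)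
    · exact le_rfl
  have hnum : ∀ i, (∑ v, if π v i ≠ ⊤ then w v * (((π v i).untopD 0 : ℕ) : ℝ) else 0)
      = score w π i * avgRank w π i := by
    intro i
    rw [avgRank, mul_comm]
    exact (div_mul_cancel₀ _ (ne_of_gt (hscore i))).symm
  -- abbreviations
  set R : Fin n → ℝ := avgRank w π with hRdef
  set S : Fin n → ℝ := score w π with hSdef
  set sp : Equiv.Perm (Fin n) → Fin n → ℝ := fun τ i => ((τ i : ℕ) : ℝ) + 1 with hspdef
  set kv : Fin m → Fin n → ℝ := fun v i => (((π v i).untopD 0 : ℕ) : ℝ) with hkvdef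
  set A : Equiv.Perm (Fin n) → Fin n → ℝ := fun τ i => max (sp τ i - R i) 0 with hAdef
  set Gi : Equiv.Perm (Fin n) → Fin n → ℝ := fun τ i =>
    ∑ v, if π v i ≠ ⊤ then w v * max (sp τ i - kv v i) 0 else 0 with hGidef
  set G : Equiv.Perm (Fin n) → ℝ := fun τ => ∑ i, Gi τ i with hGdef
  have hfoot : ∀ τ, footruleCost w π τ = 2 * G τ := fun τ => rfl
  have hGi0 : ∀ τ i, 0 ≤ Gi τ i := by
    intro τ i
    apply Finset.sum_nonneg
    intro v _
    split_ifs
    · exact mul_nonneg (hw v) (le_max_right _ _)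
    · exact le_rfl
  have hG0 : ∀ τ, 0 ≤ G τ := fun τ => Finset.sum_nonneg fun i _ => hGi0 τ i
  -- Jensen: S i * A τ i ≤ Gi τ i
  have hjensen : ∀ (τ : Equiv.Perm (Fin n)) i, S i * A τ i ≤ Gi τ i := by
    intro τ i
    have h1 : S i * A τ i = max (S i * (sp τ i - R i)) 0 := by
      rw [hAdef]
      rw [mul_max_of_nonneg _ _ (hS0 i), mul_zero]
    have h2 : S i * (sp τ i - R i)
        = (∑ v, if π v i ≠ ⊤ then w v else 0) * sp τ i
          - (∑ v, if π v i ≠ ⊤ then w v * kv v i else 0) := by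
      rw [mul_sub, hkvdef]
      rw [hnum i]
      rfl
    rw [h1, h2]
    exact jensen_aux w hw (fun v => π v i ≠ ⊤) (fun v => kv v i) (sp τ i)
  -- sum of weights times a constant
  have hsum_wA : ∀ (x : Fin n → ℝ) i,
      (∑ v, if π v i ≠ ⊤ then w v * x i else 0) = S i * x i := by
    intro x i
    calc (∑ v, if π v i ≠ ⊤ then w v * x i else 0)
        = ∑ v, (if π v i ≠ ⊤ then w v else 0) * x i := by
          apply Finset.sum_congr rfl
          intro v _
          split_ifs <;> simp
      _ = (∑ v, if π v i ≠ ⊤ then w v else 0) * x i := by rw [Finset.sum_mul]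
      _ = S i * x i := rfl
  -- step 1 : triangle towards R
  have htri1 : G σ ≤ (∑ i, S i * A σ i)
      + ∑ i, ∑ v, (if π v i ≠ ⊤ then w v * max (R i - kv v i) 0 else 0) := by
    rw [hGdef, ← Finset.sum_add_distrib]
    apply Finset.sum_le_sum
    intro i _
    rw [← hsum_wA (fun j => A σ j) i, ← Finset.sum_add_distrib]
    apply Finset.sum_le_sum
    intro v _
    split_ifs with hc
    · rw [← mul_add]
      exact mul_le_mul_of_nonneg_left (pos_tri _ _ _) (hw v)
    · simp
  -- step 2 : reflect around R using the definition of the average rank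
  have hflip : ∀ i, (∑ v, if π v i ≠ ⊤ then w v * max (R i - kv v i) 0 else 0)
      = (∑ v, if π v i ≠ ⊤ then w v * max (kv v i - R i) 0 else 0) := by
    intro i
    have hzero : (∑ v, if π v i ≠ ⊤ then w v * (R i - kv v i) else 0) = 0 := by
      have hsplit : (∑ v, if π v i ≠ ⊤ then w v * (R i - kv v i) else 0)
          = (∑ v, if π v i ≠ ⊤ then w v * R i else 0)
            - (∑ v, if π v i ≠ ⊤ then w v * kv v i else 0) := by
        rw [← Finset.sum_sub_distrib]
        apply Finset.sum_congr rfl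
        intro v _
        split_ifs <;> ring
      rw [hsplit, hsum_wA (fun j => R j) i]
      rw [hkvdef, hnum i]
      ring
    have hterm : ∀ v, (if π v i ≠ ⊤ then w v * max (R i - kv v i) 0 else 0)
        = (if π v i ≠ ⊤ then w v * max (kv v i - R i) 0 else 0)
          + (if π v i ≠ ⊤ then w v * (R i - kv v i) else 0) := by
      intro v
      split_ifs
      · have := pos_reflect (R i - kv v i)
        have hneg : -(R i - kv v i) = kv v i - R i := by ring
        rw [hneg] at this
        rw [← mul_add]
        congr 1
        linarith
      · ring
    rw [Finset.sum_congr rfl (fun v _ => hterm v), Finset.sum_add_distrib, hzero, add_zero]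
  -- step 3 : sorting
  have hsort : (∑ i, A σ i) ≤ ∑ i, A σstar i := by
    rw [hAdef, hspdef]
    exact sorted_min hR0 σ σstar hσ
  -- step 4 : weight comparison
  obtain ⟨j0, -, hj0min⟩ := Finset.exists_min_image univ S ⟨⟨0, hn0⟩, mem_univ _⟩
  have hA0 : ∀ (τ : Equiv.Perm (Fin n)) i, 0 ≤ A τ i := fun τ i => le_max_right _ _
  have hmax1 : ∑ i, S i * A σ i ≤ (α * S j0) * ∑ i, A σ i := by
    rw [Finset.mul_sum]
    apply Finset.sum_le_sum
    intro i _
    exact mul_le_mul_of_nonneg_right (hα i j0) (hA0 σ i)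
  have hmax2 : (α * S j0) * ∑ i, A σ i ≤ (α * S j0) * ∑ i, A σstar i :=
    mul_le_mul_of_nonneg_left hsort (mul_nonneg hα0 (hS0 j0))
  have hmax3 : (α * S j0) * ∑ i, A σstar i ≤ α * ∑ i, S i * A σstar i := by
    rw [mul_assoc]
    apply mul_le_mul_of_nonneg_left _ hα0
    rw [Finset.mul_sum]
    apply Finset.sum_le_sum
    intro i _
    exact mul_le_mul_of_nonneg_right (hj0min i (mem_univ i)) (hA0 σstar i)
  have hjenstar : ∑ i, S i * A σstar i ≤ G σstar :=
    Finset.sum_le_sum fun i _ => hjensen σstar i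
  -- step 5 : triangle towards σstar
  have htri2 : ∑ i, ∑ v, (if π v i ≠ ⊤ then w v * max (kv v i - R i) 0 else 0)
      ≤ (∑ i, ∑ v, (if π v i ≠ ⊤ then w v * max (kv v i - sp σstar i) 0 else 0))
        + ∑ i, S i * A σstar i := by
    rw [← Finset.sum_add_distrib]
    apply Finset.sum_le_sum
    intro i _
    rw [← hsum_wA (fun j => A σstar j) i, ← Finset.sum_add_distrib]
    apply Finset.sum_le_sum
    intro v _
    split_ifs with hc
    · rw [← mul_add]
      apply mul_le_mul_of_nonneg_left _ (hw v)
      have := pos_tri (kv v i) (R i) (sp σstar i)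
      have h2 : A σstar i = max (sp σstar i - R i) 0 := rfl
      rw [h2]
      linarith
    · simp
  -- step 6 : the positions dominate the ranks
  have hstep7 : (∑ i, ∑ v, (if π v i ≠ ⊤ then w v * max (kv v i - sp σstar i) 0 else 0))
      ≤ G σstar := by
    have hGalt : G σstar
        = ∑ v, ∑ i, (if π v i ≠ ⊤ then w v * max (sp σstar i - kv v i) 0 else 0) :=
      Finset.sum_comm
    rw [hGalt, Finset.sum_comm]
    apply Finset.sum_le_sum
    intro v _
    obtain ⟨k, -, hk⟩ := hπ v
    -- factor out w v
    have hfac : ∀ (y : Fin n → ℝ),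
        (∑ i, if π v i ≠ ⊤ then w v * y i else 0)
          = w v * ∑ i, (if π v i ≠ ⊤ then y i else 0) := by
      intro y
      rw [Finset.mul_sum]
      apply Finset.sum_congr rfl
      intro i _
      split_ifs <;> simp
    rw [hfac (fun i => max (kv v i - sp σstar i) 0), hfac (fun i => max (sp σstar i - kv v i) 0)]
    apply mul_le_mul_of_nonneg_left _ (hw v)
    -- Σ (k - s*)⁺ ≤ Σ (s* - k)⁺ since Σ (s* - k) ≥ 0 on ranked candidates
    have hkey : (∑ i, (if π v i ≠ ⊤ then kv v i else 0))
        ≤ ∑ i, (if π v i ≠ ⊤ then sp σstar i else 0) := by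
      have hnat := sum_positions_ge hk σstar
      have hc1 : (∑ i, (if π v i ≠ ⊤ then kv v i else 0))
          = ((∑ i ∈ univ.filter (fun i : Fin n => π v i ≠ ⊤), ((π v i).untopD 0) : ℕ) : ℝ) := by
        rw [Finset.sum_filter, Nat.cast_sum]
        apply Finset.sum_congr rfl
        intro i _
        split_ifs <;> simp [hkvdef]
      have hc2 : (∑ i, (if π v i ≠ ⊤ then sp σstar i else 0))
          = ((∑ i ∈ univ.filter (fun i : Fin n => π v i ≠ ⊤), ((σstar i).val + 1) : ℕ) : ℝ) := by
        rw [Finset.sum_filter, Nat.cast_sum]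
        apply Finset.sum_congr rfl
        intro i _
        split_ifs <;> simp [hspdef]
      rw [hc1, hc2]
      exact_mod_cast hnat
    have hterm : ∀ i, (if π v i ≠ ⊤ then max (kv v i - sp σstar i) 0 else 0)
        = (if π v i ≠ ⊤ then max (sp σstar i - kv v i) 0 else 0)
          - ((if π v i ≠ ⊤ then sp σstar i else 0) - (if π v i ≠ ⊤ then kv v i else 0)) := by
      intro i
      split_ifs
      · have := pos_reflect (sp σstar i - kv v i)
        have hneg : -(sp σstar i - kv v i) = kv v i - sp σstar i := by ring
        rw [hneg] at this
        linarith
      · ring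
    rw [Finset.sum_congr rfl (fun i _ => hterm i), Finset.sum_sub_distrib,
      Finset.sum_sub_distrib]
    linarith
  -- putting the footrule bound together
  have hGmain : G σ ≤ (1 + 2 * α) * G σstar := by
    have c1 : G σ ≤ α * G σstar + G σstar + G σstar := by
      have e1 : ∑ i, S i * A σ i ≤ α * G σstar := by
        calc ∑ i, S i * A σ i ≤ (α * S j0) * ∑ i, A σ i := hmax1
          _ ≤ (α * S j0) * ∑ i, A σstar i := hmax2
          _ ≤ α * ∑ i, S i * A σstar i := hmax3
          _ ≤ α * G σstar := mul_le_mul_of_nonneg_left hjenstar hα0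
      have e2 : ∑ i, ∑ v, (if π v i ≠ ⊤ then w v * max (R i - kv v i) 0 else 0)
          ≤ G σstar + G σstar := by
        rw [Finset.sum_congr rfl (fun i _ => hflip i)]
        calc _ ≤ (∑ i, ∑ v, (if π v i ≠ ⊤ then w v * max (kv v i - sp σstar i) 0 else 0))
              + ∑ i, S i * A σstar i := htri2
          _ ≤ G σstar + G σstar := add_le_add hstep7 hjenstar
      linarith
    nlinarith [hG0 σstar]
  constructor
  · rw [hfoot σ, hfoot σstar]
    linarith
  · -- Kendall part
    have hcast : ∀ (τ : Equiv.Perm (Fin n)) v, ((esig τ (π v) : ℕ) : ℝ)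
        = ∑ i, (if π v i ≠ ⊤ then max (sp τ i - kv v i) 0 else 0) := by
      intro τ v
      rw [esig, Nat.cast_sum]
      apply Finset.sum_congr rfl
      intro i _
      split_ifs with hc
      · rw [show (((τ i).val + 1 - (π v i).untopD 0 : ℕ) : ℝ)
            = max (((((τ i).val + 1 : ℕ)) : ℝ) - (((π v i).untopD 0 : ℕ) : ℝ)) 0
            from cast_trunc_sub _ _]
        rw [hspdef, hkvdef]
        push_cast
        ring_nf
      · simp
    have hGsum : ∀ τ : Equiv.Perm (Fin n),
        (∑ v, w v * ∑ i, (if π v i ≠ ⊤ then max (sp τ i - kv v i) 0 else 0)) = G τ := by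
      intro τ
      have hGalt : G τ
          = ∑ v, ∑ i, (if π v i ≠ ⊤ then w v * max (sp τ i - kv v i) 0 else 0) :=
        Finset.sum_comm
      rw [hGalt]
      apply Finset.sum_congr rfl
      intro v _
      rw [Finset.mul_sum]
      apply Finset.sum_congr rfl
      intro i _
      split_ifs <;> simp
    have hK1 : kendallCost w π σ ≤ 2 * G σ := by
      rw [kendallCost, ← hGsum σ, Finset.mul_sum]
      apply Finset.sum_le_sum
      intro v _
      rw [show (2:ℝ) * (w v * ∑ i, (if π v i ≠ ⊤ then max (sp σ i - kv v i) 0 else 0))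
          = w v * (2 * ∑ i, (if π v i ≠ ⊤ then max (sp σ i - kv v i) 0 else 0)) by ring]
      apply mul_le_mul_of_nonneg_left _ (hw v)
      obtain ⟨k, -, hk⟩ := hπ v
      have hnat := kendall_le_two_esig (σ := σ) hk
      calc ((kendallGen σ (π v) : ℕ) : ℝ) ≤ ((2 * esig σ (π v) : ℕ) : ℝ) := by
            exact_mod_cast hnat
        _ = 2 * ∑ i, (if π v i ≠ ⊤ then max (sp σ i - kv v i) 0 else 0) := by
            rw [Nat.cast_mul, hcast σ v]
            norm_num
    have hK2 : G σstar ≤ kendallCost w π σstar := by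
      rw [kendallCost, ← hGsum σstar]
      apply Finset.sum_le_sum
      intro v _
      apply mul_le_mul_of_nonneg_left _ (hw v)
      obtain ⟨k, -, hk⟩ := hπ v
      have hnat := esig_le_kendall (σ := σstar) hk
      rw [← hcast σstar v]
      exact_mod_cast hnat
    calc kendallCost w π σ ≤ 2 * G σ := hK1
      _ ≤ 2 * ((1 + 2 * α) * G σstar) := by linarith
      _ ≤ 2 * ((1 + 2 * α) * kendallCost w π σstar) := by nlinarith [hK2]
      _ = (2 + 4 * α) * kendallCost w π σstar := by ring
end

section
/- There exists a family of instances on n=2 candidates showing Borda's rule applied to top-lists has unbounded approximation ratio: for every ε > 0 there is a distribution p over top-lists on {1,2} such that the permutation sorting by average rank has cost at least (1-ε)/ε times the optimal cost. Concretely, with p([1]) = 1-ε and p([2,1]) = ε: the ranking [1,2] has cost ε while sorting by average rank yields [2,1] with cost 1-ε. -/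
open Finset

/-- Borda's rule on top-lists has unbounded approximation ratio: for every
`ε ∈ (0,1)` there is a profile on two candidates (namely
`p([1;…]) = 1-ε`, `p([2,1]) = ε`) for which the optimal ranking `[1,2]`
costs `ε`, while sorting by average rank outputs `[2,1]`
(since `Rank(2) < Rank(1)`), which costs `1-ε ≥ ((1-ε)/ε)·ε`. -/
theorem borda_unbounded_ratio (ε : ℝ) (h0 : 0 < ε) (h1 : ε < 1) :
    ∃ (w : Fin 2 → ℝ) (π : Fin 2 → Fin 2 → ℕ∞),
      (∀ v, 0 ≤ w v) ∧ (∑ v, w v) = 1 ∧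
      (∀ v, ∃ k ≤ 2, IsTopList 2 k (π v)) ∧
      w 0 = 1 - ε ∧ w 1 = ε ∧
      π 0 0 = (1 : ℕ∞) ∧ π 0 1 = ⊤ ∧ π 1 0 = (2 : ℕ∞) ∧ π 1 1 = (1 : ℕ∞) ∧
      avgRank w π 1 < avgRank w π 0 ∧
      (∑ v, w v * (kendallGen (1 : Equiv.Perm (Fin 2)) (π v) : ℝ)) = ε ∧
      (∑ v, w v * (kendallGen (Equiv.swap (0 : Fin 2) 1) (π v) : ℝ)) = 1 - ε ∧
      (1 - ε) ≥ ((1 - ε) / ε) * ε := by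
  refine ⟨![1 - ε, ε], ![![1, ⊤], ![2, 1]], ?_, ?_, ?_, rfl, rfl, rfl, rfl, rfl, rfl, ?_, ?_, ?_, ?_⟩
  · intro v; fin_cases v <;> simp <;> linarith
  · simp [Fin.sum_univ_two]
  · intro v; fin_cases v
    · exact ⟨1, by norm_num, by
        constructor
        · intro i; fin_cases i <;> simp
        · intro r h1r hr1
          interval_cases r
          exact ⟨0, by simp, fun i hi => by fin_cases i <;> simp_all⟩⟩
    · exact ⟨2, le_refl _, by
        constructor
        · intro i; fin_cases i <;> simp
        · intro r h1r hr2
          interval_cases r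
          · exact ⟨1, by simp, fun i hi => by fin_cases i <;> simp_all⟩
          · exact ⟨0, by simp, fun i hi => by fin_cases i <;> simp_all⟩⟩
  · simp only [avgRank, score, Fin.sum_univ_two]
    norm_num
    have h2 : (WithTop.untopD 0 (2:ℕ∞)) = 2 := rfl
    have h3 : (WithTop.untopD 0 (1:ℕ∞)) = 1 := rfl
    rw [h2, h3, Nat.cast_one, mul_one, div_self h0.ne']
    push_cast; linarith
  · have a : kendallGen (1 : Equiv.Perm (Fin 2)) ![(1:ℕ∞), ⊤] = 0 := by decide
    have b : kendallGen (1 : Equiv.Perm (Fin 2)) ![(2:ℕ∞), 1] = 1 := by decide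
    simp [Fin.sum_univ_two, a, b]
  · have a : kendallGen (Equiv.swap (0:Fin 2) 1) ![(1:ℕ∞), ⊤] = 1 := by decide
    have b : kendallGen (Equiv.swap (0:Fin 2) 1) ![(2:ℕ∞), 1] = 0 := by decide
    simp [Fin.sum_univ_two, a, b]
  · rw [div_mul_cancel₀]; exact h0.ne'
end

section
/- Let p be a distribution over top-lists on [n], η > 0, and u uniform on [0,1). Define the random bucket index f(s) = ⌊u - η·ln s⌋ for s ∈ (0,1] and f(0) = ∞. Say a permutation respects the partition if f(Score(i)) < f(Score(j)) implies σ(i) < σ(j). Then the expected (over u) cost of the best partition-respecting permutation is at most (1+η) times the optimal cost: E_u[min_{σ respecting} K(σ,p)] ≤ (1+η)·min_{σ*} K(σ*,p). -/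
open Finset MeasureTheory

/-- The random bucket index `f(s) = ⌊u − η ln s⌋` for `s ∈ (0,1]`,
and `f(0) = ∞`. -/
noncomputable def bucket (η u s : ℝ) : ℕ∞ :=
  if s = 0 then ⊤ else ((⌊u - η * Real.log s⌋.toNat : ℕ) : ℕ∞)

/-- `σ` respects the random partition induced by `u`: candidates in earlier
buckets are ranked before candidates in later buckets. -/
noncomputable def Respects {n m : ℕ} (w : Fin m → ℝ) (π : Fin m → Fin n → ℕ∞)
    (η u : ℝ) (σ : Equiv.Perm (Fin n)) : Prop :=
  ∀ i j : Fin n, bucket η u (score w π i) < bucket η u (score w π j) → σ i < σ j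

namespace PartitionAux

lemma bucket_anti {η : ℝ} (hη : 0 ≤ η) (u : ℝ) {c d : ℝ} (hc : 0 < c) (hcd : c ≤ d) :
    bucket η u d ≤ bucket η u c := by
  have hd : 0 < d := lt_of_lt_of_le hc hcd
  rw [bucket, bucket, if_neg (ne_of_gt hc), if_neg (ne_of_gt hd)]
  have hlog : Real.log c ≤ Real.log d := Real.log_le_log hc hcd
  exact_mod_cast Int.toNat_le_toNat (Int.floor_le_floor (by nlinarith))

lemma integrableOn_of_bounded {f : ℝ → ℝ} (hm : Measurable f) {C : ℝ}
    (hb : ∀ u, |f u| ≤ C) : IntegrableOn f (Set.Ico (0:ℝ) 1) := by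
  refine Integrable.mono' (g := fun _ => C)
    ((integrableOn_const_iff).mpr (Or.inr (by simp [Real.volume_Ico])))
    hm.aestronglyMeasurable (Filter.Eventually.of_forall (fun u => hb u))

lemma floor_integrable (a : ℝ) :
    IntegrableOn (fun u : ℝ => ((⌊u + a⌋ : ℤ) : ℝ)) (Set.Ico (0:ℝ) 1) := by
  have hm : Measurable fun u : ℝ => ((⌊u + a⌋ : ℤ) : ℝ) :=
    (measurable_of_countable (fun z : ℤ => (z : ℝ))).comp
      (Int.measurable_floor.comp (measurable_id.add_const a))
  refine Integrable.mono' (g := fun _ => |a| + 1)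
    ((integrableOn_const_iff).mpr (Or.inr (by simp [Real.volume_Ico])))
    hm.aestronglyMeasurable ?_
  rw [ae_restrict_iff' measurableSet_Ico]
  refine Filter.Eventually.of_forall (fun u hu => ?_)
  obtain ⟨h0, h1⟩ := hu
  have hb : |((⌊u + a⌋ : ℤ) : ℝ)| ≤ |a| + 1 := by
    rw [abs_le]
    constructor
    · have h2 : (⌊u + a⌋ : ℝ) > u + a - 1 := by linarith [Int.sub_one_lt_floor (u + a)]
      have h3 := neg_abs_le a
      linarith
    · have h2 := Int.floor_le (u + a)
      have h3 := le_abs_self a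
      linarith
  simpa using hb

lemma integral_floor (a : ℝ) :
    ∫ u in Set.Ico (0:ℝ) 1, ((⌊u + a⌋ : ℤ) : ℝ) = a := by
  have hfr0 : 0 ≤ Int.fract a := Int.fract_nonneg a
  have hfr1 : Int.fract a < 1 := Int.fract_lt_one a
  have hkey : Set.EqOn (fun u : ℝ => ((⌊u + a⌋ : ℤ) : ℝ))
      (fun u => (⌊a⌋ : ℝ) + Set.indicator (Set.Ici (1 - Int.fract a)) (fun _ => (1:ℝ)) u)
      (Set.Ico (0:ℝ) 1) := by
    intro u hu
    obtain ⟨hu0, hu1⟩ := hu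
    have ha : u + a = u + Int.fract a + (⌊a⌋ : ℤ) := by
      have := Int.floor_add_fract a
      push_cast
      linarith
    simp only
    rw [ha, Int.floor_add_intCast]
    by_cases hc : 1 - Int.fract a ≤ u
    · have h1 : ⌊u + Int.fract a⌋ = 1 := by
        rw [Int.floor_eq_iff]
        constructor <;> push_cast <;> linarith
      rw [h1, Set.indicator_of_mem (Set.mem_Ici.mpr hc)]
      push_cast; ring
    · push_neg at hc
      have h0 : ⌊u + Int.fract a⌋ = 0 := by
        rw [Int.floor_eq_zero_iff, Set.mem_Ico]
        constructor <;> linarith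
      rw [h0, Set.indicator_of_notMem (fun h => absurd (Set.mem_Ici.mp h) (not_le.mpr hc))]
      push_cast; ring
  rw [setIntegral_congr_fun measurableSet_Ico hkey]
  have hind : IntegrableOn (fun u : ℝ =>
      Set.indicator (Set.Ici (1 - Int.fract a)) (fun _ => (1:ℝ)) u) (Set.Ico (0:ℝ) 1) := by
    exact ((integrableOn_const_iff).mpr (Or.inr (by simp [Real.volume_Ico]))).indicator
      measurableSet_Ici
  rw [integral_add (show Integrable (fun _ : ℝ => (⌊a⌋ : ℝ)) (volume.restrict (Set.Ico (0:ℝ) 1)) from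
    (integrableOn_const_iff).mpr (Or.inr (by simp [Real.volume_Ico]))) hind]
  rw [setIntegral_const, setIntegral_indicator measurableSet_Ici]
  have hset : Set.Ico (0:ℝ) 1 ∩ Set.Ici (1 - Int.fract a) = Set.Ico (1 - Int.fract a) 1 := by
    ext x
    simp only [Set.mem_inter_iff, Set.mem_Ico, Set.mem_Ici]
    constructor
    · rintro ⟨⟨_, hx1⟩, hx2⟩; exact ⟨hx2, hx1⟩
    · rintro ⟨hx1, hx2⟩; exact ⟨⟨by linarith, hx2⟩, hx1⟩
  rw [hset, setIntegral_const]
  simp [Real.volume_Ico, ENNReal.toReal_ofReal, hfr0]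

lemma ite_bucket_integrable (η c d M : ℝ) :
    IntegrableOn (fun u => if bucket η u d < bucket η u c then M else 0) (Set.Ico (0:ℝ) 1) := by
  have hbd : ∀ u, |if bucket η u d < bucket η u c then M else (0:ℝ)| ≤ |M| := fun u => by
    split <;> simp
  by_cases hd : d = 0
  · have hfun : (fun u => if bucket η u d < bucket η u c then M else (0:ℝ)) = fun _ => 0 := by
      funext u
      rw [if_neg]
      rw [bucket, if_pos hd]
      exact not_top_lt
    rw [hfun]
    exact (integrableOn_const_iff).mpr (Or.inl (by simp))
  by_cases hc : c = 0
  · have hfun : (fun u => if bucket η u d < bucket η u c then M else (0:ℝ)) = fun _ => M := by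
      funext u
      rw [if_pos]
      simp only [bucket, if_pos hc, if_neg hd]
      exact lt_of_le_of_ne le_top (by simp)
    rw [hfun]
    exact (integrableOn_const_iff).mpr (Or.inr (by simp [Real.volume_Ico]))
  · have hrw : (fun u => if bucket η u d < bucket η u c then M else (0:ℝ)) =
        (fun p : ℤ × ℤ => if ((p.1.toNat : ℕ) : ℕ∞) < ((p.2.toNat : ℕ) : ℕ∞) then M else 0) ∘
          (fun u => (⌊u - η * Real.log d⌋, ⌊u - η * Real.log c⌋)) := by
      funext u
      simp [bucket, hc, hd, Function.comp]
    have hm : Measurable (fun u => if bucket η u d < bucket η u c then M else (0:ℝ)) := by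
      rw [hrw]
      exact (measurable_of_countable _).comp
        ((Int.measurable_floor.comp (measurable_id.sub_const _)).prodMk
          (Int.measurable_floor.comp (measurable_id.sub_const _)))
    exact integrableOn_of_bounded hm hbd

lemma ite_bucket_integral_le {η : ℝ} (hη : 0 < η) {c d M : ℝ} (hc0 : 0 ≤ c) (hc1 : c ≤ 1)
    (hd0 : 0 ≤ d) (hd1 : d ≤ 1) (hM0 : 0 ≤ M) (hMc : M ≤ c) :
    ∫ u in Set.Ico (0:ℝ) 1, (if bucket η u d < bucket η u c then M else 0) ≤
      η * max (d - c) 0 := by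
  have hRHS : 0 ≤ η * max (d - c) 0 := mul_nonneg hη.le (le_max_right _ _)
  rcases eq_or_lt_of_le hc0 with hc | hc
  · -- c = 0, hence M = 0
    have hM : M = 0 := le_antisymm (hc ▸ hMc) hM0
    simp [hM, hRHS]
  by_cases hdc : d ≤ c
  · have hfun : ∀ u, (if bucket η u d < bucket η u c then M else (0:ℝ)) = 0 := by
      intro u
      apply if_neg
      apply not_lt.mpr
      by_cases hd : d = 0
      · simp only [bucket, if_pos hd]; exact le_top
      · exact bucket_anti hη.le u (lt_of_le_of_ne hd0 (Ne.symm hd)) hdc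
    calc ∫ u in Set.Ico (0:ℝ) 1, (if bucket η u d < bucket η u c then M else 0)
        = ∫ u in Set.Ico (0:ℝ) 1, (0:ℝ) := by simp only [hfun]
      _ = 0 := integral_zero _ _
      _ ≤ _ := hRHS
  · push_neg at hdc
    have hd : 0 < d := hc.trans hdc
    set ai := -(η * Real.log c) with hai_def
    set aj := -(η * Real.log d) with haj_def
    have hlogc : Real.log c ≤ 0 := Real.log_nonpos hc0 hc1
    have hlogd : Real.log d ≤ 0 := Real.log_nonpos hd0 hd1
    have haj0 : 0 ≤ aj := by rw [haj_def]; nlinarith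
    have hloglt : Real.log c ≤ Real.log d := Real.log_le_log hc hdc.le
    have haij : aj ≤ ai := by rw [hai_def, haj_def]; nlinarith
    have hrwc : ∀ u : ℝ, bucket η u c = ((⌊u + ai⌋.toNat : ℕ) : ℕ∞) := by
      intro u
      rw [bucket, if_neg (ne_of_gt hc), show u - η * Real.log c = u + ai by rw [hai_def]; ring]
    have hrwd : ∀ u : ℝ, bucket η u d = ((⌊u + aj⌋.toNat : ℕ) : ℕ∞) := by
      intro u
      rw [bucket, if_neg (ne_of_gt hd), show u - η * Real.log d = u + aj by rw [haj_def]; ring]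
    have hptwise : ∀ u ∈ Set.Ico (0:ℝ) 1,
        (if bucket η u d < bucket η u c then M else 0) ≤
          M * (((⌊u + ai⌋ : ℤ) : ℝ) - ((⌊u + aj⌋ : ℤ) : ℝ)) := by
      rintro u ⟨hu0, hu1⟩
      have hfloor_le : ⌊u + aj⌋ ≤ ⌊u + ai⌋ := Int.floor_le_floor (by linarith)
      split_ifs with h
      · rw [hrwc, hrwd] at h
        have hnat : ⌊u + aj⌋.toNat < ⌊u + ai⌋.toNat := by exact_mod_cast h
        have hjnn : 0 ≤ ⌊u + aj⌋ := Int.floor_nonneg.mpr (by linarith)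
        have hint : ⌊u + aj⌋ < ⌊u + ai⌋ := by
          have h2 : (⌊u + aj⌋.toNat : ℤ) < (⌊u + ai⌋.toNat : ℤ) := by exact_mod_cast hnat
          rwa [Int.toNat_of_nonneg hjnn, Int.toNat_of_nonneg (hjnn.trans hfloor_le)] at h2
        have h3 : (⌊u + aj⌋ : ℝ) + 1 ≤ (⌊u + ai⌋ : ℝ) := by exact_mod_cast hint
        nlinarith
      · have h4 : (0:ℝ) ≤ (⌊u + ai⌋ : ℝ) - (⌊u + aj⌋ : ℝ) := by
          have := sub_nonneg.mpr hfloor_le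
          exact_mod_cast this
        nlinarith
    have hint2 : IntegrableOn (fun u : ℝ => M * (((⌊u + ai⌋ : ℤ) : ℝ) - ((⌊u + aj⌋ : ℤ) : ℝ)))
        (Set.Ico (0:ℝ) 1) := ((floor_integrable ai).sub (floor_integrable aj)).const_mul M
    calc ∫ u in Set.Ico (0:ℝ) 1, (if bucket η u d < bucket η u c then M else 0)
        ≤ ∫ u in Set.Ico (0:ℝ) 1, M * (((⌊u + ai⌋ : ℤ) : ℝ) - ((⌊u + aj⌋ : ℤ) : ℝ)) :=
          setIntegral_mono_on (ite_bucket_integrable η c d M) hint2 measurableSet_Ico hptwise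
      _ = M * (ai - aj) := by
          rw [MeasureTheory.integral_const_mul,
            integral_sub (floor_integrable ai) (floor_integrable aj),
            integral_floor, integral_floor]
      _ ≤ η * max (d - c) 0 := by
          have hlog2 : Real.log d - Real.log c ≤ d / c - 1 := by
            have h1 : Real.log (d / c) ≤ d / c - 1 :=
              Real.log_le_sub_one_of_pos (by positivity)
            rwa [Real.log_div (ne_of_gt hd) (ne_of_gt hc)] at h1
          have haisub : ai - aj = η * (Real.log d - Real.log c) := by
            rw [hai_def, haj_def]; ring
          have h2 : M * (ai - aj) ≤ c * (η * (d / c - 1)) := by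
            rw [haisub]
            apply mul_le_mul hMc (by nlinarith) (by nlinarith) hc0
          have h3 : c * (η * (d / c - 1)) = η * (d - c) := by
            field_simp
          have h4 : η * (d - c) ≤ η * max (d - c) 0 :=
            mul_le_mul_of_nonneg_left (le_max_left _ _) hη.le
          calc M * (ai - aj) ≤ c * (η * (d / c - 1)) := h2
            _ = η * (d - c) := h3
            _ ≤ η * max (d - c) 0 := h4
section Comb

variable {n m : ℕ}

/-- weight of voters ranking `i` strictly before `j`. -/
def pc (w : Fin m → ℝ) (π : Fin m → Fin n → ℕ∞) (i j : Fin n) : ℝ :=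
  ∑ v, if π v i < π v j then w v else 0

lemma cost_eq (w : Fin m → ℝ) (π : Fin m → Fin n → ℕ∞) (σ : Equiv.Perm (Fin n)) :
    kendallCost w π σ =
      ∑ q : Fin n × Fin n, if σ q.2 < σ q.1 then pc w π q.1 q.2 else 0 := by
  have h1 : ∀ v, w v *
      ((Finset.univ.filter fun q : Fin n × Fin n => σ q.2 < σ q.1 ∧ π v q.1 < π v q.2).card : ℝ)
      = ∑ q : Fin n × Fin n,
          if σ q.2 < σ q.1 then (if π v q.1 < π v q.2 then w v else 0) else 0 := by
    intro v
    rw [Finset.card_filter]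
    push_cast
    rw [Finset.mul_sum]
    refine Finset.sum_congr rfl fun q _ => ?_
    by_cases h1 : σ q.2 < σ q.1 <;> by_cases h2 : π v q.1 < π v q.2 <;> simp [h1, h2]
  unfold kendallCost kendallGen
  simp only [h1]
  rw [Finset.sum_comm]
  refine Finset.sum_congr rfl fun q _ => ?_
  by_cases h : σ q.2 < σ q.1 <;> simp [h, pc]

lemma cost_pair (w : Fin m → ℝ) (π : Fin m → Fin n → ℕ∞) (σstar σ : Equiv.Perm (Fin n)) :
    kendallCost w π σ =
      ∑ q ∈ Finset.univ.filter (fun q : Fin n × Fin n => σstar q.1 < σstar q.2),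
        (if σ q.2 < σ q.1 then pc w π q.1 q.2 else pc w π q.2 q.1) := by
  classical
  rw [cost_eq]
  rw [← Finset.sum_filter_add_sum_filter_not Finset.univ
    (fun q : Fin n × Fin n => σstar q.1 < σstar q.2)
    (fun q => if σ q.2 < σ q.1 then pc w π q.1 q.2 else 0)]
  have h2 : ∑ q ∈ Finset.univ.filter (fun q : Fin n × Fin n => ¬ σstar q.1 < σstar q.2),
        (if σ q.2 < σ q.1 then pc w π q.1 q.2 else 0)
      = ∑ q ∈ Finset.univ.filter (fun q : Fin n × Fin n => σstar q.1 < σstar q.2),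
        (if σ q.1 < σ q.2 then pc w π q.2 q.1 else 0) := by
    rw [← Finset.sum_subset
      (s₁ := Finset.univ.filter (fun q : Fin n × Fin n => σstar q.2 < σstar q.1))
      (by intro q hq
          simp only [Finset.mem_filter, Finset.mem_univ, true_and] at hq ⊢
          exact not_lt.mpr hq.le)
      (by intro q hq hq2
          simp only [Finset.mem_filter, Finset.mem_univ, true_and, not_lt] at hq hq2
          have heq : σstar q.1 = σstar q.2 := le_antisymm hq2 hq
          have h12 : q.1 = q.2 := σstar.injective heq
          rw [if_neg]
          rw [h12]
          exact lt_irrefl _)]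
    refine Finset.sum_equiv (Equiv.prodComm (Fin n) (Fin n)) ?_ ?_
    · intro q
      simp [Equiv.prodComm]
    · intro q hq
      simp [Equiv.prodComm]
      exact if_congr Iff.rfl rfl rfl
  rw [h2, ← Finset.sum_add_distrib]
  refine Finset.sum_congr rfl fun q hq => ?_
  have hq' : σstar q.1 < σstar q.2 := (Finset.mem_filter.mp hq).2
  have hne : q.1 ≠ q.2 := fun h => absurd (h ▸ hq') (lt_irrefl _)
  have hσne : σ q.1 ≠ σ q.2 := fun h => hne (σ.injective h)
  rcases lt_or_gt_of_ne hσne with h | h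
  · rw [if_neg (lt_asymm h), if_pos h, if_neg (lt_asymm h), zero_add]
  · rw [if_pos h, if_neg (lt_asymm h), if_pos h, add_zero]

end Comb

end PartitionAux

theorem partition_lemma' {n m : ℕ} (η : ℝ) (hη : 0 < η)
    (w : Fin m → ℝ) (hw : ∀ v, 0 ≤ w v) (hw1 : ∑ v, w v = 1)
    (π : Fin m → Fin n → ℕ∞)
    (σstar : Equiv.Perm (Fin n)) :
    ∫ u in Set.Ico (0 : ℝ) 1,
        sInf {x : ℝ | ∃ σ : Equiv.Perm (Fin n),
          Respects w π η u σ ∧ x = kendallCost w π σ} ≤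
      (1 + η) * kendallCost w π σstar := by
  classical
  set P : Finset (Fin n × Fin n) :=
    Finset.univ.filter (fun q : Fin n × Fin n => σstar q.1 < σstar q.2) with hP
  have hpc_nonneg : ∀ i j : Fin n, 0 ≤ PartitionAux.pc w π i j := by
    intro i j
    refine Finset.sum_nonneg fun v _ => ?_
    split
    · exact hw v
    · exact le_refl 0
  have hs0 : ∀ i, 0 ≤ score w π i := by
    intro i
    refine Finset.sum_nonneg fun v _ => ?_
    split
    · exact hw v
    · exact le_refl 0
  have hs1 : ∀ i, score w π i ≤ 1 := by
    intro i
    rw [← hw1]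
    refine Finset.sum_le_sum fun v _ => ?_
    split
    · exact le_refl _
    · exact hw v
  have hpc_le : ∀ i j : Fin n, PartitionAux.pc w π i j ≤ score w π i := by
    intro i j
    refine Finset.sum_le_sum fun v _ => ?_
    by_cases h1 : π v i < π v j
    · rw [if_pos h1, if_pos (LT.lt.ne_top h1)]
    · rw [if_neg h1]
      split
      · exact hw v
      · exact le_refl 0
  have hdiff : ∀ i j : Fin n, score w π j - score w π i ≤ PartitionAux.pc w π j i := by
    intro i j
    rw [score, score, ← Finset.sum_sub_distrib]
    refine Finset.sum_le_sum fun v _ => ?_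
    by_cases hj : π v j = ⊤
    · rw [if_neg (fun h => h hj)]
      have h1 : 0 ≤ (if π v i ≠ ⊤ then w v else 0) := by
        split
        · exact hw v
        · exact le_refl 0
      have h2 : 0 ≤ (if π v j < π v i then w v else 0) := by
        split
        · exact hw v
        · exact le_refl 0
      linarith
    · by_cases hi : π v i = ⊤
      · rw [if_pos hj, if_neg (fun h => h hi), if_pos (by rw [hi]; exact lt_top_iff_ne_top.mpr hj)]
        linarith
      · rw [if_pos hj, if_pos hi]
        have h2 : 0 ≤ (if π v j < π v i then w v else 0) := by
          split
          · exact hw v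
          · exact le_refl 0
        linarith
  have hcost0 : ∀ σ : Equiv.Perm (Fin n), 0 ≤ kendallCost w π σ := fun σ =>
    Finset.sum_nonneg fun v _ => mul_nonneg (hw v) (Nat.cast_nonneg _)
  have hstar : kendallCost w π σstar = ∑ q ∈ P, PartitionAux.pc w π q.2 q.1 := by
    rw [PartitionAux.cost_pair w π σstar σstar]
    exact Finset.sum_congr rfl fun q hq => if_neg (lt_asymm (Finset.mem_filter.mp hq).2)
  have hpoint : ∀ u : ℝ, sInf {x : ℝ | ∃ σ : Equiv.Perm (Fin n),
      Respects w π η u σ ∧ x = kendallCost w π σ} ≤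
      kendallCost w π σstar + ∑ q ∈ P,
        (if bucket η u (score w π q.2) < bucket η u (score w π q.1)
          then max (PartitionAux.pc w π q.1 q.2 - PartitionAux.pc w π q.2 q.1) 0 else 0) := by
    intro u
    set key : Fin n → ℕ∞ ×ₗ Fin n :=
      fun i => toLex (bucket η u (score w π i), σstar i) with hkey
    have hinj : Function.Injective key := by
      intro i j h
      have h2 := congrArg (fun x => (ofLex x).2) h
      exact σstar.injective h2
    have hsm : StrictMono (key ∘ Tuple.sort key) :=
      (Tuple.monotone_sort key).strictMono_of_injective
        (hinj.comp (Tuple.sort key).injective)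
    set σu : Equiv.Perm (Fin n) := (Tuple.sort key)⁻¹ with hσu
    have hlt : ∀ i j : Fin n, σu i < σu j ↔ key i < key j := by
      intro i j
      rw [← hsm.lt_iff_lt]
      simp only [Function.comp_apply, hσu]
      rw [Equiv.Perm.inv_def, Equiv.apply_symm_apply, Equiv.apply_symm_apply]
    have hkeylt_iff : ∀ i j : Fin n, key i < key j ↔
        (bucket η u (score w π i) < bucket η u (score w π j) ∨
          (bucket η u (score w π i) = bucket η u (score w π j) ∧ σstar i < σstar j)) := by
      intro i j
      rw [hkey]
      exact Prod.Lex.lt_iff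
    have hresp : Respects w π η u σu := fun i j h =>
      (hlt i j).mpr ((hkeylt_iff i j).mpr (Or.inl h))
    have hbdd : BddBelow {x : ℝ | ∃ σ : Equiv.Perm (Fin n),
        Respects w π η u σ ∧ x = kendallCost w π σ} := by
      refine ⟨0, fun x hx => ?_⟩
      obtain ⟨σ, _, rfl⟩ := hx
      exact hcost0 σ
    have hmem : kendallCost w π σu ∈ {x : ℝ | ∃ σ : Equiv.Perm (Fin n),
        Respects w π η u σ ∧ x = kendallCost w π σ} := ⟨σu, hresp, rfl⟩
    refine (csInf_le hbdd hmem).trans ?_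
    rw [PartitionAux.cost_pair w π σstar σu, hstar, ← Finset.sum_add_distrib]
    refine Finset.sum_le_sum fun q hq => ?_
    have hq' : σstar q.1 < σstar q.2 := (Finset.mem_filter.mp hq).2
    by_cases hσ : σu q.2 < σu q.1
    · rw [if_pos hσ]
      have hkeylt : key q.2 < key q.1 := (hlt _ _).mp hσ
      have hbuck : bucket η u (score w π q.2) < bucket η u (score w π q.1) := by
        rcases (hkeylt_iff _ _).mp hkeylt with h | ⟨heq, h2⟩
        · exact h
        · exact absurd h2 (lt_asymm hq')
      rw [if_pos hbuck]
      have h3 := le_max_left (PartitionAux.pc w π q.1 q.2 - PartitionAux.pc w π q.2 q.1) (0:ℝ)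
      linarith
    · rw [if_neg hσ]
      have h0 : (0:ℝ) ≤ (if bucket η u (score w π q.2) < bucket η u (score w π q.1)
          then max (PartitionAux.pc w π q.1 q.2 - PartitionAux.pc w π q.2 q.1) 0 else 0) := by
        split
        · exact le_max_right _ _
        · exact le_refl 0
      linarith
  have hEint : ∀ q ∈ P, IntegrableOn (fun u =>
      if bucket η u (score w π q.2) < bucket η u (score w π q.1)
        then max (PartitionAux.pc w π q.1 q.2 - PartitionAux.pc w π q.2 q.1) 0 else 0)
      (Set.Ico (0:ℝ) 1) := fun q _ =>
    PartitionAux.ite_bucket_integrable η (score w π q.1) (score w π q.2) _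
  have hgint : IntegrableOn (fun u => kendallCost w π σstar + ∑ q ∈ P,
      (if bucket η u (score w π q.2) < bucket η u (score w π q.1)
        then max (PartitionAux.pc w π q.1 q.2 - PartitionAux.pc w π q.2 q.1) 0 else 0))
      (Set.Ico (0:ℝ) 1) :=
    ((integrableOn_const_iff).mpr (Or.inr (by simp [Real.volume_Ico]))).add
      (integrable_finset_sum P hEint)
  calc ∫ u in Set.Ico (0 : ℝ) 1,
        sInf {x : ℝ | ∃ σ : Equiv.Perm (Fin n),
          Respects w π η u σ ∧ x = kendallCost w π σ}
      ≤ ∫ u in Set.Ico (0 : ℝ) 1, (kendallCost w π σstar + ∑ q ∈ P,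
          (if bucket η u (score w π q.2) < bucket η u (score w π q.1)
            then max (PartitionAux.pc w π q.1 q.2 - PartitionAux.pc w π q.2 q.1) 0 else 0)) := by
        refine integral_mono_of_nonneg (Filter.Eventually.of_forall fun u => ?_) hgint
          (Filter.Eventually.of_forall fun u => hpoint u)
        refine Real.sInf_nonneg fun x hx => ?_
        obtain ⟨σ, _, rfl⟩ := hx
        exact hcost0 σ
    _ = kendallCost w π σstar + ∑ q ∈ P, ∫ u in Set.Ico (0:ℝ) 1,
          (if bucket η u (score w π q.2) < bucket η u (score w π q.1)
            then max (PartitionAux.pc w π q.1 q.2 - PartitionAux.pc w π q.2 q.1) 0 else 0) := by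
        rw [integral_add (show Integrable (fun _ : ℝ => kendallCost w π σstar)
            (volume.restrict (Set.Ico (0:ℝ) 1)) from
            (integrableOn_const_iff).mpr (Or.inr (by simp [Real.volume_Ico])))
          (integrable_finset_sum P hEint)]
        rw [integral_finset_sum P hEint, setIntegral_const]
        simp [Real.volume_Ico]
    _ ≤ kendallCost w π σstar + ∑ q ∈ P, η * PartitionAux.pc w π q.2 q.1 := by
        refine add_le_add_right (Finset.sum_le_sum fun q hq => ?_) _
        have hMc : max (PartitionAux.pc w π q.1 q.2 - PartitionAux.pc w π q.2 q.1) 0 ≤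
            score w π q.1 := by
          refine max_le ?_ (hs0 q.1)
          have h1 := hpc_nonneg q.2 q.1
          have h2 := hpc_le q.1 q.2
          linarith
        refine (PartitionAux.ite_bucket_integral_le hη (hs0 q.1) (hs1 q.1) (hs0 q.2) (hs1 q.2)
          (le_max_right _ _) hMc).trans ?_
        exact mul_le_mul_of_nonneg_left (max_le (hdiff q.1 q.2) (hpc_nonneg q.2 q.1)) hη.le
    _ = (1 + η) * kendallCost w π σstar := by
        rw [← Finset.mul_sum, ← hstar]
        ring


/-- Partition lemma: with `u` uniform on `[0,1)`, the expected cost of the best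
partition-respecting permutation is at most `(1+η)` times the optimal cost. -/
theorem partition_lemma {n m : ℕ} (η : ℝ) (hη : 0 < η)
    (w : Fin m → ℝ) (hw : ∀ v, 0 ≤ w v) (hw1 : ∑ v, w v = 1)
    (π : Fin m → Fin n → ℕ∞) (hπ : ∀ v, ∃ k ≤ n, IsTopList n k (π v))
    (σstar : Equiv.Perm (Fin n)) :
    ∫ u in Set.Ico (0 : ℝ) 1,
        sInf {x : ℝ | ∃ σ : Equiv.Perm (Fin n),
          Respects w π η u σ ∧ x = kendallCost w π σ} ≤
      (1 + η) * kendallCost w π σstar :=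
  partition_lemma' η hη w hw hw1 π σstar
end

section
/- Let p be a distribution over top-k-lists on [n] (each ranked top-list ranks exactly k candidates). For any permutation σ* of [n], K(σ*,p) ≥ Σ_{i : σ*(i) > k} (σ*(i) − k)·Score(i). -/
open Finset

lemma topList_inj {n k : ℕ} {π : Fin n → ℕ∞} (h : IsTopList n k π)
    {i j : Fin n} (hi : π i ≠ ⊤) (hij : π i = π j) : i = j := by
  obtain ⟨h1, h2⟩ := h
  obtain ⟨hi1, hi2⟩ := h1 i hi
  obtain ⟨r, hr⟩ : ∃ r : ℕ, π i = (r : ℕ∞) := ⟨(π i).toNat, (ENat.coe_toNat hi).symm⟩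
  have hr1 : 1 ≤ r := by exact_mod_cast hr ▸ hi1
  have hrk : r ≤ k := by exact_mod_cast hr ▸ hi2
  obtain ⟨u, hu, huniq⟩ := h2 r hr1 hrk
  rw [huniq i hr, huniq j (hij.symm.trans hr)]

lemma per_index {n k : ℕ} (σ : Equiv.Perm (Fin n)) {π : Fin n → ℕ∞}
    (h : IsTopList n k π) {i : Fin n} (hi : π i ≠ ⊤) :
    (σ i : ℕ) + 1 - k ≤ (univ.filter (fun j => σ j < σ i ∧ π i < π j)).card := by
  classical
  obtain ⟨hi1, hi2⟩ := h.1 i hi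
  have hk1 : 1 ≤ k := by
    by_contra hk
    have : k = 0 := by omega
    subst this
    exact absurd (hi1.trans hi2) (by simp)
  set A := univ.filter (fun j : Fin n => σ j < σ i) with hA
  have hcardA : A.card = (σ i : ℕ) := by
    have : A = (Finset.Iio (σ i)).map σ.symm.toEmbedding := by
      ext j
      simp only [hA, Finset.mem_filter, Finset.mem_univ, true_and, Finset.mem_map,
        Finset.mem_Iio, Equiv.coe_toEmbedding]
      constructor
      · intro hj; exact ⟨σ j, hj, σ.symm_apply_apply j⟩
      · rintro ⟨r, hr, rfl⟩; simpa using hr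
    rw [this, Finset.card_map, Fin.card_Iio]
  have hCeq : univ.filter (fun j => σ j < σ i ∧ π i < π j)
      = A.filter (fun j => π i < π j) := by
    rw [hA, Finset.filter_filter]
  set C := A.filter (fun j => π i < π j) with hC
  set B := A.filter (fun j => ¬ π i < π j) with hB
  have hunion : C ∪ B = A := Finset.filter_union_filter_not_eq _ _
  have hdisj : Disjoint C B := Finset.disjoint_filter_filter_not A A _
  have hcards : C.card + B.card = A.card := by
    rw [← Finset.card_union_of_disjoint hdisj, hunion]
  have hcardB : B.card ≤ k - 1 := by
    have hmap : ∀ j ∈ B, (π j).toNat ∈ Finset.Ico 1 (π i).toNat := by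
      intro j hj
      simp only [hB, hA, Finset.mem_filter, Finset.mem_univ, true_and, not_lt] at hj
      obtain ⟨hσ, hle⟩ := hj
      have hjt : π j ≠ ⊤ := fun ht => hi (top_le_iff.mp (ht ▸ hle))
      have hj1 : 1 ≤ π j := (h.1 j hjt).1
      have hne : π j ≠ π i := fun he =>
        absurd hσ (by rw [topList_inj h hjt he]; exact lt_irrefl _)
      have hjlt : π j < π i := lt_of_le_of_ne hle hne
      rw [Finset.mem_Ico]
      constructor
      · rw [← ENat.coe_toNat hjt] at hj1; exact_mod_cast hj1
      · rw [← ENat.coe_toNat hjt, ← ENat.coe_toNat hi] at hjlt; exact_mod_cast hjlt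
    have hinj : Set.InjOn (fun j => (π j).toNat) B := by
      intro j1 hj1 j2 hj2 he
      simp only [hB, hA, Finset.mem_coe, Finset.mem_filter, Finset.mem_univ, true_and,
        not_lt] at hj1 hj2
      have h1t : π j1 ≠ ⊤ := fun ht => hi (top_le_iff.mp (ht ▸ hj1.2))
      have h2t : π j2 ≠ ⊤ := fun ht => hi (top_le_iff.mp (ht ▸ hj2.2))
      have : π j1 = π j2 := by
        rw [← ENat.coe_toNat h1t, ← ENat.coe_toNat h2t]
        exact_mod_cast congrArg (Nat.cast : ℕ → ℕ∞) he
      exact topList_inj h h1t this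
    have := Finset.card_le_card_of_injOn _ hmap hinj
    rw [Nat.card_Ico] at this
    have hik : (π i).toNat ≤ k := by
      rw [← ENat.coe_toNat hi] at hi2
      exact_mod_cast hi2
    omega
  rw [hCeq]
  omega

lemma per_voter {n k : ℕ} (σ : Equiv.Perm (Fin n)) {π : Fin n → ℕ∞}
    (h : IsTopList n k π) :
    ∑ i ∈ univ.filter (fun i => k < (σ i : ℕ) + 1 ∧ π i ≠ ⊤), ((σ i : ℕ) + 1 - k)
      ≤ kendallGen σ π := by
  classical
  have hk : kendallGen σ π
      = ∑ i : Fin n, (univ.filter (fun j => σ j < σ i ∧ π i < π j)).card := by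
    rw [kendallGen, Finset.card_filter, ← Finset.univ_product_univ, Finset.sum_product]
    exact Finset.sum_congr rfl fun i _ => (Finset.card_filter _ _).symm
  rw [hk]
  calc ∑ i ∈ univ.filter (fun i => k < (σ i : ℕ) + 1 ∧ π i ≠ ⊤), ((σ i : ℕ) + 1 - k)
      ≤ ∑ i ∈ univ.filter (fun i => k < (σ i : ℕ) + 1 ∧ π i ≠ ⊤),
          (univ.filter (fun j => σ j < σ i ∧ π i < π j)).card := by
        apply Finset.sum_le_sum
        intro i hi
        exact per_index σ h (Finset.mem_filter.mp hi).2.2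
    _ ≤ ∑ i : Fin n, (univ.filter (fun j => σ j < σ i ∧ π i < π j)).card :=
        Finset.sum_le_sum_of_subset (Finset.filter_subset _ _)

/-- Lower bound for top-`k`-list aggregation: for every permutation `σ*`,
`K(σ*,p) ≥ Σ_{i : σ*(i) > k} (σ*(i) − k)·Score(i)` (ranks are 1-indexed). -/
theorem topk_cost_lower_bound {n m k : ℕ}
    (w : Fin m → ℝ) (hw : ∀ v, 0 ≤ w v) (hw1 : ∑ v, w v = 1)
    (π : Fin m → Fin n → ℕ∞) (hπ : ∀ v, IsTopList n k (π v))
    (σstar : Equiv.Perm (Fin n)) :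
    ∑ i ∈ Finset.univ.filter (fun i => k < (σstar i : ℕ) + 1),
        ((((σstar i : ℕ) : ℝ) + 1) - (k : ℝ)) * score w π i ≤
      ∑ v, w v * (kendallGen σstar (π v) : ℝ) := by
  classical
  have key : ∀ v, ∑ i ∈ Finset.univ.filter (fun i => k < (σstar i : ℕ) + 1),
      ((((σstar i : ℕ) : ℝ) + 1) - (k : ℝ)) * (if π v i ≠ ⊤ then w v else 0)
      ≤ w v * (kendallGen σstar (π v) : ℝ) := by
    intro v
    have h1 : ∑ i ∈ Finset.univ.filter (fun i => k < (σstar i : ℕ) + 1),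
        ((((σstar i : ℕ) : ℝ) + 1) - (k : ℝ)) * (if π v i ≠ ⊤ then w v else 0)
        = ∑ i ∈ Finset.univ.filter (fun i => k < (σstar i : ℕ) + 1 ∧ π v i ≠ ⊤),
            ((((σstar i : ℕ) : ℝ) + 1) - (k : ℝ)) * w v := by
      rw [← Finset.filter_filter]
      simp only [Finset.sum_filter]
      apply Finset.sum_congr rfl
      intro i _
      by_cases hp : k < (σstar i : ℕ) + 1 <;> by_cases hc : π v i ≠ ⊤ <;> simp [hp, hc]
    rw [h1, ← Finset.sum_mul]
    have h2 : ∑ i ∈ Finset.univ.filter (fun i => k < (σstar i : ℕ) + 1 ∧ π v i ≠ ⊤),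
        ((((σstar i : ℕ) : ℝ) + 1) - (k : ℝ))
        = ((∑ i ∈ Finset.univ.filter (fun i => k < (σstar i : ℕ) + 1 ∧ π v i ≠ ⊤),
            ((σstar i : ℕ) + 1 - k) : ℕ) : ℝ) := by
      rw [Nat.cast_sum]
      apply Finset.sum_congr rfl
      intro i hi
      have := (Finset.mem_filter.mp hi).2.1
      rw [Nat.cast_sub (by omega)]
      push_cast
      ring
    rw [h2, mul_comm]
    apply mul_le_mul_of_nonneg_left _ (hw v)
    exact_mod_cast per_voter σstar (hπ v)
  calc ∑ i ∈ Finset.univ.filter (fun i => k < (σstar i : ℕ) + 1),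
        ((((σstar i : ℕ) : ℝ) + 1) - (k : ℝ)) * score w π i
      = ∑ v, ∑ i ∈ Finset.univ.filter (fun i => k < (σstar i : ℕ) + 1),
          ((((σstar i : ℕ) : ℝ) + 1) - (k : ℝ)) * (if π v i ≠ ⊤ then w v else 0) := by
        rw [Finset.sum_comm]
        apply Finset.sum_congr rfl
        intro i _
        rw [score, Finset.mul_sum]
    _ ≤ ∑ v, w v * (kendallGen σstar (π v) : ℝ) := Finset.sum_le_sum fun v _ => key v
end

section
/- Let p be a distribution over top-lists on [n], and decompose K(σ,p) = K_top(σ,p) + K_score(σ,p), where K_score counts only pairs with π(i) < π(j) = ∞. Then any permutation σ sorting candidates by nonincreasing Score minimizes K_score(·,p) over all permutations. In particular, if σ(i) = σ(j)+1 and Score(i) > Score(j), then swapping i and j strictly decreases K_score. -/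
open Finset

/-- `K_score(σ,p)`: the part of the cost coming from pairs with
`π(i) < π(j) = ∞`. -/
def kScore {n m : ℕ} (w : Fin m → ℝ) (π : Fin m → Fin n → ℕ∞)
    (σ : Equiv.Perm (Fin n)) : ℝ :=
  ∑ q ∈ (Finset.univ : Finset (Fin n × Fin n)).filter
      (fun q => σ q.2 < σ q.1),
    ∑ v, (if π v q.1 ≠ ⊤ ∧ π v q.2 = ⊤ then w v else 0)

namespace KAux

variable {n m : ℕ}

/-- Pairwise cost. -/
def c (w : Fin m → ℝ) (π : Fin m → Fin n → ℕ∞) (i j : Fin n) : ℝ :=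
  ∑ v, (if π v i ≠ ⊤ ∧ π v j = ⊤ then w v else 0)

lemma c_sub (w : Fin m → ℝ) (π : Fin m → Fin n → ℕ∞) (i j : Fin n) :
    c w π i j - c w π j i = score w π i - score w π j := by
  unfold c score
  rw [← Finset.sum_sub_distrib, ← Finset.sum_sub_distrib]
  refine Finset.sum_congr rfl fun v _ => ?_
  by_cases hi : π v i = ⊤ <;> by_cases hj : π v j = ⊤ <;> simp [hi, hj]

/-- The term of the unordered-pair reformulation. -/
def F (w : Fin m → ℝ) (π : Fin m → Fin n → ℕ∞) (σ : Equiv.Perm (Fin n))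
    (q : Fin n × Fin n) : ℝ :=
  if σ q.2 < σ q.1 then c w π q.1 q.2 else c w π q.2 q.1

lemma kScore_eq (w : Fin m → ℝ) (π : Fin m → Fin n → ℕ∞) (σ : Equiv.Perm (Fin n)) :
    kScore w π σ =
      ∑ q ∈ (Finset.univ : Finset (Fin n × Fin n)).filter (fun q => q.1 < q.2),
        F w π σ q := by
  unfold kScore
  refine Finset.sum_nbij' (fun q => if q.1 < q.2 then q else q.swap)
    (fun q => if σ q.2 < σ q.1 then q else q.swap) ?_ ?_ ?_ ?_ ?_
  · intro q hq
    simp only [mem_filter, mem_univ, true_and] at hq ⊢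
    have hne : q.1 ≠ q.2 := fun h => absurd hq (by rw [h]; exact lt_irrefl _)
    split
    · assumption
    · exact lt_of_le_of_ne (not_lt.mp ‹¬ q.1 < q.2›) (Ne.symm hne)
  · intro q hq
    simp only [mem_filter, mem_univ, true_and] at hq ⊢
    have hne : σ q.1 ≠ σ q.2 := fun h => absurd hq (by
      have := σ.injective h; rw [this]; exact lt_irrefl _)
    split
    · assumption
    · show σ q.1 < σ q.2
      exact lt_of_le_of_ne (not_lt.mp ‹¬ σ q.2 < σ q.1›) hne
  · intro q hq
    simp only [mem_filter, mem_univ, true_and] at hq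
    by_cases h : q.1 < q.2
    · simp [h, hq]
    · simp only [h, if_false]
      rw [if_neg (show ¬ σ q.swap.2 < σ q.swap.1 from fun h' => absurd hq (asymm h'))]
      exact Prod.swap_swap q
  · intro q hq
    simp only [mem_filter, mem_univ, true_and] at hq
    by_cases h : σ q.2 < σ q.1
    · simp [h, hq]
    · simp only [h, if_false]
      rw [if_neg (show ¬ (q.swap.1 < q.swap.2) from fun h' => absurd hq (asymm h'))]
      exact Prod.swap_swap q
  · intro q hq
    simp only [mem_filter, mem_univ, true_and] at hq
    by_cases h : q.1 < q.2
    · rw [if_pos h]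
      unfold F
      rw [if_pos hq]
      rfl
    · rw [if_neg h]
      unfold F
      rw [if_neg (show ¬ σ q.swap.2 < σ q.swap.1 from fun h' => absurd hq (asymm h'))]
      rfl

end KAux

open KAux in
/-- Sorting candidates by nonincreasing score minimizes `K_score`; moreover
swapping two adjacent candidates whose scores are out of order strictly
decreases `K_score`. -/
theorem score_sort_minimizes_kScore {n m : ℕ}
    (w : Fin m → ℝ) (hw : ∀ v, 0 ≤ w v) (hw1 : ∑ v, w v = 1)
    (π : Fin m → Fin n → ℕ∞) (hπ : ∀ v, ∃ k ≤ n, IsTopList n k (π v)) :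
    (∀ σ : Equiv.Perm (Fin n),
      (∀ i j : Fin n, score w π j < score w π i → σ i < σ j) →
      ∀ σ' : Equiv.Perm (Fin n), kScore w π σ ≤ kScore w π σ') ∧
    (∀ σ : Equiv.Perm (Fin n), ∀ i j : Fin n,
      (σ i : ℕ) = (σ j : ℕ) + 1 → score w π j < score w π i →
      kScore w π ((Equiv.swap i j).trans σ) < kScore w π σ) := by
  constructor
  · intro σ hσ σ'
    rw [kScore_eq, kScore_eq]
    refine Finset.sum_le_sum fun q hq => ?_
    simp only [mem_filter, mem_univ, true_and] at hq
    have hne : q.1 ≠ q.2 := ne_of_lt hq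
    unfold F
    by_cases h1 : σ q.2 < σ q.1
    · by_cases h2 : σ' q.2 < σ' q.1
      · rw [if_pos h1, if_pos h2]
      · rw [if_pos h1, if_neg h2]
        have hs2 : ¬ score w π q.2 < score w π q.1 :=
          fun h => asymm h1 (hσ q.1 q.2 h)
        have := c_sub w π q.1 q.2
        push_neg at hs2
        linarith
    · by_cases h2 : σ' q.2 < σ' q.1
      · rw [if_neg h1, if_pos h2]
        have hs2 : ¬ score w π q.1 < score w π q.2 :=
          fun h => h1 (hσ q.2 q.1 h)
        have := c_sub w π q.1 q.2
        push_neg at hs2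
        linarith
      · rw [if_neg h1, if_neg h2]
  · intro σ i j hadj hs
    set σ' := (Equiv.swap i j).trans σ with hσ'
    have hij : i ≠ j := by rintro rfl; exact lt_irrefl _ hs
    have hσ'i : σ' i = σ j := by simp [hσ', Equiv.swap_apply_left]
    have hσ'j : σ' j = σ i := by simp [hσ', Equiv.swap_apply_right]
    have hσ'x : ∀ x, x ≠ i → x ≠ j → σ' x = σ x := by
      intro x hx1 hx2
      simp [hσ', Equiv.swap_apply_of_ne_of_ne hx1 hx2]
    have hji : σ j < σ i := by rw [Fin.lt_def]; omega
    have hinj : ∀ a b : Fin n, a ≠ b → (σ a : ℕ) ≠ (σ b : ℕ) := by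
      intro a b hab h
      exact hab (σ.injective (Fin.ext h))
    have key : ∀ x y : Fin n, x ≠ y → ¬(x = i ∧ y = j) → ¬(x = j ∧ y = i) →
        (σ' y < σ' x ↔ σ y < σ x) := by
      intro x y hxy hnot1 hnot2
      by_cases hxi : x = i
      · by_cases hyj : y = j
        · exact absurd ⟨hxi, hyj⟩ hnot1
        · have hyi : y ≠ i := fun h => hxy ((h.trans hxi.symm).symm)
          rw [hxi, hσ'i, hσ'x y hyi hyj, Fin.lt_def, Fin.lt_def]
          have h2 := hinj y j hyj
          omega
      · by_cases hxj : x = j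
        · by_cases hyi : y = i
          · exact absurd ⟨hxj, hyi⟩ hnot2
          · have hyj : y ≠ j := fun h => hxy ((h.trans hxj.symm).symm)
            rw [hxj, hσ'j, hσ'x y hyi hyj, Fin.lt_def, Fin.lt_def]
            have h2 := hinj y j hyj
            omega
        · by_cases hyi : y = i
          · rw [hyi, hσ'i, hσ'x x hxi hxj, Fin.lt_def, Fin.lt_def]
            have h2 := hinj x i hxi
            omega
          · by_cases hyj : y = j
            · rw [hyj, hσ'j, hσ'x x hxi hxj, Fin.lt_def, Fin.lt_def]
              have h2 := hinj x i hxi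
              omega
            · rw [hσ'x x hxi hxj, hσ'x y hyi hyj]
    rw [kScore_eq, kScore_eq]
    have hstrict : c w π j i < c w π i j := by
      have := c_sub w π i j
      linarith
    refine Finset.sum_lt_sum ?_ ?_
    · intro q hq
      simp only [mem_filter, mem_univ, true_and] at hq
      have hne : q.1 ≠ q.2 := ne_of_lt hq
      by_cases hcase1 : q.1 = i ∧ q.2 = j
      · obtain ⟨h1, h2⟩ := hcase1
        unfold F
        rw [if_pos (show σ q.2 < σ q.1 by rw [h1, h2]; exact hji),
            if_neg (show ¬ σ' q.2 < σ' q.1 by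
              rw [h1, h2, hσ'i, hσ'j]; exact asymm hji),
            h1, h2]
        exact le_of_lt hstrict
      · by_cases hcase2 : q.1 = j ∧ q.2 = i
        · obtain ⟨h1, h2⟩ := hcase2
          unfold F
          rw [if_neg (show ¬ σ q.2 < σ q.1 by rw [h1, h2]; exact asymm hji),
              if_pos (show σ' q.2 < σ' q.1 by
                rw [h1, h2, hσ'i, hσ'j]; exact hji),
              h1, h2]
          exact le_of_lt hstrict
        · unfold F
          have hiff := key q.1 q.2 hne hcase1 hcase2
          by_cases hcond : σ q.2 < σ q.1
          · rw [if_pos hcond, if_pos (hiff.mpr hcond)]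
          · rw [if_neg hcond, if_neg (fun h => hcond (hiff.mp h))]
    · rcases lt_or_gt_of_ne hij with h | h
      · refine ⟨(i, j), by simp [h], ?_⟩
        show F w π σ' (i, j) < F w π σ (i, j)
        unfold F
        dsimp only
        rw [if_pos hji, if_neg (show ¬ σ' j < σ' i by
          rw [hσ'i, hσ'j]; exact asymm hji)]
        exact hstrict
      · refine ⟨(j, i), by simp [h], ?_⟩
        show F w π σ' (j, i) < F w π σ (j, i)
        unfold F
        dsimp only
        rw [if_neg (asymm hji), if_pos (show σ' i < σ' j by
          rw [hσ'i, hσ'j]; exact hji)]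
        exact hstrict
end
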